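/- arXiv:2204.02535 — 4 statements merged into one kernel-verified Lean document; each statement's English description precedes it below -/
import Mathlib

section
/- For positive integers n, k, t, r, s with 1 ≤ r ≤ k, the number of k-tuples (α¹, …, αᵏ) of strict overpartitions of total weight n with exactly s overlined parts, where α¹, …, αʳ have length t and α^{r+1}, …, αᵏ have length t−1, and for i ≠ r every overlined part of αⁱ is at least 2, equals the number of Schmidt k-overpartitions of n with (t−1)k+r parts, exactly s of which are overlined. -/
/-- Sum of the parts of `l` in positions `1, k+1, 2k+1, …` (0-indexed `0, k, 2k, …`). -/
def schmidtSum (k : ℕ) (l : List ℕ) : ℕ :=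
  ∑ i ∈ Finset.range l.length, if i % k = 0 then l.getD i 0 else 0

/-- A strict overpartition, encoded as a list of (part, overlined?) pairs: the parts are
positive and strictly decreasing, and the `i`-th part may be overlined only if it exceeds
the next part by at least 2 or it is the last part. -/
def IsStrictOverpartition (l : List (ℕ × Bool)) : Prop :=
  (l.map Prod.fst).Pairwise (· > ·) ∧ (∀ x ∈ l, 0 < x.1) ∧
  ∀ i, i < l.length → (l.getD i (0, false)).2 = true →
    (i + 1 = l.length ∨ (l.getD (i + 1) (0, false)).1 + 2 ≤ (l.getD i (0, false)).1)

namespace SchmidtAux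

/-- The `m`-th part of `l` (0 outside range). -/
def pget (l : List (ℕ × Bool)) (m : ℕ) : ℕ := (l.getD m (0, false)).1
/-- The overline bit of the `m`-th part. -/
def bget (l : List (ℕ × Bool)) (m : ℕ) : Bool := (l.getD m (0, false)).2
/-- The `m`-th difference of `l`, paired with the overline bit. -/
def dff (l : List (ℕ × Bool)) (m : ℕ) : ℕ × Bool := (pget l m - pget l (m + 1), bget l m)

/-- Rebuild a list from a difference function. -/
def fromDiff (L : ℕ) (f : ℕ → ℕ × Bool) : List (ℕ × Bool) :=
  List.ofFn (fun j : Fin L => (∑ m ∈ Finset.Ico j.val L, (f m).1, (f j.val).2))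

@[simp] lemma length_fromDiff (L : ℕ) (f : ℕ → ℕ × Bool) : (fromDiff L f).length = L := by
  simp [fromDiff]

lemma getD_fromDiff {L j : ℕ} (f : ℕ → ℕ × Bool) (hj : j < L) :
    (fromDiff L f).getD j (0, false) = (∑ m ∈ Finset.Ico j L, (f m).1, (f j).2) := by
  rw [List.getD_eq_getElem _ _ (by simpa using hj)]
  simp [fromDiff]

lemma pget_fromDiff (L : ℕ) (f : ℕ → ℕ × Bool) (j : ℕ) :
    pget (fromDiff L f) j = ∑ m ∈ Finset.Ico j L, (f m).1 := by
  rcases lt_or_ge j L with hj | hj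
  · rw [pget, getD_fromDiff f hj]
  · rw [pget, List.getD_eq_default _ _ (by simpa using hj),
      Finset.Ico_eq_empty (by omega), Finset.sum_empty]

lemma bget_fromDiff {L j : ℕ} (f : ℕ → ℕ × Bool) (hj : j < L) :
    bget (fromDiff L f) j = (f j).2 := by
  rw [bget, getD_fromDiff f hj]

lemma fromDiff_congr {L : ℕ} {f g : ℕ → ℕ × Bool} (h : ∀ m < L, f m = g m) :
    fromDiff L f = fromDiff L g := by
  unfold fromDiff
  congr 1
  funext j
  rw [h j.val j.isLt]
  congr 1
  exact Finset.sum_congr rfl fun m hm => by rw [h m (Finset.mem_Ico.mp hm).2]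

lemma dff_fromDiff {L j : ℕ} (f : ℕ → ℕ × Bool) (hj : j < L) :
    dff (fromDiff L f) j = f j := by
  have hsplit : ∑ m ∈ Finset.Ico j L, (f m).1
      = (f j).1 + ∑ m ∈ Finset.Ico (j + 1) L, (f m).1 := by
    exact Finset.sum_eq_sum_Ico_succ_bot hj _
  rw [dff, pget_fromDiff, pget_fromDiff, bget_fromDiff f hj, hsplit]
  simp


lemma pget_lt_pget {l : List (ℕ × Bool)} (hl : IsStrictOverpartition l) {i j : ℕ}
    (hij : i < j) (hj : j < l.length) : pget l j < pget l i := by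
  have hs := hl.1
  rw [List.pairwise_iff_getElem] at hs
  have h := hs i j (by simpa using lt_trans hij hj) (by simpa using hj) hij
  simp only [List.getElem_map] at h
  rw [pget, pget, List.getD_eq_getElem _ _ (lt_trans hij hj), List.getD_eq_getElem _ _ hj]
  exact h

lemma pget_pos {l : List (ℕ × Bool)} (hl : IsStrictOverpartition l) {j : ℕ}
    (hj : j < l.length) : 0 < pget l j := by
  have := hl.2.1 (l.getD j (0, false)) (by
    rw [List.getD_eq_getElem _ _ hj]; exact List.getElem_mem _)
  simpa [pget] using this

lemma pget_succ_lt {l : List (ℕ × Bool)} (hl : IsStrictOverpartition l) {j : ℕ}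
    (hj : j < l.length) : pget l (j + 1) < pget l j := by
  rcases lt_or_ge (j + 1) l.length with h | h
  · exact pget_lt_pget hl (Nat.lt_succ_self j) h
  · rw [pget, List.getD_eq_default _ _ (by simpa using h)]
    exact pget_pos hl hj

lemma dff_fst_pos {l : List (ℕ × Bool)} (hl : IsStrictOverpartition l) {j : ℕ}
    (hj : j < l.length) : 1 ≤ (dff l j).1 := by
  have := pget_succ_lt hl hj
  simp only [dff]
  omega

lemma sum_dff {l : List (ℕ × Bool)} (hl : IsStrictOverpartition l) (j : ℕ) :
    ∑ m ∈ Finset.Ico j l.length, (dff l m).1 = pget l j := by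
  suffices H : ∀ c j, l.length ≤ j + c → ∑ m ∈ Finset.Ico j l.length, (dff l m).1 = pget l j by
    exact H l.length j (by omega)
  intro c
  induction c with
  | zero =>
    intro j hj
    rw [Finset.Ico_eq_empty (by omega), Finset.sum_empty, pget,
      List.getD_eq_default _ _ (by omega)]
  | succ c ih =>
    intro j hj
    rcases le_or_gt l.length j with h | h
    · rw [Finset.Ico_eq_empty (by omega), Finset.sum_empty, pget,
        List.getD_eq_default _ _ (by omega)]
    · rw [Finset.sum_eq_sum_Ico_succ_bot h, ih (j + 1) (by omega)]
      have := pget_succ_lt hl h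
      simp only [dff]
      omega

lemma fromDiff_dff {l : List (ℕ × Bool)} (hl : IsStrictOverpartition l) :
    fromDiff l.length (dff l) = l := by
  apply List.ext_getElem (by simp)
  intro j hj hj'
  have hjl : j < l.length := hj'
  have : (fromDiff l.length (dff l))[j] = (fromDiff l.length (dff l)).getD j (0, false) :=
    (List.getD_eq_getElem _ _ hj).symm
  rw [this, getD_fromDiff _ hjl, sum_dff hl j]
  have : l[j] = l.getD j (0, false) := (List.getD_eq_getElem _ _ hjl).symm
  rw [this]
  rfl

lemma isStrictOverpartition_fromDiff {L : ℕ} {f : ℕ → ℕ × Bool}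
    (hpos : ∀ m < L, 1 ≤ (f m).1)
    (hov : ∀ m < L, (f m).2 = true → m + 1 = L ∨ 2 ≤ (f m).1) :
    IsStrictOverpartition (fromDiff L f) := by
  refine ⟨?_, ?_, ?_⟩
  · rw [fromDiff, List.map_ofFn, List.pairwise_ofFn]
    intro i j hij
    simp only [Function.comp]
    have hsplit : ∑ m ∈ Finset.Ico i.val L, (f m).1
        = ∑ m ∈ Finset.Ico i.val j.val, (f m).1 + ∑ m ∈ Finset.Ico j.val L, (f m).1 :=
      (Finset.sum_Ico_consecutive _ (le_of_lt hij) (le_of_lt j.isLt)).symm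
    have hone : 1 ≤ ∑ m ∈ Finset.Ico i.val j.val, (f m).1 :=
      le_trans (hpos i.val i.isLt)
        (Finset.single_le_sum (f := fun m => (f m).1) (fun m _ => Nat.zero_le _)
          (Finset.mem_Ico.mpr ⟨le_refl _, hij⟩))
    simp only [gt_iff_lt]
    omega
  · intro x hx
    rw [fromDiff, List.mem_ofFn] at hx
    obtain ⟨j, rfl⟩ := hx
    have : 1 ≤ ∑ m ∈ Finset.Ico j.val L, (f m).1 :=
      le_trans (hpos j.val j.isLt)
        (Finset.single_le_sum (f := fun m => (f m).1) (fun m _ => Nat.zero_le _)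
          (Finset.mem_Ico.mpr ⟨le_refl _, j.isLt⟩))
    exact this
  · intro i hi hb
    rw [length_fromDiff] at hi
    rw [getD_fromDiff f hi] at hb
    simp only [length_fromDiff]
    rcases hov i hi hb with h | h
    · exact Or.inl h
    · right
      have e1 : ((fromDiff L f).getD (i + 1) (0, false)).1
          = ∑ m ∈ Finset.Ico (i + 1) L, (f m).1 := pget_fromDiff L f (i + 1)
      have e2 : ((fromDiff L f).getD i (0, false)).1
          = ∑ m ∈ Finset.Ico i L, (f m).1 := pget_fromDiff L f i
      rw [e1, e2, Finset.sum_eq_sum_Ico_succ_bot hi]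
      omega

lemma countP_eq_sum_map (p : ℕ × Bool → Bool) (l : List (ℕ × Bool)) :
    l.countP p = (l.map fun x => if p x then 1 else 0).sum := by
  induction l with
  | nil => simp
  | cons a l ih => by_cases h : p a <;> simp [List.countP_cons, h, ih, Nat.add_comm]

lemma countP_fromDiff (L : ℕ) (f : ℕ → ℕ × Bool) :
    (fromDiff L f).countP (fun x => x.2)
      = ∑ m ∈ Finset.range L, (if (f m).2 then 1 else 0) := by
  rw [countP_eq_sum_map, fromDiff, List.map_ofFn, List.sum_ofFn]
  rw [Finset.sum_range fun m => if (f m).2 then 1 else 0]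
  rfl

/-- The fundamental interchange: summing tail-sums with positions selected by `P`. -/
lemma sum_swap_weight (L : ℕ) (P : ℕ → Prop) [DecidablePred P] (g : ℕ → ℕ) :
    (∑ i ∈ Finset.range L, if P i then ∑ m ∈ Finset.Ico i L, g m else 0)
      = ∑ m ∈ Finset.range L, ((Finset.range (m + 1)).filter P).card * g m := by
  have step1 : ∀ i ∈ Finset.range L,
      (if P i then ∑ m ∈ Finset.Ico i L, g m else 0)
        = ∑ m ∈ Finset.range L, if i ≤ m ∧ P i then g m else 0 := by
    intro i hi
    rw [Finset.mem_range] at hi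
    have hIco : Finset.Ico i L = (Finset.range L).filter (fun m => i ≤ m) := by
      ext m; simp [Finset.mem_Ico, Finset.mem_range, Finset.mem_filter]; omega
    split_ifs with hP
    · rw [hIco, Finset.sum_filter]
      exact Finset.sum_congr rfl fun m _ => by simp [hP]
    · rw [eq_comm, Finset.sum_eq_zero]
      intro m _; simp [hP]
  rw [Finset.sum_congr rfl step1, Finset.sum_comm]
  refine Finset.sum_congr rfl fun m hm => ?_
  rw [Finset.mem_range] at hm
  have : ∀ i, (i ≤ m ∧ P i) ↔ (i ∈ (Finset.range (m+1)).filter P) := by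
    intro i; simp [Finset.mem_filter, Finset.mem_range]
  calc (∑ i ∈ Finset.range L, if i ≤ m ∧ P i then g m else 0)
      = ∑ i ∈ (Finset.range L).filter (fun i => i ≤ m ∧ P i), g m := by
        rw [Finset.sum_filter]
    _ = ((Finset.range L).filter (fun i => i ≤ m ∧ P i)).card * g m := by
        rw [Finset.sum_const, smul_eq_mul]
    _ = ((Finset.range (m + 1)).filter P).card * g m := by
        have hset : (Finset.range L).filter (fun i => i ≤ m ∧ P i)
            = (Finset.range (m + 1)).filter P := by
          ext i
          simp only [Finset.mem_filter, Finset.mem_range]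
          constructor
          · rintro ⟨h1, h2, h3⟩; exact ⟨by omega, h3⟩
          · rintro ⟨h1, h2⟩; exact ⟨by omega, by omega, h2⟩
        rw [hset]

lemma sum_map_fst_fromDiff (L : ℕ) (f : ℕ → ℕ × Bool) :
    ((fromDiff L f).map Prod.fst).sum = ∑ m ∈ Finset.range L, (m + 1) * (f m).1 := by
  rw [fromDiff, List.map_ofFn, List.sum_ofFn]
  have : (∑ j : Fin L, (Prod.fst ∘ fun j : Fin L =>
      ((∑ m ∈ Finset.Ico j.val L, (f m).1), (f j.val).2)) j)
      = ∑ j ∈ Finset.range L, ∑ m ∈ Finset.Ico j L, (f m).1 := by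
    rw [Finset.sum_range fun j => ∑ m ∈ Finset.Ico j L, (f m).1]
    rfl
  rw [this]
  have h := sum_swap_weight L (fun _ => True) (fun m => (f m).1)
  simp only [if_true, Finset.filter_true, Finset.card_range] at h
  exact h

lemma card_multiples (k m : ℕ) (hk : 0 < k) :
    ((Finset.range (m + 1)).filter (fun i => i % k = 0)).card = m / k + 1 := by
  have : (Finset.range (m + 1)).filter (fun i => i % k = 0)
      = (Finset.range (m / k + 1)).image (fun q => q * k) := by
    ext x
    simp only [Finset.mem_filter, Finset.mem_range, Finset.mem_image]
    constructor
    · rintro ⟨hx, hxk⟩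
      refine ⟨x / k, ?_, ?_⟩
      · have := Nat.div_le_div_right (c := k) (Nat.lt_succ_iff.mp hx)
        omega
      · have : x / k * k = x := Nat.div_mul_cancel (Nat.dvd_of_mod_eq_zero hxk)
        omega
    · rintro ⟨q, hq, rfl⟩
      constructor
      · have h1 : q * k ≤ (m / k) * k := Nat.mul_le_mul_right _ (by omega)
        have h2 : (m / k) * k ≤ m := Nat.div_mul_le_self m k
        omega
      · simp [Nat.mul_mod_left]
  rw [this, Finset.card_image_of_injective _ fun a b hab =>
    Nat.eq_of_mul_eq_mul_right hk hab, Finset.card_range]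

lemma getD_map_fst (l : List (ℕ × Bool)) (i : ℕ) :
    (l.map Prod.fst).getD i 0 = pget l i := by
  rcases lt_or_ge i l.length with h | h
  · rw [List.getD_eq_getElem _ _ (by simpa using h), pget, List.getD_eq_getElem _ _ h,
      List.getElem_map]
  · rw [List.getD_eq_default _ _ (by simpa using h), pget, List.getD_eq_default _ _ h]

lemma schmidtSum_fromDiff (k L : ℕ) (hk : 0 < k) (f : ℕ → ℕ × Bool) :
    schmidtSum k ((fromDiff L f).map Prod.fst)
      = ∑ m ∈ Finset.range L, (m / k + 1) * (f m).1 := by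
  rw [schmidtSum]
  have hlen : ((fromDiff L f).map Prod.fst).length = L := by simp
  rw [hlen]
  have : ∀ i ∈ Finset.range L,
      (if i % k = 0 then ((fromDiff L f).map Prod.fst).getD i 0 else 0)
        = (if i % k = 0 then ∑ m ∈ Finset.Ico i L, (f m).1 else 0) := by
    intro i _
    rw [getD_map_fst, pget_fromDiff]
  rw [Finset.sum_congr rfl this, sum_swap_weight L (fun i => i % k = 0) (fun m => (f m).1)]
  exact Finset.sum_congr rfl fun m _ => by rw [card_multiples k m hk]

lemma mod_lemma {k i j : ℕ} (hik : i < k) : (i + j * k) % k = i := by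
  rw [Nat.add_mul_mod_self_right, Nat.mod_eq_of_lt hik]

lemma div_lemma {k i j : ℕ} (hik : i < k) : (i + j * k) / k = j := by
  rw [Nat.add_mul_div_right _ _ (by omega : 0 < k), Nat.div_eq_of_lt hik, Nat.zero_add]

lemma lt_L_iff {k t r : ℕ} (hk : 1 ≤ k) (ht : 1 ≤ t) (hr1 : 1 ≤ r) (hrk : r ≤ k) (m : ℕ) :
    m < (t - 1) * k + r ↔ m / k < (if m % k < r then t else t - 1) := by
  obtain ⟨t', rfl⟩ : ∃ t', t = t' + 1 := ⟨t - 1, by omega⟩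
  have hm : m % k + m / k * k = m := Nat.mod_add_div' m k
  have hu : m % k < k := Nat.mod_lt _ (by omega)
  simp only [Nat.add_sub_cancel]
  split_ifs with h
  · constructor
    · intro hL
      by_contra hq
      push_neg at hq
      have h1 : t' * k + k ≤ m / k * k :=
        le_trans (le_of_eq (by ring)) (Nat.mul_le_mul_right _ hq)
      generalize hb : m / k * k = b at *
      generalize hq2 : m / k = q at *
      generalize hd : m % k = d at *
      generalize hc : t' * k = c at *
      omega
    · intro hq
      have h1 : m / k * k ≤ t' * k := Nat.mul_le_mul_right _ (by omega)
      generalize hb : m / k * k = b at *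
      generalize hq2 : m / k = q at *
      generalize hd : m % k = d at *
      generalize hc : t' * k = c at *
      omega
  · constructor
    · intro hL
      by_contra hq
      push_neg at hq
      have h1 : t' * k ≤ m / k * k := Nat.mul_le_mul_right _ hq
      generalize hb : m / k * k = b at *
      generalize hq2 : m / k = q at *
      generalize hd : m % k = d at *
      generalize hc : t' * k = c at *
      omega
    · intro hq
      have h1 : m / k * k + k ≤ t' * k :=
        le_trans (le_of_eq (by ring)) (Nat.mul_le_mul_right _ (show m / k + 1 ≤ t' by omega))
      generalize hb : m / k * k = b at *
      generalize hq2 : m / k = q at *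
      generalize hd : m % k = d at *
      generalize hc : t' * k = c at *
      omega

lemma reindex {k t r : ℕ} (hk : 1 ≤ k) (ht : 1 ≤ t) (hr1 : 1 ≤ r) (hrk : r ≤ k) (g : ℕ → ℕ) :
    ∑ m ∈ Finset.range ((t - 1) * k + r), g m
      = ∑ i : Fin k, ∑ j ∈ Finset.range (if i.val < r then t else t - 1), g (i.val + j * k) := by
  rw [← Finset.sum_sigma (Finset.univ : Finset (Fin k))
      (fun i => Finset.range (if i.val < r then t else t - 1))
      (fun p => g (p.1.val + p.2 * k))]
  refine Finset.sum_bij' (fun m _ => (⟨⟨m % k, Nat.mod_lt _ (by omega)⟩, m / k⟩ :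
      Σ i : Fin k, ℕ)) (fun p _ => p.1.val + p.2 * k) ?_ ?_ ?_ ?_ ?_
  · intro m hm
    rw [Finset.mem_range] at hm
    rw [Finset.mem_sigma]
    exact ⟨Finset.mem_univ _, Finset.mem_range.mpr ((lt_L_iff hk ht hr1 hrk m).mp hm)⟩
  · intro p hp
    rw [Finset.mem_sigma, Finset.mem_range] at hp
    rw [Finset.mem_range, lt_L_iff hk ht hr1 hrk, mod_lemma p.1.isLt, div_lemma p.1.isLt]
    exact hp.2
  · intro m hm
    exact Nat.mod_add_div' m k
  · intro p hp
    refine Sigma.ext ?_ ?_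
    · exact Fin.ext (mod_lemma p.1.isLt)
    · exact heq_of_eq_of_heq (heq_of_eq (div_lemma p.1.isLt)).eq HEq.rfl
  · intro m hm
    rw [Nat.mod_add_div' m k]

/-- The map from tuples of overpartitions to a single list. -/
def Phi {k : ℕ} (hk : 0 < k) (t r : ℕ) (α : Fin k → List (ℕ × Bool)) : List (ℕ × Bool) :=
  fromDiff ((t - 1) * k + r) (fun m => dff (α ⟨m % k, Nat.mod_lt _ hk⟩) (m / k))

/-- The map from a single list to tuples of overpartitions. -/
def Psi (k t r : ℕ) (l : List (ℕ × Bool)) : Fin k → List (ℕ × Bool) :=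
  fun i => fromDiff (if i.val < r then t else t - 1) (fun j => dff l (i.val + j * k))

lemma last_pos {k t r : ℕ} (ht : 1 ≤ t) (hr1 : 1 ≤ r) (hrk : r ≤ k)
    {i j : ℕ} (hik : i < k) (h : i + j * k + 1 = (t - 1) * k + r) : i = r - 1 ∧ j = t - 1 := by
  have e2 : i + j * k = (r - 1) + (t - 1) * k := by
    generalize (t - 1) * k = c at *
    generalize j * k = b at *
    omega
  constructor
  · calc i = (i + j * k) % k := (mod_lemma hik).symm
      _ = r - 1 := by rw [e2]; exact mod_lemma (by omega)
  · calc j = (i + j * k) / k := (div_lemma hik).symm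
      _ = t - 1 := by rw [e2]; exact div_lemma (by omega)

lemma last_pos' {k t r : ℕ} (ht : 1 ≤ t) (hr1 : 1 ≤ r) (hrk : r ≤ k) :
    (r - 1) + (t - 1) * k + 1 = (t - 1) * k + r := by
  generalize (t - 1) * k = c at *
  omega

lemma forward {k t r : ℕ} (hk : 0 < k) (ht : 1 ≤ t) (hr1 : 1 ≤ r) (hrk : r ≤ k)
    {α : Fin k → List (ℕ × Bool)}
    (h1 : ∀ i, IsStrictOverpartition (α i))
    (h2 : ∀ i : Fin k, i.val < r → (α i).length = t)
    (h3 : ∀ i : Fin k, r ≤ i.val → (α i).length = t - 1)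
    (h4 : ∀ i : Fin k, i.val ≠ r - 1 → ∀ x ∈ α i, x.2 = true → 2 ≤ x.1) :
    IsStrictOverpartition (Phi hk t r α) ∧
    schmidtSum k ((Phi hk t r α).map Prod.fst) = ∑ i, ((α i).map Prod.fst).sum ∧
    (Phi hk t r α).countP (fun x => x.2) = ∑ i, (α i).countP (fun x => x.2) ∧
    (Phi hk t r α).length = (t - 1) * k + r := by
  have hlen : ∀ i : Fin k, (α i).length = if i.val < r then t else t - 1 := by
    intro i
    split_ifs with h
    · exact h2 i h
    · exact h3 i (by omega)
  set L := (t - 1) * k + r with hLdef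
  set d : ℕ → ℕ × Bool := fun m => dff (α ⟨m % k, Nat.mod_lt _ hk⟩) (m / k) with hd
  have hkey : ∀ m, m < L → m / k < (α ⟨m % k, Nat.mod_lt _ hk⟩).length := by
    intro m hm
    rw [hlen]
    exact (lt_L_iff hk ht hr1 hrk m).mp hm
  have A1 : ∀ m < L, 1 ≤ (d m).1 := fun m hm => dff_fst_pos (h1 _) (hkey m hm)
  have A2 : ∀ m < L, (d m).2 = true → m + 1 = L ∨ 2 ≤ (d m).1 := by
    intro m hm hb
    set i : Fin k := ⟨m % k, Nat.mod_lt _ hk⟩ with hi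
    have hj : m / k < (α i).length := hkey m hm
    have hb' : bget (α i) (m / k) = true := hb
    rcases (h1 i).2.2 (m / k) hj hb' with h | h
    · -- last part of α i
      by_cases hir : (i : ℕ) = r - 1
      · left
        have hjt : m / k = t - 1 := by
          have := hlen i
          rw [if_pos (by omega : (i : ℕ) < r)] at this
          omega
        have hmod : m % k + m / k * k = m := Nat.mod_add_div' m k
        have hmk : m % k = r - 1 := hir
        have : m = (r - 1) + (t - 1) * k := by rw [← hmod, hjt, hmk]
        rw [this, hLdef]
        exact last_pos' ht hr1 hrk
      · right
        have hmem : (α i).getD (m / k) (0, false) ∈ α i := by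
          rw [List.getD_eq_getElem _ _ hj]
          exact List.getElem_mem _
        have h2x := h4 i hir _ hmem hb'
        have hzero : pget (α i) (m / k + 1) = 0 := by
          rw [pget, List.getD_eq_default _ _ (by omega)]
        have : (d m).1 = pget (α i) (m / k) - pget (α i) (m / k + 1) := rfl
        rw [this, hzero]
        have : pget (α i) (m / k) = ((α i).getD (m / k) (0, false)).1 := rfl
        omega
    · right
      have : (d m).1 = pget (α i) (m / k) - pget (α i) (m / k + 1) := rfl
      rw [this]
      have h' : ((α i).getD (m / k + 1) (0, false)).1 + 2 ≤ ((α i).getD (m / k) (0, false)).1 := h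
      have e1 : pget (α i) (m / k + 1) = ((α i).getD (m / k + 1) (0, false)).1 := rfl
      have e2 : pget (α i) (m / k) = ((α i).getD (m / k) (0, false)).1 := rfl
      omega
  have hterm : ∀ (i : Fin k) (j : ℕ), j < (if i.val < r then t else t - 1) →
      d (i.val + j * k) = dff (α i) j := by
    intro i j hj
    show dff (α ⟨(i.val + j * k) % k, _⟩) ((i.val + j * k) / k) = dff (α i) j
    rw [div_lemma i.isLt]
    congr 1
    congr 1
    exact Fin.ext (mod_lemma i.isLt)
  refine ⟨isStrictOverpartition_fromDiff A1 A2, ?_, ?_, by simp [Phi, L]⟩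
  · rw [Phi, schmidtSum_fromDiff k L hk d,
      reindex (by omega) ht hr1 hrk (fun m => (m / k + 1) * (d m).1)]
    refine Finset.sum_congr rfl fun i _ => ?_
    have e : ∀ j ∈ Finset.range (if i.val < r then t else t - 1),
        ((i.val + j * k) / k + 1) * (d (i.val + j * k)).1 = (j + 1) * (dff (α i) j).1 := by
      intro j hj
      rw [Finset.mem_range] at hj
      rw [div_lemma i.isLt, hterm i j hj]
    rw [Finset.sum_congr rfl e]
    conv_rhs => rw [← fromDiff_dff (h1 i)]
    rw [sum_map_fst_fromDiff, hlen i]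
  · rw [Phi, countP_fromDiff,
      reindex (by omega) ht hr1 hrk (fun m => if (d m).2 then 1 else 0)]
    refine Finset.sum_congr rfl fun i _ => ?_
    have e : ∀ j ∈ Finset.range (if i.val < r then t else t - 1),
        (if (d (i.val + j * k)).2 then 1 else 0) = (if (dff (α i) j).2 then 1 else 0) := by
      intro j hj
      rw [Finset.mem_range] at hj
      rw [hterm i j hj]
    rw [Finset.sum_congr rfl e]
    conv_rhs => rw [← fromDiff_dff (h1 i)]
    rw [countP_fromDiff, hlen i]

lemma backward {k t r : ℕ} (hk : 0 < k) (ht : 1 ≤ t) (hr1 : 1 ≤ r) (hrk : r ≤ k)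
    {l : List (ℕ × Bool)} (hl : IsStrictOverpartition l)
    (hlen : l.length = (t - 1) * k + r) :
    (∀ i, IsStrictOverpartition (Psi k t r l i)) ∧
    (∀ i : Fin k, i.val < r → (Psi k t r l i).length = t) ∧
    (∀ i : Fin k, r ≤ i.val → (Psi k t r l i).length = t - 1) ∧
    (∀ i : Fin k, i.val ≠ r - 1 → ∀ x ∈ Psi k t r l i, x.2 = true → 2 ≤ x.1) ∧
    (∑ i, (Psi k t r l i).countP (fun x => x.2)) = l.countP (fun x => x.2) ∧
    (∑ i, ((Psi k t r l i).map Prod.fst).sum) = schmidtSum k (l.map Prod.fst) := by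
  set L := (t - 1) * k + r with hLdef
  have hkey : ∀ (i : Fin k) (j : ℕ), j < (if i.val < r then t else t - 1) →
      i.val + j * k < l.length := by
    intro i j hj
    rw [hlen, hLdef, lt_L_iff hk ht hr1 hrk, mod_lemma i.isLt, div_lemma i.isLt]
    exact hj
  -- the case analysis on overlined parts of `l`
  have hov : ∀ (i : Fin k) (j : ℕ), j < (if i.val < r then t else t - 1) →
      (dff l (i.val + j * k)).2 = true →
      (i.val = r - 1 ∧ j + 1 = (if i.val < r then t else t - 1)) ∨
        2 ≤ (dff l (i.val + j * k)).1 := by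
    intro i j hj hb
    have hm := hkey i j hj
    have hb' : bget l (i.val + j * k) = true := hb
    rcases hl.2.2 (i.val + j * k) hm hb' with h | h
    · left
      rw [hlen] at h
      obtain ⟨hir, hjt⟩ := last_pos ht hr1 hrk i.isLt h
      refine ⟨hir, ?_⟩
      rw [if_pos (by omega : i.val < r)]
      omega
    · right
      have e1 : (dff l (i.val + j * k)).1
          = pget l (i.val + j * k) - pget l (i.val + j * k + 1) := rfl
      have e2 : pget l (i.val + j * k + 1) = (l.getD (i.val + j * k + 1) (0, false)).1 := rfl
      have e3 : pget l (i.val + j * k) = (l.getD (i.val + j * k) (0, false)).1 := rfl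
      omega
  have hstrict : ∀ i, IsStrictOverpartition (Psi k t r l i) := by
    intro i
    refine isStrictOverpartition_fromDiff (fun j hj => dff_fst_pos hl (hkey i j hj)) ?_
    intro j hj hb
    rcases hov i j hj hb with ⟨_, h⟩ | h
    · exact Or.inl h
    · exact Or.inr h
  refine ⟨hstrict, ?_, ?_, ?_, ?_, ?_⟩
  · intro i hi
    rw [Psi, length_fromDiff, if_pos hi]
  · intro i hi
    rw [Psi, length_fromDiff, if_neg (by omega)]
  · intro i hir x hx hx2
    rw [Psi, fromDiff, List.mem_ofFn] at hx
    obtain ⟨j, rfl⟩ := hx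
    simp only at hx2
    rcases hov i j.val j.isLt hx2 with ⟨h, _⟩ | h
    · exact absurd h hir
    · refine le_trans h ?_
      exact Finset.single_le_sum (f := fun m => (dff l (i.val + m * k)).1)
        (fun m _ => Nat.zero_le _) (Finset.mem_Ico.mpr ⟨le_refl _, j.isLt⟩)
  · calc ∑ i, (Psi k t r l i).countP (fun x => x.2)
        = ∑ i : Fin k, ∑ j ∈ Finset.range (if i.val < r then t else t - 1),
            (if (dff l (i.val + j * k)).2 then 1 else 0) :=
          Finset.sum_congr rfl fun i _ => by rw [Psi, countP_fromDiff]
      _ = ∑ m ∈ Finset.range ((t - 1) * k + r), (if (dff l m).2 then 1 else 0) :=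
          (reindex (by omega) ht hr1 hrk (fun m => if (dff l m).2 then 1 else 0)).symm
      _ = l.countP (fun x => x.2) := by
          conv_rhs => rw [← fromDiff_dff hl]
          rw [countP_fromDiff, hlen]
  · calc ∑ i, ((Psi k t r l i).map Prod.fst).sum
        = ∑ i : Fin k, ∑ j ∈ Finset.range (if i.val < r then t else t - 1),
            ((i.val + j * k) / k + 1) * (dff l (i.val + j * k)).1 := by
          refine Finset.sum_congr rfl fun i _ => ?_
          rw [Psi, sum_map_fst_fromDiff]
          exact Finset.sum_congr rfl fun j _ => by rw [div_lemma i.isLt]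
      _ = ∑ m ∈ Finset.range ((t - 1) * k + r), (m / k + 1) * (dff l m).1 :=
          (reindex (by omega) ht hr1 hrk (fun m => (m / k + 1) * (dff l m).1)).symm
      _ = schmidtSum k (l.map Prod.fst) := by
          conv_rhs => rw [← fromDiff_dff hl]
          rw [schmidtSum_fromDiff k _ hk, hlen]

lemma Psi_Phi {k t r : ℕ} (hk : 0 < k) (ht : 1 ≤ t) (hr1 : 1 ≤ r) (hrk : r ≤ k)
    {α : Fin k → List (ℕ × Bool)}
    (h1 : ∀ i, IsStrictOverpartition (α i))
    (h2 : ∀ i : Fin k, i.val < r → (α i).length = t)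
    (h3 : ∀ i : Fin k, r ≤ i.val → (α i).length = t - 1) :
    Psi k t r (Phi hk t r α) = α := by
  have hlen : ∀ i : Fin k, (α i).length = if i.val < r then t else t - 1 := by
    intro i
    split_ifs with h
    · exact h2 i h
    · exact h3 i (by omega)
  funext i
  rw [Psi]
  have hcongr : ∀ j < (if i.val < r then t else t - 1),
      dff (Phi hk t r α) (i.val + j * k) = dff (α i) j := by
    intro j hj
    have hm : i.val + j * k < (t - 1) * k + r := by
      rw [lt_L_iff hk ht hr1 hrk, mod_lemma i.isLt, div_lemma i.isLt]
      exact hj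
    rw [Phi, dff_fromDiff _ hm]
    show dff (α ⟨(i.val + j * k) % k, _⟩) ((i.val + j * k) / k) = dff (α i) j
    rw [div_lemma i.isLt]
    congr 2
    exact Fin.ext (mod_lemma i.isLt)
  rw [fromDiff_congr hcongr, ← hlen i, fromDiff_dff (h1 i)]

lemma Phi_Psi {k t r : ℕ} (hk : 0 < k) (ht : 1 ≤ t) (hr1 : 1 ≤ r) (hrk : r ≤ k)
    {l : List (ℕ × Bool)} (hl : IsStrictOverpartition l)
    (hlen : l.length = (t - 1) * k + r) :
    Phi hk t r (Psi k t r l) = l := by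
  rw [Phi]
  have hcongr : ∀ m < (t - 1) * k + r,
      dff (Psi k t r l ⟨m % k, Nat.mod_lt _ hk⟩) (m / k) = dff l m := by
    intro m hm
    have hj : m / k < (if m % k < r then t else t - 1) := (lt_L_iff hk ht hr1 hrk m).mp hm
    rw [Psi, dff_fromDiff _ hj, Nat.mod_add_div' m k]
  rw [fromDiff_congr hcongr, ← hlen, fromDiff_dff hl]

end SchmidtAux

/-- Schmidt `k`-overpartition theorem: `k`-tuples of strict overpartitions of total
weight `n` with `s` overlined parts in total, the first `r` of length `t` and the
remaining of length `t - 1`, every overlined part of `αⁱ` being at least 2 for `i ≠ r`,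
are equinumerous with Schmidt `k`-overpartitions of `n` with `(t-1)k + r` parts, exactly
`s` of which are overlined. -/


theorem schmidt_k_overpartition (n k t r s : ℕ) (hn : 1 ≤ n) (hk : 1 ≤ k) (ht : 1 ≤ t)
    (hs : 1 ≤ s) (hr1 : 1 ≤ r) (hrk : r ≤ k) :
    Nat.card {α : Fin k → List (ℕ × Bool) //
        (∀ i, IsStrictOverpartition (α i)) ∧
        (∀ i : Fin k, i.val < r → (α i).length = t) ∧
        (∀ i : Fin k, r ≤ i.val → (α i).length = t - 1) ∧
        (∀ i : Fin k, i.val ≠ r - 1 → ∀ x ∈ α i, x.2 = true → 2 ≤ x.1) ∧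
        (∑ i, (α i).countP (fun x => x.2)) = s ∧
        ∑ i, ((α i).map Prod.fst).sum = n} =
      Nat.card {l : List (ℕ × Bool) //
        IsStrictOverpartition l ∧ schmidtSum k (l.map Prod.fst) = n ∧
        l.length = (t - 1) * k + r ∧ l.countP (fun x => x.2) = s} := by
  refine Nat.card_congr ⟨fun a => ⟨SchmidtAux.Phi hk t r a.1, ?_⟩,
    fun l => ⟨SchmidtAux.Psi k t r l.1, ?_⟩, ?_, ?_⟩
  · obtain ⟨h1, h2, h3, h4, h5, h6⟩ := a.2
    obtain ⟨f1, f2, f3, f4⟩ := SchmidtAux.forward hk ht hr1 hrk h1 h2 h3 h4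
    exact ⟨f1, by rw [f2, h6], f4, by rw [f3, h5]⟩
  · obtain ⟨g1, g2, g3, g4⟩ := l.2
    obtain ⟨b1, b2, b3, b4, b5, b6⟩ := SchmidtAux.backward hk ht hr1 hrk g1 g3
    exact ⟨b1, b2, b3, b4, by rw [b5, g4], by rw [b6, g2]⟩
  · intro a
    apply Subtype.ext
    obtain ⟨h1, h2, h3, h4, h5, h6⟩ := a.2
    exact SchmidtAux.Psi_Phi hk ht hr1 hrk h1 h2 h3
  · intro l
    apply Subtype.ext
    obtain ⟨g1, g2, g3, g4⟩ := l.2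
    exact SchmidtAux.Phi_Psi hk ht hr1 hrk g1 g3
end

section
/- The number of overpartitions of n with exactly s overlined parts and Durfee square of side t equals the number of Schmidt 2-overpartitions of n with exactly s overlined parts and length 2t or 2t−1. -/
/-- An overpartition, encoded as a list of (part, overlined?) pairs: parts are positive
and weakly decreasing, and only the final occurrence of a part value may be overlined. -/
def IsOverpartition (l : List (ℕ × Bool)) : Prop :=
  (l.map Prod.fst).Pairwise (· ≥ ·) ∧ (∀ x ∈ l, 0 < x.1) ∧
  ∀ i, i + 1 < l.length → (l.getD i (0, false)).2 = true →
    (l.getD (i + 1) (0, false)).1 < (l.getD i (0, false)).1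

/-- The Durfee square of the partition `l` has side `t`: `t` is the largest integer such
that `l` has at least `t` parts of size at least `t`. -/
def HasDurfeeSide (l : List ℕ) (t : ℕ) : Prop :=
  (t ≤ l.length ∧ ∀ i < t, t ≤ l.getD i 0) ∧
  ¬ (t + 1 ≤ l.length ∧ ∀ i < t + 1, t + 1 ≤ l.getD i 0)

namespace ODS


/-- countP as a sum over indices. -/
lemma countP_eq_sum {α : Type*} (d : α) (l : List α) (p : α → Bool) :
    l.countP p = ∑ i ∈ Finset.range l.length, if p (l.getD i d) = true then 1 else 0 := by
  induction l with
  | nil => simp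
  | cons x tl ih =>
      rw [List.countP_cons, List.length_cons, Finset.sum_range_succ']
      simp only [List.getD_cons_succ, List.getD_cons_zero]
      rw [ih]

lemma sum_fst_eq_sum (l : List (ℕ × Bool)) :
    (l.map Prod.fst).sum = ∑ i ∈ Finset.range l.length, (l.getD i (0, false)).1 := by
  induction l with
  | nil => simp
  | cons x tl ih =>
      rw [List.map_cons, List.sum_cons, List.length_cons, Finset.sum_range_succ']
      simp only [List.getD_cons_succ, List.getD_cons_zero]
      rw [ih]; ring

lemma getD_range_map {α : Type*} (f : ℕ → α) (L k : ℕ) (d : α) :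
    (((List.range L).map f).getD k d) = if k < L then f k else d := by
  by_cases h : k < L
  · rw [List.getD_eq_getElem _ _ (by simpa using h)]
    simp [h]
  · rw [List.getD_eq_default _ _ (by simpa using Nat.le_of_not_lt h)]
    simp [h]

lemma sum_ind_min (t v : ℕ) :
    (∑ i ∈ Finset.range t, if i + 1 ≤ v then 1 else 0) = min v t := by
  induction t with
  | zero => simp
  | succ t ih => rw [Finset.sum_range_succ, ih]; split <;> omega

/-- antitone chains -/
lemma anti_le (f : ℕ → ℕ) (hf : ∀ j, f (j + 1) ≤ f j) : ∀ i j, i ≤ j → f j ≤ f i := by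
  intro i j h
  induction j with
  | zero => interval_cases i; exact le_rfl
  | succ j ih =>
      rcases Nat.lt_or_ge i (j+1) with h2 | h2
      · exact le_trans (hf j) (ih (by omega))
      · have : i = j + 1 := by omega
        subst this; exact le_rfl

/-- telescoping sum for ℕ-valued antitone functions -/
lemma tele (f : ℕ → ℕ) (hf : ∀ j, f (j + 1) ≤ f j) :
    ∀ i T, i ≤ T → ∑ j ∈ Finset.Ico i T, (f j - f (j + 1)) = f i - f T := by
  intro i T
  induction T with
  | zero => intro h; interval_cases i; simp
  | succ T ih =>
      intro h
      rcases Nat.lt_or_ge i (T+1) with h' | h'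
      · have hiT : i ≤ T := by omega
        rw [Finset.sum_Ico_succ_top hiT, ih hiT]
        have h1 : f T ≤ f i := anti_le f hf i T hiT
        have := hf T
        omega
      · have : i = T + 1 := by omega
        subst this; simp

lemma sum_even_odd (F : ℕ → ℕ) (T : ℕ) :
    ∑ i ∈ Finset.range (2 * T), F i
      = (∑ k ∈ Finset.range T, F (2 * k)) + ∑ k ∈ Finset.range T, F (2 * k + 1) := by
  induction T with
  | zero => simp
  | succ T ih =>
      have h2 : 2 * (T + 1) = (2 * T) + 1 + 1 := by ring
      rw [h2, Finset.sum_range_succ, Finset.sum_range_succ, ih,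
        Finset.sum_range_succ, Finset.sum_range_succ]
      omega

/-- For a list sorted weakly decreasing on first components, counting entries ≥ v
relates to the k-th entry. -/
lemma sorted_countP_iff (l : List (ℕ × Bool)) (hs : (l.map Prod.fst).Pairwise (· ≥ ·)) :
    ∀ v k, k < l.length →
      ((k + 1 ≤ l.countP (fun x => decide (v ≤ x.1))) ↔ v ≤ (l.getD k (0, false)).1) := by
  induction l with
  | nil => intro v k h; simp at h
  | cons x tl ih =>
      have hs' : (tl.map Prod.fst).Pairwise (· ≥ ·) := by
        rw [List.map_cons, List.pairwise_cons] at hs; exact hs.2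
      have hx : ∀ y ∈ tl, y.1 ≤ x.1 := by
        rw [List.map_cons, List.pairwise_cons] at hs
        intro y hy
        exact hs.1 y.1 (List.mem_map_of_mem hy)
      intro v k hk
      rw [List.countP_cons]
      match k with
      | 0 =>
          simp only [List.getD_cons_zero]
          constructor
          · intro h
            by_contra hvx
            push_neg at hvx
            have h0 : tl.countP (fun x => decide (v ≤ x.1)) = 0 := by
              rw [List.countP_eq_zero]
              intro a ha
              simp only [decide_eq_true_eq]
              have := hx a ha; omega
            simp only [decide_eq_true_eq] at h
            rw [h0] at h
            split at h <;> omega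
          · intro h; simp only [decide_eq_true_eq]; rw [if_pos h]; omega
      | k + 1 =>
          simp only [List.getD_cons_succ]
          have hk' : k < tl.length := by simpa using hk
          by_cases hvx : v ≤ x.1
          · simp only [decide_eq_true_eq]
            rw [if_pos hvx]
            rw [← ih hs' v k hk']
            omega
          · have h0 : tl.countP (fun x => decide (v ≤ x.1)) = 0 := by
              rw [List.countP_eq_zero]
              intro a ha
              simp only [decide_eq_true_eq]
              have := hx a ha; omega
            have hmem : tl.getD k (0, false) ∈ tl := by
              rw [List.getD_eq_getElem _ _ hk']
              exact List.getElem_mem hk'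
            have hlt : ¬ v ≤ (tl.getD k (0, false)).1 := by
              have := hx _ hmem; omega
            simp only [decide_eq_true_eq]
            rw [if_neg hvx, h0]
            exact iff_of_false (by omega) hlt

/-- sorted (weakly decreasing on fst) gives monotone getD -/
lemma sorted_getD_le (l : List (ℕ × Bool)) (hs : (l.map Prod.fst).Pairwise (· ≥ ·))
    {i j : ℕ} (hij : i ≤ j) (hj : j < l.length) :
    (l.getD j (0, false)).1 ≤ (l.getD i (0, false)).1 := by
  rcases Nat.eq_or_lt_of_le hij with h | h
  · subst h; exact le_rfl
  · have hi : i < l.length := lt_trans h hj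
    rw [List.getD_eq_getElem _ _ hi, List.getD_eq_getElem _ _ hj]
    have := List.pairwise_iff_getElem.1 hs i j (by simpa using hi) (by simpa using hj) h
    simpa using this

/-- sorted (strictly decreasing on fst) gives strict getD -/
lemma sorted_getD_lt (l : List (ℕ × Bool)) (hs : (l.map Prod.fst).Pairwise (· > ·))
    {i j : ℕ} (hij : i < j) (hj : j < l.length) :
    (l.getD j (0, false)).1 < (l.getD i (0, false)).1 := by
  have hi : i < l.length := lt_trans hij hj
  rw [List.getD_eq_getElem _ _ hi, List.getD_eq_getElem _ _ hj]
  have := List.pairwise_iff_getElem.1 hs i j (by simpa using hi) (by simpa using hj) hij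
  simpa using this


/-! ## The middle parameter space -/

@[ext] structure Mid (n t s : ℕ) : Type where
  a : ℕ → ℕ
  b : ℕ → ℕ
  ma : ℕ → Bool
  mb : ℕ → Bool
  ha : ∀ i, a (i + 1) ≤ a i
  hb : ∀ i, b (i + 1) ≤ b i
  hat : a t = 0
  hbt : b t = 0
  hma : ∀ i, ma i = true →
    (i + 1 < t ∧ a (i + 1) < a i) ∨ (i + 1 = t ∧ (1 ≤ a i ∨ b i = 0))
  hmb : ∀ i, mb i = true → i + 1 ≤ t ∧ b (i + 1) < b i
  hsum : t ^ 2 + (∑ i ∈ Finset.range t, a i) + (∑ i ∈ Finset.range t, b i) = n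
  hcnt : (∑ i ∈ Finset.range t, if ma i = true then 1 else 0)
       + (∑ i ∈ Finset.range t, if mb i = true then 1 else 0) = s

namespace Mid

variable {n t s : ℕ} (m : Mid n t s)

lemma a_eq_zero {i : ℕ} (h : t ≤ i) : m.a i = 0 :=
  Nat.le_antisymm (m.hat ▸ anti_le m.a m.ha t i h) (Nat.zero_le _)

lemma b_eq_zero {i : ℕ} (h : t ≤ i) : m.b i = 0 :=
  Nat.le_antisymm (m.hbt ▸ anti_le m.b m.hb t i h) (Nat.zero_le _)

lemma a_le {i j : ℕ} (h : i ≤ j) : m.a j ≤ m.a i := anti_le m.a m.ha i j h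

lemma b_le {i j : ℕ} (h : i ≤ j) : m.b j ≤ m.b i := anti_le m.b m.hb i j h

lemma ma_eq_false {i : ℕ} (h : t ≤ i) : m.ma i = false := by
  by_contra hc
  rcases m.hma i (by simpa using hc) with ⟨h1, _⟩ | ⟨h1, _⟩ <;> omega

lemma mb_eq_false {i : ℕ} (h : t ≤ i) : m.mb i = false := by
  by_contra hc
  rcases m.hmb i (by simpa using hc) with ⟨h1, _⟩
  omega

end Mid

/-! ## arithmetic for parity -/

lemma sq_sum (t : ℕ) : ∑ k ∈ Finset.range t, (2 * k + 1) = t ^ 2 := by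
  induction t with
  | zero => simp
  | succ t ih => rw [Finset.sum_range_succ, ih]; ring

lemma sq_sum' (t : ℕ) : ∑ k ∈ Finset.range t, (2 * t - 1 - 2 * k) = t ^ 2 := by
  rw [← Finset.sum_range_reflect]
  rw [← sq_sum t]
  apply Finset.sum_congr rfl
  intro k hk
  rw [Finset.mem_range] at hk
  omega

/-! ## B side: Schmidt 2-overpartitions -/

/-- part of encoded Schmidt list at position `j` -/
def pB (t : ℕ) (a b : ℕ → ℕ) (j : ℕ) : ℕ :=
  if j % 2 = 0 then a (j / 2) + b (j / 2) + (2 * t - 1 - j)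
  else a (j / 2 + 1) + b (j / 2) + (2 * t - 1 - j)

def mkB (ma mb : ℕ → Bool) (j : ℕ) : Bool :=
  if j % 2 = 0 then ma (j / 2) else mb (j / 2)

lemma pB_even (t : ℕ) (a b : ℕ → ℕ) (i : ℕ) :
    pB t a b (2 * i) = a i + b i + (2 * t - 1 - 2 * i) := by
  unfold pB
  rw [if_pos (by omega)]
  have h1 : 2 * i / 2 = i := by omega
  rw [h1]

lemma pB_odd (t : ℕ) (a b : ℕ → ℕ) (i : ℕ) :
    pB t a b (2 * i + 1) = a (i + 1) + b i + (2 * t - 2 - 2 * i) := by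
  unfold pB
  rw [if_neg (by omega)]
  have h1 : (2 * i + 1) / 2 = i := by omega
  rw [h1]
  congr 1
  omega

lemma mkB_even (ma mb : ℕ → Bool) (i : ℕ) : mkB ma mb (2 * i) = ma i := by
  unfold mkB; rw [if_pos (by omega)]; congr 1; omega

lemma mkB_odd (ma mb : ℕ → Bool) (i : ℕ) : mkB ma mb (2 * i + 1) = mb i := by
  unfold mkB; rw [if_neg (by omega)]; congr 1; omega

variable {n t s : ℕ}

/-- length of encoded Schmidt list -/
def lenB (m : Mid n t s) : ℕ := if m.b (t - 1) = 0 then 2 * t - 1 else 2 * t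

def encB (m : Mid n t s) : List (ℕ × Bool) :=
  (List.range (lenB m)).map (fun j => (pB t m.a m.b j, mkB m.ma m.mb j))

lemma length_encB (m : Mid n t s) : (encB m).length = lenB m := by
  simp [encB]

lemma lenB_le (m : Mid n t s) : lenB m ≤ 2 * t := by
  unfold lenB; split <;> omega

lemma lenB_ge (ht : 1 ≤ t) (m : Mid n t s) : 2 * t - 1 ≤ lenB m := by
  unfold lenB; split <;> omega

lemma getD_encB (m : Mid n t s) (k : ℕ) :
    (encB m).getD k (0, false)
      = if k < lenB m then (pB t m.a m.b k, mkB m.ma m.mb k) else (0, false) := by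
  unfold encB; rw [getD_range_map]

lemma pB_step (ht : 1 ≤ t) (m : Mid n t s) :
    ∀ j, j + 1 < 2 * t → pB t m.a m.b (j + 1) + 1 ≤ pB t m.a m.b j := by
  intro j hj
  rcases Nat.even_or_odd j with ⟨i, hi⟩ | ⟨i, hi⟩
  · have hij : j = 2 * i := by omega
    subst hij
    rw [pB_even, pB_odd]
    have := m.ha i
    omega
  · have hij : j = 2 * i + 1 := by omega
    have hij2 : j + 1 = 2 * (i + 1) := by omega
    rw [hij2, hij, pB_even, pB_odd]
    have := m.hb i
    have := m.ha (i + 1)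
    omega

lemma pB_chain (ht : 1 ≤ t) (m : Mid n t s) :
    ∀ d j, j + d < 2 * t → pB t m.a m.b (j + d) + d ≤ pB t m.a m.b j := by
  intro d
  induction d with
  | zero => intro j _; simp
  | succ d ih =>
      intro j hj
      have h1 := ih (j + 1) (by omega)
      have h2 := pB_step ht m j (by omega)
      have h3 : j + 1 + d = j + (d + 1) := by omega
      rw [h3] at h1
      omega

lemma pB_last (m : Mid n t s) (ht : 1 ≤ t) :
    pB t m.a m.b (2 * t - 1) = m.b (t - 1) := by
  have h : 2 * t - 1 = 2 * (t - 1) + 1 := by omega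
  rw [h, pB_odd]
  have h2 : t - 1 + 1 = t := by omega
  rw [h2, m.hat]
  omega

lemma pB_pos (ht : 1 ≤ t) (m : Mid n t s) {j : ℕ} (hj : j < lenB m) :
    0 < pB t m.a m.b j := by
  by_cases hb : m.b (t - 1) = 0
  · have hL : lenB m = 2 * t - 1 := by unfold lenB; rw [if_pos hb]
    rw [hL] at hj
    have h1 : j + (2 * t - 2 - j) = 2 * t - 2 := by omega
    have := pB_chain ht m (2 * t - 2 - j) j (by omega)
    rw [h1] at this
    have h2 : (2 : ℕ) * t - 2 = 2 * (t - 1) := by omega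
    rw [h2, pB_even] at this
    omega
  · have hL : lenB m = 2 * t := by unfold lenB; rw [if_neg hb]
    rw [hL] at hj
    have h1 : j + (2 * t - 1 - j) = 2 * t - 1 := by omega
    rcases Nat.eq_or_lt_of_le (Nat.le_of_lt_succ (by omega : j < (2*t-1) + 1)) with he | hlt
    · rw [he, pB_last m ht]; omega
    · have := pB_chain ht m (2 * t - 1 - j) j (by omega)
      rw [h1, pB_last m ht] at this
      omega

lemma map_fst_getD (l : List (ℕ × Bool)) (k : ℕ) :
    (l.map Prod.fst).getD k 0 = (l.getD k (0, false)).1 := by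
  by_cases h : k < l.length
  · rw [List.getD_eq_getElem _ _ (by simpa using h), List.getD_eq_getElem _ _ h,
      List.getElem_map]
  · rw [List.getD_eq_default _ _ (by simpa using Nat.le_of_not_lt h),
      List.getD_eq_default _ _ (by simpa using Nat.le_of_not_lt h)]

lemma encB_sorted (ht : 1 ≤ t) (m : Mid n t s) :
    ((encB m).map Prod.fst).Pairwise (· > ·) := by
  rw [List.pairwise_iff_getElem]
  intro i j hi hj hij
  have hlen : ((encB m).map Prod.fst).length = lenB m := by simp [encB]
  rw [hlen] at hi hj
  have hgi : i < (encB m).length := by rw [length_encB]; omega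
  have hgj : j < (encB m).length := by rw [length_encB]; omega
  rw [List.getElem_map, List.getElem_map]
  show (encB m)[i].1 > (encB m)[j].1
  have e1 : (encB m)[i] = (pB t m.a m.b i, mkB m.ma m.mb i) := by
    have := getD_encB m i
    rw [List.getD_eq_getElem _ _ hgi, if_pos (by omega)] at this
    exact this
  have e2 : (encB m)[j] = (pB t m.a m.b j, mkB m.ma m.mb j) := by
    have := getD_encB m j
    rw [List.getD_eq_getElem _ _ hgj, if_pos (by omega)] at this
    exact this
  rw [e1, e2]
  have hc := pB_chain ht m (j - i) i (by have := lenB_le m; omega)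
  have : i + (j - i) = j := by omega
  rw [this] at hc
  simp only []
  omega

lemma encB_pos (ht : 1 ≤ t) (m : Mid n t s) : ∀ x ∈ encB m, 0 < x.1 := by
  intro x hx
  unfold encB at hx
  rw [List.mem_map] at hx
  obtain ⟨j, hj, rfl⟩ := hx
  rw [List.mem_range] at hj
  exact pB_pos ht m hj

lemma encB_overline (ht : 1 ≤ t) (m : Mid n t s) :
    ∀ i, i < (encB m).length → ((encB m).getD i (0, false)).2 = true →
      (i + 1 = (encB m).length ∨
        ((encB m).getD (i + 1) (0, false)).1 + 2 ≤ ((encB m).getD i (0, false)).1) := by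
  intro i hi hmk
  rw [length_encB] at hi ⊢
  rw [getD_encB, if_pos hi] at hmk
  simp only [] at hmk
  have hiL := lenB_le m
  rcases Nat.even_or_odd i with ⟨q, hq⟩ | ⟨q, hq⟩
  · -- i = 2q, mark is ma q
    have hiq : i = 2 * q := by omega
    subst hiq
    rw [mkB_even] at hmk
    rcases m.hma q hmk with ⟨h1, h2⟩ | ⟨h1, h2⟩
    · -- q+1 < t, gap in a
      right
      have hi1 : 2 * q + 1 < lenB m := by
        have := lenB_ge ht m; omega
      rw [getD_encB, if_pos hi1, getD_encB, if_pos hi]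
      simp only []
      rw [pB_odd, pB_even]
      omega
    · -- q + 1 = t
      by_cases hb : m.b (t - 1) = 0
      · left
        unfold lenB
        rw [if_pos hb]
        omega
      · right
        have hL : lenB m = 2 * t := by unfold lenB; rw [if_neg hb]
        have hi1 : 2 * q + 1 < lenB m := by omega
        rw [getD_encB, if_pos hi1, getD_encB, if_pos hi]
        simp only []
        rw [pB_odd, pB_even]
        have hq1 : q = t - 1 := by omega
        have ha : 1 ≤ m.a q := by
          rcases h2 with h2 | h2
          · exact h2
          · rw [hq1] at h2; exact absurd h2 hb
        have ha2 : m.a (q + 1) = 0 := by rw [h1]; exact m.hat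
        omega
  · -- i = 2q+1, mark is mb q
    have hiq : i = 2 * q + 1 := by omega
    subst hiq
    rw [mkB_odd] at hmk
    obtain ⟨h1, h2⟩ := m.hmb q hmk
    rcases Nat.eq_or_lt_of_le h1 with he | hlt
    · -- q+1 = t : this position is 2t-1, so lenB = 2t and it's last
      left
      have hb : m.b (t - 1) ≠ 0 := by
        have : t - 1 = q := by omega
        rw [this]; omega
      unfold lenB
      rw [if_neg hb]
      omega
    · right
      have hi1 : 2 * q + 1 + 1 < lenB m := by
        have := lenB_ge ht m; omega
      rw [getD_encB, if_pos hi1, getD_encB, if_pos hi]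
      simp only []
      have h3 : 2 * q + 1 + 1 = 2 * (q + 1) := by omega
      rw [h3, pB_even, pB_odd]
      have := m.ha (q + 1)
      omega

lemma encB_schmidtSum (ht : 1 ≤ t) (m : Mid n t s) :
    schmidtSum 2 ((encB m).map Prod.fst) = n := by
  unfold schmidtSum
  have hlen : ((encB m).map Prod.fst).length = lenB m := by simp [encB]
  rw [hlen]
  have hstep : ∀ i ∈ Finset.range (lenB m),
      (if i % 2 = 0 then ((encB m).map Prod.fst).getD i 0 else 0)
        = (if i % 2 = 0 then pB t m.a m.b i else 0) := by
    intro i hi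
    rw [Finset.mem_range] at hi
    rw [map_fst_getD, getD_encB, if_pos hi]
  rw [Finset.sum_congr rfl hstep]
  have hext : ∑ i ∈ Finset.range (lenB m), (if i % 2 = 0 then pB t m.a m.b i else 0)
      = ∑ i ∈ Finset.range (2 * t), (if i % 2 = 0 then pB t m.a m.b i else 0) := by
    unfold lenB
    split
    · have h2 : 2 * t = (2 * t - 1) + 1 := by omega
      conv_rhs => rw [h2, Finset.sum_range_succ]
      rw [if_neg (by omega), add_zero]
    · rfl
  rw [hext, sum_even_odd]
  have hz : ∀ k ∈ Finset.range t,
      (if (2 * k + 1) % 2 = 0 then pB t m.a m.b (2 * k + 1) else 0) = 0 := by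
    intro k _; rw [if_neg (by omega)]
  rw [Finset.sum_congr rfl hz, Finset.sum_const_zero, add_zero]
  have he : ∀ k ∈ Finset.range t,
      (if (2 * k) % 2 = 0 then pB t m.a m.b (2 * k) else 0)
        = m.a k + m.b k + (2 * t - 1 - 2 * k) := by
    intro k _; rw [if_pos (by omega), pB_even]
  rw [Finset.sum_congr rfl he, Finset.sum_add_distrib, Finset.sum_add_distrib, sq_sum']
  have := m.hsum
  omega

lemma encB_countP (ht : 1 ≤ t) (m : Mid n t s) :
    (encB m).countP (fun x => x.2) = s := by
  rw [countP_eq_sum (0, false), length_encB]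
  have hstep : ∀ i ∈ Finset.range (lenB m),
      (if ((encB m).getD i (0,false)).2 = true then 1 else 0)
        = (if mkB m.ma m.mb i = true then 1 else 0) := by
    intro i hi
    rw [Finset.mem_range] at hi
    rw [getD_encB, if_pos hi]
  rw [Finset.sum_congr rfl hstep]
  have hext : ∑ i ∈ Finset.range (lenB m), (if mkB m.ma m.mb i = true then 1 else 0)
      = ∑ i ∈ Finset.range (2 * t), (if mkB m.ma m.mb i = true then 1 else 0) := by
    unfold lenB
    split
    · next hb =>
      have h2 : 2 * t = (2 * t - 1) + 1 := by omega
      conv_rhs => rw [h2, Finset.sum_range_succ]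
      have h3 : 2 * t - 1 = 2 * (t - 1) + 1 := by omega
      have h4 : mkB m.ma m.mb (2 * t - 1) = false := by
        rw [h3, mkB_odd]
        by_contra hc
        have := m.hmb (t - 1) (by simpa using hc)
        have hbt := m.hbt
        have : t - 1 + 1 = t := by omega
        omega
      rw [h4]
      simp
    · rfl
  rw [hext, sum_even_odd]
  have he : ∀ k ∈ Finset.range t,
      (if mkB m.ma m.mb (2 * k) = true then 1 else 0)
        = (if m.ma k = true then 1 else 0) := by
    intro k _; rw [mkB_even]
  have ho : ∀ k ∈ Finset.range t,
      (if mkB m.ma m.mb (2 * k + 1) = true then 1 else 0)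
        = (if m.mb k = true then 1 else 0) := by
    intro k _; rw [mkB_odd]
  rw [Finset.sum_congr rfl he, Finset.sum_congr rfl ho]
  exact m.hcnt

/-! ## B side: decoding -/

def pL (l : List (ℕ × Bool)) (k : ℕ) : ℕ := (l.getD k (0, false)).1

def mkL (l : List (ℕ × Bool)) (k : ℕ) : Bool := (l.getD k (0, false)).2

def dBa (t : ℕ) (l : List (ℕ × Bool)) (i : ℕ) : ℕ :=
  ∑ j ∈ Finset.Ico i t, (pL l (2 * j) - pL l (2 * j + 1) - 1)

def dBb (t : ℕ) (l : List (ℕ × Bool)) (i : ℕ) : ℕ :=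
  if i < t then (∑ j ∈ Finset.Ico i (t - 1), (pL l (2 * j + 1) - pL l (2 * j + 2) - 1))
    + pL l (2 * t - 1)
  else 0

section DecB

variable {l : List (ℕ × Bool)} (hS : IsStrictOverpartition l)
  (hlen : l.length = 2 * t ∨ l.length = 2 * t - 1) (ht : 1 ≤ t)

include hS hlen ht

lemma pL_zero (k : ℕ) (h : l.length ≤ k) : pL l k = 0 := by
  unfold pL
  rw [List.getD_eq_default _ _ h]

lemma pL_pos (k : ℕ) (h : k < l.length) : 1 ≤ pL l k := by
  unfold pL
  rw [List.getD_eq_getElem _ _ h]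
  exact hS.2.1 _ (List.getElem_mem h)

lemma pL_step : ∀ k, k + 1 < 2 * t → pL l (k + 1) + 1 ≤ pL l k := by
  intro k hk
  by_cases h : k + 1 < l.length
  · have := sorted_getD_lt l hS.1 (show k < k + 1 by omega) h
    unfold pL
    omega
  · have h0 : pL l (k + 1) = 0 := pL_zero hS hlen ht _ (by omega)
    have h1 : 1 ≤ pL l k := pL_pos hS hlen ht k (by omega)
    omega

lemma pL_chain : ∀ d k, k + d < 2 * t → pL l (k + d) + d ≤ pL l k := by
  intro d
  induction d with
  | zero => intro k _; simp
  | succ d ih =>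
      intro k hk
      have h1 := ih (k + 1) (by omega)
      have h2 := pL_step hS hlen ht k (by omega)
      have h3 : k + 1 + d = k + (d + 1) := by omega
      rw [h3] at h1
      omega

lemma rec_ab : ∀ d i, i + 1 + d = t →
    (dBa t l i + dBb t l i + (2 * t - 1 - 2 * i) = pL l (2 * i)) ∧
    (dBa t l (i + 1) + dBb t l i + (2 * t - 2 - 2 * i) = pL l (2 * i + 1)) := by
  intro d
  induction d with
  | zero =>
      intro i hi
      have hit : t = i + 1 := by omega
      have h1 : dBa t l i = pL l (2 * i) - pL l (2 * i + 1) - 1 := by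
        unfold dBa
        rw [hit, Finset.sum_Ico_succ_top (le_refl i), Finset.Ico_self, Finset.sum_empty,
          zero_add]
      have h2 : dBa t l (i + 1) = 0 := by
        unfold dBa
        rw [hit, Finset.Ico_self, Finset.sum_empty]
      have h3 : dBb t l i = pL l (2 * t - 1) := by
        unfold dBb
        rw [if_pos (by omega)]
        have : Finset.Ico i (t - 1) = ∅ := by
          rw [show t - 1 = i by omega]; exact Finset.Ico_self i
        rw [this, Finset.sum_empty, zero_add]
      have h4 : 2 * t - 1 = 2 * i + 1 := by omega
      rw [h4] at h3
      have h5 := pL_step hS hlen ht (2 * i) (by omega)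
      constructor
      · rw [h1, h3]; omega
      · rw [h2, h3]; omega
  | succ d ih =>
      intro i hi
      have hi1 : i + 1 < t := by omega
      obtain ⟨A1, A2⟩ := ih (i + 1) (by omega)
      have hrecb : dBb t l i = (pL l (2 * i + 1) - pL l (2 * i + 2) - 1) + dBb t l (i + 1) := by
        unfold dBb
        rw [if_pos (by omega), if_pos (by omega),
          Finset.sum_eq_sum_Ico_succ_bot (by omega : i < t - 1)]
        ring
      have hreca : dBa t l i = (pL l (2 * i) - pL l (2 * i + 1) - 1) + dBa t l (i + 1) := by
        unfold dBa
        rw [Finset.sum_eq_sum_Ico_succ_bot (by omega : i < t)]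
      have hs1 := pL_step hS hlen ht (2 * i) (by omega)
      have hs2 := pL_step hS hlen ht (2 * i + 1) (by omega)
      rw [show 2 * i + 1 + 1 = 2 * i + 2 by omega] at hs2
      have e1 : 2 * (i + 1) = 2 * i + 2 := by omega
      have e2 : 2 * (i + 1) + 1 = 2 * i + 3 := by omega
      rw [e1] at A1
      rw [e2] at A2
      constructor
      · omega
      · omega

lemma reca (i : ℕ) (hi : i < t) :
    dBa t l i + dBb t l i + (2 * t - 1 - 2 * i) = pL l (2 * i) :=
  (rec_ab hS hlen ht (t - 1 - i) i (by omega)).1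

lemma recb (i : ℕ) (hi : i < t) :
    dBa t l (i + 1) + dBb t l i + (2 * t - 2 - 2 * i) = pL l (2 * i + 1) :=
  (rec_ab hS hlen ht (t - 1 - i) i (by omega)).2

lemma mkL_range {k : ℕ} (h : mkL l k = true) : k < l.length := by
  by_contra hc
  unfold mkL at h
  rw [List.getD_eq_default _ _ (by omega)] at h
  simp at h

omit hS hlen ht in
lemma dBa_anti : ∀ i, dBa t l (i + 1) ≤ dBa t l i := fun i =>
  Finset.sum_le_sum_of_subset (Finset.Ico_subset_Ico (Nat.le_succ i) le_rfl)

omit hS hlen ht in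
lemma dBa_top : dBa t l t = 0 := by
  unfold dBa; rw [Finset.Ico_self, Finset.sum_empty]

omit hS hlen ht in
lemma dBb_top : dBb t l t = 0 := by
  unfold dBb; rw [if_neg (by omega)]

omit hS hlen ht in
lemma dBb_anti : ∀ i, dBb t l (i + 1) ≤ dBb t l i := by
  intro i
  unfold dBb
  by_cases h : i + 1 < t
  · rw [if_pos h, if_pos (by omega)]
    have : ∑ j ∈ Finset.Ico (i+1) (t-1), (pL l (2 * j + 1) - pL l (2 * j + 2) - 1)
        ≤ ∑ j ∈ Finset.Ico i (t-1), (pL l (2 * j + 1) - pL l (2 * j + 2) - 1) :=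
      Finset.sum_le_sum_of_subset (Finset.Ico_subset_Ico (Nat.le_succ i) (le_refl (t-1)))
    omega
  · rw [if_neg h]
    omega

lemma dBma_spec : ∀ i, mkL l (2 * i) = true →
    (i + 1 < t ∧ dBa t l (i + 1) < dBa t l i) ∨
    (i + 1 = t ∧ (1 ≤ dBa t l i ∨ dBb t l i = 0)) := by
  intro i h
  have hrange : 2 * i < l.length := mkL_range hS hlen ht h
  have hit : i < t := by omega
  rcases hS.2.2 (2 * i) hrange h with he | hgap
  · -- 2i+1 = length, so length = 2t-1 and i = t-1
    have hlen' : l.length = 2 * t - 1 := by omega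
    right
    refine ⟨by omega, Or.inr ?_⟩
    unfold dBb
    rw [if_pos hit]
    have h1 : Finset.Ico i (t - 1) = ∅ := by
      rw [show t - 1 = i by omega]; exact Finset.Ico_self i
    rw [h1, Finset.sum_empty, zero_add]
    exact pL_zero hS hlen ht _ (by omega)
  · have hgap' : pL l (2 * i + 1) + 2 ≤ pL l (2 * i) := by
      unfold pL; convert hgap using 2 <;> omega
    have hreca : dBa t l i = (pL l (2 * i) - pL l (2 * i + 1) - 1) + dBa t l (i + 1) := by
      unfold dBa
      rw [Finset.sum_eq_sum_Ico_succ_bot (by omega : i < t)]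
    rcases Nat.lt_or_ge (i + 1) t with h2 | h2
    · left; exact ⟨h2, by omega⟩
    · right; exact ⟨by omega, Or.inl (by omega)⟩

lemma dBmb_spec : ∀ i, mkL l (2 * i + 1) = true →
    i + 1 ≤ t ∧ dBb t l (i + 1) < dBb t l i := by
  intro i h
  have hrange : 2 * i + 1 < l.length := mkL_range hS hlen ht h
  have hit : i + 1 ≤ t := by omega
  refine ⟨hit, ?_⟩
  rcases hS.2.2 (2 * i + 1) hrange h with he | hgap
  · -- 2i+2 = length, so length = 2t and i = t-1
    have hlen' : l.length = 2 * t := by omega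
    have hi : i = t - 1 := by omega
    have h1 : dBb t l (i + 1) = 0 := by
      rw [show i + 1 = t by omega]; exact dBb_top
    have h2 : dBb t l i = pL l (2 * t - 1) := by
      unfold dBb
      rw [if_pos (by omega)]
      have he : Finset.Ico i (t - 1) = ∅ := by
        rw [show t - 1 = i by omega]; exact Finset.Ico_self i
      rw [he, Finset.sum_empty, zero_add]
    have h3 : 1 ≤ pL l (2 * t - 1) := pL_pos hS hlen ht _ (by omega)
    omega
  · have hgap' : pL l (2 * i + 2) + 2 ≤ pL l (2 * i + 1) := by
      unfold pL; convert hgap using 2 <;> omega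
    rcases Nat.lt_or_ge (i + 1) t with h2 | h2
    · have hrecb : dBb t l i = (pL l (2 * i + 1) - pL l (2 * i + 2) - 1) + dBb t l (i + 1) := by
        unfold dBb
        rw [if_pos (by omega), if_pos (by omega),
          Finset.sum_eq_sum_Ico_succ_bot (by omega : i < t - 1)]
        ring
      omega
    · have hi : i = t - 1 := by omega
      have h1 : dBb t l (i + 1) = 0 := by
        rw [show i + 1 = t by omega]; exact dBb_top
      have h2 : dBb t l i = pL l (2 * t - 1) := by
        unfold dBb
        rw [if_pos (by omega)]
        have he : Finset.Ico i (t - 1) = ∅ := by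
          rw [show t - 1 = i by omega]; exact Finset.Ico_self i
        rw [he, Finset.sum_empty, zero_add]
      have h3 : 1 ≤ pL l (2 * t - 1) := by
        apply pL_pos hS hlen ht
        omega
      omega

lemma dB_sum : t ^ 2 + (∑ i ∈ Finset.range t, dBa t l i) + (∑ i ∈ Finset.range t, dBb t l i)
    = schmidtSum 2 (l.map Prod.fst) := by
  unfold schmidtSum
  have hlenm : (l.map Prod.fst).length = l.length := by simp
  rw [hlenm]
  have hstep : ∀ i ∈ Finset.range l.length,
      (if i % 2 = 0 then (l.map Prod.fst).getD i 0 else 0)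
        = (if i % 2 = 0 then pL l i else 0) := by
    intro i _
    rw [map_fst_getD]
    rfl
  rw [Finset.sum_congr rfl hstep]
  have hext : ∑ i ∈ Finset.range l.length, (if i % 2 = 0 then pL l i else 0)
      = ∑ i ∈ Finset.range (2 * t), (if i % 2 = 0 then pL l i else 0) := by
    rcases hlen with h | h
    · rw [h]
    · rw [h]
      conv_rhs => rw [show 2 * t = (2 * t - 1) + 1 by omega, Finset.sum_range_succ]
      rw [if_neg (by omega), add_zero]
  rw [hext, sum_even_odd]
  have hz : ∀ k ∈ Finset.range t,
      (if (2 * k + 1) % 2 = 0 then pL l (2 * k + 1) else 0) = 0 := by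
    intro k _; rw [if_neg (by omega)]
  rw [Finset.sum_congr rfl hz, Finset.sum_const_zero, add_zero]
  have he : ∀ k ∈ Finset.range t,
      (if (2 * k) % 2 = 0 then pL l (2 * k) else 0)
        = dBa t l k + dBb t l k + (2 * t - 1 - 2 * k) := by
    intro k hk
    rw [Finset.mem_range] at hk
    rw [if_pos (by omega), ← reca hS hlen ht k hk]
  rw [Finset.sum_congr rfl he, Finset.sum_add_distrib, Finset.sum_add_distrib, sq_sum']
  omega

lemma dB_cnt : (∑ i ∈ Finset.range t, if mkL l (2 * i) = true then 1 else 0)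
    + (∑ i ∈ Finset.range t, if mkL l (2 * i + 1) = true then 1 else 0)
    = l.countP (fun x => x.2) := by
  rw [countP_eq_sum (0, false)]
  have hstep : ∀ i ∈ Finset.range l.length,
      (if (l.getD i (0, false)).2 = true then (1:ℕ) else 0)
        = (if mkL l i = true then 1 else 0) := by
    intro i _; rfl
  rw [Finset.sum_congr rfl hstep]
  have hext : ∑ i ∈ Finset.range l.length, (if mkL l i = true then (1:ℕ) else 0)
      = ∑ i ∈ Finset.range (2 * t), (if mkL l i = true then 1 else 0) := by
    rcases hlen with h | h
    · rw [h]
    · rw [h]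
      conv_rhs => rw [show 2 * t = (2 * t - 1) + 1 by omega, Finset.sum_range_succ]
      have : mkL l (2 * t - 1) = false := by
        unfold mkL
        rw [List.getD_eq_default _ _ (by omega)]
      rw [this]
      simp
  rw [hext, sum_even_odd]

/-- the decoded middle object -/
def midOfB (hn : schmidtSum 2 (l.map Prod.fst) = n) (hs : l.countP (fun x => x.2) = s) :
    Mid n t s where
  a := dBa t l
  b := dBb t l
  ma := fun i => mkL l (2 * i)
  mb := fun i => mkL l (2 * i + 1)
  ha := dBa_anti
  hb := dBb_anti
  hat := dBa_top
  hbt := dBb_top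
  hma := dBma_spec hS hlen ht
  hmb := dBmb_spec hS hlen ht
  hsum := by rw [dB_sum hS hlen ht, hn]
  hcnt := by rw [dB_cnt hS hlen ht, hs]


end DecB

/-! ## B side roundtrips -/

lemma pL_encB (ht : 1 ≤ t) (m : Mid n t s) :
    ∀ k, k < 2 * t → pL (encB m) k = pB t m.a m.b k := by
  intro k hk
  unfold pL
  rw [getD_encB]
  by_cases h : k < lenB m
  · rw [if_pos h]
  · rw [if_neg h]
    have hL := lenB_ge ht m
    have hk' : k = 2 * t - 1 := by omega
    have hb : m.b (t - 1) = 0 := by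
      by_contra hc
      have : lenB m = 2 * t := by unfold lenB; rw [if_neg hc]
      omega
    rw [hk', pB_last m ht, hb]

lemma dBa_encB (ht : 1 ≤ t) (m : Mid n t s) : dBa t (encB m) = m.a := by
  funext i
  rcases Nat.lt_or_ge i t with hi | hi
  · unfold dBa
    have hstep : ∀ j ∈ Finset.Ico i t,
        pL (encB m) (2 * j) - pL (encB m) (2 * j + 1) - 1 = m.a j - m.a (j + 1) := by
      intro j hj
      rw [Finset.mem_Ico] at hj
      rw [pL_encB ht m (2 * j) (by omega), pL_encB ht m (2 * j + 1) (by omega),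
        pB_even, pB_odd]
      have := m.ha j
      omega
    rw [Finset.sum_congr rfl hstep, tele m.a m.ha i t (by omega), m.hat]
    omega
  · have h1 : dBa t (encB m) i = 0 := by
      unfold dBa
      rw [show Finset.Ico i t = ∅ by rw [Finset.Ico_eq_empty_iff]; omega, Finset.sum_empty]
    rw [h1, m.a_eq_zero hi]

lemma dBb_encB (ht : 1 ≤ t) (m : Mid n t s) : dBb t (encB m) = m.b := by
  funext i
  rcases Nat.lt_or_ge i t with hi | hi
  · unfold dBb
    rw [if_pos hi]
    have hstep : ∀ j ∈ Finset.Ico i (t - 1),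
        pL (encB m) (2 * j + 1) - pL (encB m) (2 * j + 2) - 1 = m.b j - m.b (j + 1) := by
      intro j hj
      rw [Finset.mem_Ico] at hj
      rw [pL_encB ht m (2 * j + 1) (by omega),
        show 2 * j + 2 = 2 * (j + 1) by omega, pL_encB ht m (2 * (j + 1)) (by omega),
        pB_even, pB_odd]
      have := m.hb j
      have := m.ha (j + 1)
      omega
    rw [Finset.sum_congr rfl hstep, tele m.b m.hb i (t - 1) (by omega),
      pL_encB ht m (2 * t - 1) (by omega), pB_last m ht]
    have := m.b_le (show i ≤ t - 1 by omega)
    omega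
  · have h1 : dBb t (encB m) i = 0 := by
      unfold dBb
      rw [if_neg (by omega)]
    rw [h1, m.b_eq_zero hi]

lemma mkL_encB_even (ht : 1 ≤ t) (m : Mid n t s) (i : ℕ) :
    mkL (encB m) (2 * i) = m.ma i := by
  unfold mkL
  rw [getD_encB]
  rcases Nat.lt_or_ge i t with hi | hi
  · rw [if_pos (by have := lenB_ge ht m; omega)]
    exact mkB_even m.ma m.mb i
  · rw [if_neg (by have := lenB_le m; omega), m.ma_eq_false hi]

lemma mkL_encB_odd (ht : 1 ≤ t) (m : Mid n t s) (i : ℕ) :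
    mkL (encB m) (2 * i + 1) = m.mb i := by
  unfold mkL
  rw [getD_encB]
  by_cases h : 2 * i + 1 < lenB m
  · rw [if_pos h]
    exact mkB_odd m.ma m.mb i
  · rw [if_neg h]
    rcases Nat.lt_or_ge i t with hi | hi
    · -- then i = t-1 and lenB = 2t-1, so b (t-1) = 0 and mb (t-1) = false
      have hL := lenB_ge ht m
      have hi' : i = t - 1 := by omega
      have hb : m.b (t - 1) = 0 := by
        by_contra hc
        have : lenB m = 2 * t := by unfold lenB; rw [if_neg hc]
        omega
      by_contra hc
      have hmb : m.mb i = true := by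
        cases hmb : m.mb i
        · rw [hmb] at hc; simp at hc
        · rfl
      obtain ⟨hq1, hq2⟩ := m.hmb i hmb
      have hb1 : m.b (i + 1) = 0 := by
        rw [show i + 1 = t by omega]; exact m.hbt
      have hb2 : m.b i = 0 := by rw [hi']; exact hb
      omega
    · by_contra hc
      have hmb : m.mb i = true := by
        cases hmb : m.mb i
        · rw [hmb] at hc; simp at hc
        · rfl
      rw [m.mb_eq_false hi] at hmb
      simp at hmb

lemma roundtripB1 (ht : 1 ≤ t) (m : Mid n t s)
    (hS : IsStrictOverpartition (encB m))
    (hlen : (encB m).length = 2 * t ∨ (encB m).length = 2 * t - 1)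
    (hn : schmidtSum 2 ((encB m).map Prod.fst) = n)
    (hs : (encB m).countP (fun x => x.2) = s) :
    midOfB hS hlen ht hn hs = m := by
  ext1
  · exact dBa_encB ht m
  · exact dBb_encB ht m
  · funext i; exact mkL_encB_even ht m i
  · funext i; exact mkL_encB_odd ht m i

lemma dBb_top_eq (l : List (ℕ × Bool)) (ht : 1 ≤ t) :
    dBb t l (t - 1) = pL l (2 * t - 1) := by
  unfold dBb
  rw [if_pos (by omega)]
  have h1 : Finset.Ico (t - 1) (t - 1) = ∅ := Finset.Ico_self _
  rw [h1, Finset.sum_empty, zero_add]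

lemma roundtripB2 (ht : 1 ≤ t) (l : List (ℕ × Bool)) (hS : IsStrictOverpartition l)
    (hlen : l.length = 2 * t ∨ l.length = 2 * t - 1)
    (hn : schmidtSum 2 (l.map Prod.fst) = n) (hs : l.countP (fun x => x.2) = s) :
    encB (midOfB hS hlen ht hn hs) = l := by
  set m := midOfB hS hlen ht hn hs with hm
  have hma : m.a = dBa t l := rfl
  have hmb : m.b = dBb t l := rfl
  have hlenB : lenB m = l.length := by
    unfold lenB
    rw [hmb, dBb_top_eq l ht]
    rcases hlen with h | h
    · rw [if_neg (by have := pL_pos hS (Or.inl h) ht (2 * t - 1) (by omega); omega), h]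
    · rw [if_pos (pL_zero hS (Or.inr h) ht (2 * t - 1) (by omega)), h]
  apply List.ext_getElem
  · rw [length_encB, hlenB]
  · intro k h1 h2
    rw [length_encB, hlenB] at h1
    have hgd : (encB m).getD k (0, false) = l.getD k (0, false) := by
      rw [getD_encB, if_pos (by rw [hlenB]; exact h1)]
      have hk2t : k < 2 * t := by
        rcases hlen with h | h <;> omega
      have hfst : pB t m.a m.b k = pL l k := by
        rcases Nat.even_or_odd k with ⟨q, hq⟩ | ⟨q, hq⟩
        · rw [show k = 2 * q by omega, pB_even, hma, hmb]
          exact reca hS hlen ht q (by omega)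
        · rw [show k = 2 * q + 1 by omega, pB_odd, hma, hmb]
          exact recb hS hlen ht q (by omega)
      have hsnd : mkB m.ma m.mb k = mkL l k := by
        rcases Nat.even_or_odd k with ⟨q, hq⟩ | ⟨q, hq⟩
        · rw [show k = 2 * q by omega, mkB_even]; rfl
        · rw [show k = 2 * q + 1 by omega, mkB_odd]; rfl
      rw [hfst] at *
      unfold pL mkL at *
      rw [List.getD_eq_getElem _ _ h2] at *
      ext
      · simpa using hfst
      · simpa using hsnd
    rw [List.getD_eq_getElem _ _ h2] at hgd
    rw [← hgd, List.getD_eq_getElem]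

/-- The Schmidt-side equivalence. -/
def equivB (n t s : ℕ) (ht : 1 ≤ t) :
    Mid n t s ≃ {l : List (ℕ × Bool) // IsStrictOverpartition l ∧
        schmidtSum 2 (l.map Prod.fst) = n ∧ l.countP (fun x => x.2) = s ∧
        (l.length = 2 * t ∨ l.length = 2 * t - 1)} where
  toFun m := ⟨encB m,
    ⟨⟨encB_sorted ht m, encB_pos ht m, encB_overline ht m⟩,
      encB_schmidtSum ht m, encB_countP ht m, by
        rw [length_encB]; unfold lenB; split
        · right; rfl
        · left; rfl⟩⟩
  invFun x := midOfB x.2.1 x.2.2.2.2 ht x.2.2.1 x.2.2.2.1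
  left_inv m := by
    apply roundtripB1
  right_inv x := by
    apply Subtype.ext
    exact roundtripB2 ht x.1 x.2.1 x.2.2.2.2 x.2.2.1 x.2.2.2.1

/-! ## A side: overpartitions -/

def legval (t : ℕ) (b : ℕ → ℕ) (k : ℕ) : ℕ :=
  ∑ i ∈ Finset.range t, if k + 1 ≤ b i then 1 else 0

def legmark (t : ℕ) (b : ℕ → ℕ) (mb : ℕ → Bool) (k : ℕ) : Bool :=
  if b (legval t b k - 1) = k + 1 then mb (legval t b k - 1) else false

lemma legval_le (t : ℕ) (b : ℕ → ℕ) (k : ℕ) : legval t b k ≤ t := by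
  unfold legval
  calc ∑ i ∈ Finset.range t, (if k + 1 ≤ b i then 1 else 0)
      ≤ ∑ i ∈ Finset.range t, 1 := Finset.sum_le_sum (fun i _ => by split <;> omega)
    _ = t := by simp

lemma legval_anti (t : ℕ) (b : ℕ → ℕ) (k : ℕ) : legval t b (k + 1) ≤ legval t b k :=
  Finset.sum_le_sum (fun i _ => by split <;> split <;> omega)

lemma legval_anti' (t : ℕ) (b : ℕ → ℕ) {k k' : ℕ} (h : k ≤ k') :
    legval t b k' ≤ legval t b k :=
  anti_le (legval t b) (legval_anti t b) k k' h

/-- the key conjugation fact -/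
lemma legval_iff {t : ℕ} (b : ℕ → ℕ) (hb : ∀ i, b (i + 1) ≤ b i) {j : ℕ} (hj : j < t)
    (k : ℕ) : k + 1 ≤ b j ↔ j + 1 ≤ legval t b k := by
  constructor
  · intro h
    have h1 : ∀ i ∈ Finset.range (j + 1), (1:ℕ) = if k + 1 ≤ b i then 1 else 0 := by
      intro i hi
      rw [Finset.mem_range] at hi
      have := anti_le b hb i j (by omega)
      rw [if_pos (by omega)]
    calc j + 1 = ∑ i ∈ Finset.range (j + 1), 1 := by simp
      _ = ∑ i ∈ Finset.range (j + 1), (if k + 1 ≤ b i then 1 else 0) :=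
          Finset.sum_congr rfl h1
      _ ≤ legval t b k := Finset.sum_le_sum_of_subset
          (by rw [Finset.range_subset_range]; omega)
  · intro h
    by_contra hc
    push_neg at hc
    have h0 : ∀ i ∈ Finset.Ico j t, (if k + 1 ≤ b i then (1:ℕ) else 0) = 0 := by
      intro i hi
      rw [Finset.mem_Ico] at hi
      have := anti_le b hb j i hi.1
      rw [if_neg (by omega)]
    have h1 : legval t b k = ∑ i ∈ Finset.Ico 0 j, (if k + 1 ≤ b i then 1 else 0) := by
      unfold legval
      rw [Finset.range_eq_Ico, ← Finset.sum_Ico_consecutive _ (Nat.zero_le j) (le_of_lt hj),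
        Finset.sum_congr rfl h0, Finset.sum_const_zero, add_zero]
    have h2 : ∑ i ∈ Finset.Ico 0 j, (if k + 1 ≤ b i then (1:ℕ) else 0)
        ≤ ∑ i ∈ Finset.Ico 0 j, 1 := Finset.sum_le_sum (fun i _ => by split <;> omega)
    simp only [Finset.sum_const, smul_eq_mul, mul_one, Nat.card_Ico, Nat.sub_zero] at h2
    omega

/-- legval at a step -/
lemma legval_step {t : ℕ} (b : ℕ → ℕ) (hb : ∀ i, b (i + 1) ≤ b i) (hbt : b t = 0)
    {i : ℕ} (hi : i < t) (hstep : b (i + 1) < b i) :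
    legval t b (b i - 1) = i + 1 := by
  have h1 : i + 1 ≤ legval t b (b i - 1) := by
    rw [← legval_iff b hb hi]
    omega
  have h2 : legval t b (b i - 1) ≤ i + 1 := by
    by_contra hc
    push_neg at hc
    rcases Nat.lt_or_ge (i + 1) t with h3 | h3
    · have hc' : (i + 1) + 1 ≤ legval t b (b i - 1) := by omega
      rw [← legval_iff b hb h3] at hc'
      omega
    · have := legval_le t b (b i - 1)
      omega
  omega

variable {n t s : ℕ}

def encA (m : Mid n t s) : List (ℕ × Bool) :=
  (List.range t).map (fun i => (t + m.a i, m.ma i))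
    ++ (List.range (m.b 0)).map (fun k => (legval t m.b k, legmark t m.b m.mb k))

lemma length_encA (m : Mid n t s) : (encA m).length = t + m.b 0 := by
  simp [encA]

lemma getD_encA (m : Mid n t s) (k : ℕ) :
    (encA m).getD k (0, false) =
      if k < t then (t + m.a k, m.ma k)
      else if k < t + m.b 0 then
        (legval t m.b (k - t), legmark t m.b m.mb (k - t))
      else (0, false) := by
  unfold encA
  by_cases h : k < t
  · rw [List.getD_append _ _ _ _ (by simpa using h), getD_range_map, if_pos h, if_pos h]
  · rw [if_neg h]
    by_cases h2 : k < t + m.b 0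
    · rw [if_pos h2]
      rw [List.getD_eq_getElem _ _ (by simp; omega)]
      rw [List.getElem_append_right (by simpa using h)]
      simp only [List.length_map, List.length_range]
      rw [List.getElem_map, List.getElem_range]
    · rw [if_neg h2, List.getD_eq_default _ _ (by simp; omega)]

lemma legval_pos (ht : 1 ≤ t) (m : Mid n t s) {k : ℕ} (hk : k < m.b 0) :
    1 ≤ legval t m.b k := by
  rw [← legval_iff m.b m.hb (show 0 < t by omega) k] at *
  omega

lemma encA_sorted (ht : 1 ≤ t) (m : Mid n t s) :
    ((encA m).map Prod.fst).Pairwise (· ≥ ·) := by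
  rw [List.pairwise_iff_getElem]
  intro i j hi hj hij
  have hlen : ((encA m).map Prod.fst).length = t + m.b 0 := by simp [encA]
  rw [hlen] at hi hj
  have hgi : i < (encA m).length := by rw [length_encA]; omega
  have hgj : j < (encA m).length := by rw [length_encA]; omega
  rw [List.getElem_map, List.getElem_map]
  show (encA m)[j].1 ≤ (encA m)[i].1
  have ei : (encA m)[i] = (encA m).getD i (0, false) := by
    rw [List.getD_eq_getElem _ _ hgi]
  have ej : (encA m)[j] = (encA m).getD j (0, false) := by
    rw [List.getD_eq_getElem _ _ hgj]
  rw [ei, ej, getD_encA, getD_encA]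
  by_cases h1 : j < t
  · rw [if_pos h1, if_pos (by omega)]
    have := m.a_le (show i ≤ j by omega)
    simp only []
    omega
  · rw [if_neg h1, if_pos (by omega)]
    by_cases h2 : i < t
    · rw [if_pos h2]
      have := legval_le t m.b (j - t)
      simp only []
      omega
    · rw [if_neg h2, if_pos (by omega)]
      have := legval_anti' t m.b (show i - t ≤ j - t by omega)
      simp only []
      omega

lemma encA_pos (ht : 1 ≤ t) (m : Mid n t s) : ∀ x ∈ encA m, 0 < x.1 := by
  intro x hx
  rw [List.mem_iff_getElem] at hx
  obtain ⟨k, hk, rfl⟩ := hx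
  rw [length_encA] at hk
  rw [← List.getD_eq_getElem _ (0, false) (by rw [length_encA]; omega), getD_encA]
  by_cases h : k < t
  · rw [if_pos h]; simp only []; omega
  · rw [if_neg h, if_pos (by omega)]
    have := legval_pos ht m (show k - t < m.b 0 by omega)
    simp only []
    omega

lemma countP_range (L : ℕ) (p : ℕ → Bool) :
    (List.range L).countP p = ∑ i ∈ Finset.range L, if p i = true then 1 else 0 := by
  induction L with
  | zero => simp
  | succ L ih =>
      rw [List.range_succ, List.countP_append, Finset.sum_range_succ, ih]
      simp [List.countP_cons]

lemma legval_zero_lt (ht : 1 ≤ t) (m : Mid n t s) (hb : m.b (t - 1) = 0) :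
    legval t m.b 0 < t := by
  unfold legval
  have key : ∑ i ∈ Finset.range t, (if 0 + 1 ≤ m.b i then (1:ℕ) else 0)
      = ∑ i ∈ Finset.range (t - 1), (if 0 + 1 ≤ m.b i then (1:ℕ) else 0)
        + (if 0 + 1 ≤ m.b (t - 1) then (1:ℕ) else 0) := by
    rw [← Finset.sum_range_succ, show t - 1 + 1 = t by omega]
  rw [key, if_neg (by omega)]
  have h2 : ∑ i ∈ Finset.range (t - 1), (if 0 + 1 ≤ m.b i then (1:ℕ) else 0)
      ≤ ∑ i ∈ Finset.range (t - 1), 1 := Finset.sum_le_sum (fun i _ => by split <;> omega)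
  simp only [Finset.sum_const, smul_eq_mul, mul_one, Finset.card_range] at h2
  omega

lemma legmark_elim {m : Mid n t s} {k : ℕ} (h : legmark t m.b m.mb k = true) :
    m.b (legval t m.b k - 1) = k + 1 ∧ m.mb (legval t m.b k - 1) = true := by
  unfold legmark at h
  split at h
  · exact ⟨‹_›, h⟩
  · simp at h

lemma encA_overline (ht : 1 ≤ t) (m : Mid n t s) :
    ∀ i, i + 1 < (encA m).length → ((encA m).getD i (0, false)).2 = true →
      ((encA m).getD (i + 1) (0, false)).1 < ((encA m).getD i (0, false)).1 := by
  intro i hi hmk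
  rw [length_encA] at hi
  rw [getD_encA] at hmk ⊢
  rw [getD_encA]
  by_cases h1 : i < t
  · rw [if_pos h1] at hmk ⊢
    simp only [] at hmk
    rcases m.hma i hmk with ⟨hq1, hq2⟩ | ⟨hq1, hq2⟩
    · rw [if_pos (by omega)]
      simp only []
      omega
    · -- i + 1 = t
      rw [if_neg (by omega), if_pos (by omega)]
      simp only []
      rcases hq2 with hq2 | hq2
      · have := legval_le t m.b (i + 1 - t)
        omega
      · have := legval_zero_lt ht m (by rw [show t - 1 = i by omega]; exact hq2)
        have he : i + 1 - t = 0 := by omega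
        rw [he]
        omega
  · rw [if_neg h1, if_pos (by omega)] at hmk
    simp only [] at hmk
    obtain ⟨hc1, hc2⟩ := legmark_elim hmk
    rw [if_neg (by omega), if_pos (by omega), if_neg h1, if_pos (by omega)]
    simp only []
    set k := i - t with hk
    have hv1 : 1 ≤ legval t m.b k := legval_pos ht m (by omega)
    have hv2 : legval t m.b k ≤ t := legval_le t m.b k
    have hnext : legval t m.b (k + 1) < legval t m.b k := by
      have hj : legval t m.b k - 1 < t := by omega
      have hiff := legval_iff m.b m.hb hj (k + 1)
      rw [hc1] at hiff
      have : ¬ (k + 1 + 1 ≤ k + 1) := by omega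
      rw [hiff] at this
      omega
    have he : i + 1 - t = k + 1 := by omega
    rw [he]
    exact hnext

lemma encA_durfee (ht : 1 ≤ t) (m : Mid n t s) :
    HasDurfeeSide ((encA m).map Prod.fst) t := by
  have hlen : ((encA m).map Prod.fst).length = t + m.b 0 := by simp [encA]
  constructor
  · constructor
    · rw [hlen]; omega
    · intro i hi
      rw [map_fst_getD, getD_encA, if_pos hi]
      simp only []
      omega
  · rintro ⟨hL, hall⟩
    rw [hlen] at hL
    have := hall t (by omega)
    rw [map_fst_getD, getD_encA, if_neg (by omega), if_pos (by omega)] at this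
    simp only [Nat.sub_self] at this
    have := legval_le t m.b 0
    omega

lemma encA_sum (ht : 1 ≤ t) (m : Mid n t s) :
    ((encA m).map Prod.fst).sum = n := by
  rw [sum_fst_eq_sum, length_encA]
  rw [Finset.range_eq_Ico, ← Finset.sum_Ico_consecutive _ (Nat.zero_le t) (by omega : t ≤ t + m.b 0),
    ← Finset.range_eq_Ico, Finset.sum_Ico_eq_sum_range]
  have h1 : ∀ i ∈ Finset.range t, ((encA m).getD i (0, false)).1 = t + m.a i := by
    intro i hi
    rw [Finset.mem_range] at hi
    rw [getD_encA, if_pos hi]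
  have h2 : ∀ k ∈ Finset.range (t + m.b 0 - t), ((encA m).getD (t + k) (0, false)).1
      = legval t m.b k := by
    intro k hk
    rw [Finset.mem_range] at hk
    rw [getD_encA, if_neg (by omega), if_pos (by omega)]
    simp only [Nat.add_sub_cancel_left]
  rw [Finset.sum_congr rfl h1, Finset.sum_congr rfl h2]
  have h3 : ∑ k ∈ Finset.range (t + m.b 0 - t), legval t m.b k
      = ∑ i ∈ Finset.range t, m.b i := by
    unfold legval
    rw [Finset.sum_comm]
    apply Finset.sum_congr rfl
    intro i hi
    rw [Finset.mem_range] at hi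
    rw [show t + m.b 0 - t = m.b 0 by omega, sum_ind_min]
    have := m.b_le (Nat.zero_le i)
    omega
  rw [h3, Finset.sum_add_distrib]
  have h4 : ∑ _i ∈ Finset.range t, t = t * t := by
    rw [Finset.sum_const, smul_eq_mul, Finset.card_range]
  rw [h4]
  have := m.hsum
  have ht2 : t ^ 2 = t * t := by ring
  omega

lemma legmark_count (ht : 1 ≤ t) (m : Mid n t s) :
    (∑ k ∈ Finset.range (m.b 0), if legmark t m.b m.mb k = true then 1 else 0)
      = ∑ i ∈ Finset.range t, if m.mb i = true then 1 else 0 := by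
  rw [← Finset.card_filter, ← Finset.card_filter]
  apply Finset.card_bij' (fun k _ => legval t m.b k - 1) (fun i _ => m.b i - 1)
  · intro k hk
    rw [Finset.mem_filter, Finset.mem_range] at hk
    obtain ⟨hk1, hk2⟩ := hk
    obtain ⟨hc1, hc2⟩ := legmark_elim hk2
    rw [Finset.mem_filter, Finset.mem_range]
    have hv1 : 1 ≤ legval t m.b k := legval_pos ht m hk1
    have hv2 : legval t m.b k ≤ t := legval_le t m.b k
    exact ⟨by omega, hc2⟩
  · intro i hi
    rw [Finset.mem_filter, Finset.mem_range] at hi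
    obtain ⟨hi1, hi2⟩ := hi
    obtain ⟨hm1, hm2⟩ := m.hmb i hi2
    rw [Finset.mem_filter, Finset.mem_range]
    have hb1 : m.b i ≤ m.b 0 := m.b_le (Nat.zero_le i)
    constructor
    · omega
    · have hls := legval_step m.b m.hb m.hbt (show i < t by omega) hm2
      unfold legmark
      rw [hls]
      simp only [Nat.add_sub_cancel]
      rw [show m.b i - 1 + 1 = m.b i by omega, if_pos rfl]
      exact hi2
  · intro k hk
    rw [Finset.mem_filter, Finset.mem_range] at hk
    obtain ⟨hc1, _⟩ := legmark_elim hk.2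
    rw [hc1]
    omega
  · intro i hi
    rw [Finset.mem_filter, Finset.mem_range] at hi
    obtain ⟨hm1, hm2⟩ := m.hmb i hi.2
    have hls := legval_step m.b m.hb m.hbt (show i < t by omega) hm2
    rw [hls]
    omega

lemma encA_countP (ht : 1 ≤ t) (m : Mid n t s) :
    (encA m).countP (fun x => x.2) = s := by
  unfold encA
  rw [List.countP_append, List.countP_map, List.countP_map, countP_range, countP_range]
  have e1 : ∀ i ∈ Finset.range t,
      (if ((fun (x : ℕ × Bool) => x.2) ∘ (fun i => (t + m.a i, m.ma i))) i = true then (1:ℕ) else 0)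
        = (if m.ma i = true then 1 else 0) := fun i _ => rfl
  have e2 : ∀ k ∈ Finset.range (m.b 0),
      (if ((fun (x : ℕ × Bool) => x.2) ∘ (fun k => (legval t m.b k, legmark t m.b m.mb k))) k = true then (1:ℕ) else 0)
        = (if legmark t m.b m.mb k = true then 1 else 0) := fun k _ => rfl
  rw [Finset.sum_congr rfl e1, Finset.sum_congr rfl e2, legmark_count ht m]
  exact m.hcnt

/-! ## A side: decoding -/

def dAa (t : ℕ) (l : List (ℕ × Bool)) (i : ℕ) : ℕ := if i < t then pL l i - t else 0

def dAb (t : ℕ) (l : List (ℕ × Bool)) (i : ℕ) : ℕ :=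
  if i < t then (l.drop t).countP (fun x => decide (i + 1 ≤ x.1)) else 0

def dAma (t : ℕ) (l : List (ℕ × Bool)) (i : ℕ) : Bool := if i < t then mkL l i else false

def dAmb (t : ℕ) (l : List (ℕ × Bool)) (i : ℕ) : Bool :=
  if i < t ∧ dAb t l (i + 1) < dAb t l i then mkL l (t + dAb t l i - 1) else false

lemma getD_drop (l : List (ℕ × Bool)) (t k : ℕ) (d : ℕ × Bool) :
    (l.drop t).getD k d = l.getD (t + k) d := by
  by_cases h : k < (l.drop t).length
  · rw [List.getD_eq_getElem _ _ h,
      List.getD_eq_getElem _ _ (by rw [List.length_drop] at h; omega),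
      List.getElem_drop]
  · rw [List.length_drop] at h
    rw [List.getD_eq_default _ _ (by rw [List.length_drop]; omega),
      List.getD_eq_default _ _ (by omega)]

lemma sum_eq_sum_countP (T : ℕ) : ∀ (L : List (ℕ × Bool)), (∀ x ∈ L, x.1 ≤ T) →
    (L.map Prod.fst).sum = ∑ i ∈ Finset.range T, L.countP (fun x => decide (i + 1 ≤ x.1)) := by
  intro L
  induction L with
  | nil => simp
  | cons x L ih =>
      intro hle
      rw [List.map_cons, List.sum_cons, ih (fun y hy => hle y (List.mem_cons_of_mem x hy))]
      have h1 : ∀ i ∈ Finset.range T,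
          (x :: L).countP (fun x => decide (i + 1 ≤ x.1))
            = L.countP (fun x => decide (i + 1 ≤ x.1)) + (if i + 1 ≤ x.1 then 1 else 0) := by
        intro i _
        rw [List.countP_cons]
        congr 1
        by_cases h : i + 1 ≤ x.1
        · rw [if_pos h, if_pos (by simpa using h)]
        · rw [if_neg h, if_neg (by simpa using h)]
      rw [Finset.sum_congr rfl h1, Finset.sum_add_distrib, sum_ind_min]
      have := hle x List.mem_cons_self
      have hmin : min x.1 T = x.1 := by omega
      omega

section DecA

variable {l : List (ℕ × Bool)} (hO : IsOverpartition l)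
  (hD : HasDurfeeSide (l.map Prod.fst) t) (ht : 1 ≤ t)

include hO hD ht

lemma hAlen : t ≤ l.length := by
  have := hD.1.1
  simpa using this

lemma hAq : ∀ i < t, t ≤ pL l i := by
  intro i hi
  have := hD.1.2 i hi
  rwa [map_fst_getD] at this

lemma pLq_pos (k : ℕ) (h : k < l.length) : 1 ≤ pL l k := by
  unfold pL
  rw [List.getD_eq_getElem _ _ h]
  exact hO.2.1 _ (List.getElem_mem h)

lemma hAleg : ∀ k, t ≤ k → pL l k ≤ t := by
  have hlen := hAlen hO hD ht
  intro k hk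
  by_cases h : k < l.length
  · have h1 : pL l t ≤ t := by
      by_contra hc
      push_neg at hc
      apply hD.2
      constructor
      · simp only [List.length_map]; omega
      · intro i hi
        rw [map_fst_getD]
        calc t + 1 ≤ pL l t := hc
          _ ≤ (l.getD i (0, false)).1 := sorted_getD_le l hO.1 (by omega) (by omega)
    calc pL l k ≤ pL l t := sorted_getD_le l hO.1 hk h
      _ ≤ t := h1
  · unfold pL
    rw [List.getD_eq_default _ _ (by omega)]
    omega

lemma hAdropsorted : ((l.drop t).map Prod.fst).Pairwise (· ≥ ·) := by
  rw [List.map_drop]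
  exact List.Pairwise.sublist (List.drop_sublist t _) hO.1

/-- count/getElem interface on the legs -/
lemma hApre : ∀ v k, k < l.length - t →
    ((k + 1 ≤ (l.drop t).countP (fun x => decide (v ≤ x.1))) ↔ v ≤ pL l (t + k)) := by
  intro v k hk
  have := sorted_countP_iff (l.drop t) (hAdropsorted hO hD ht) v k
    (by rw [List.length_drop]; omega)
  rw [getD_drop] at this
  exact this

lemma dAb_eq (i : ℕ) (hi : i < t) :
    dAb t l i = (l.drop t).countP (fun x => decide (i + 1 ≤ x.1)) := by
  unfold dAb; rw [if_pos hi]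

omit hO hD ht in
lemma dAb_le_len : ∀ i, dAb t l i ≤ l.length - t := by
  intro i
  unfold dAb
  split
  · calc (l.drop t).countP _ ≤ (l.drop t).length := List.countP_le_length
      _ = l.length - t := List.length_drop
  · omega

/-- the two key facts about a marked leg -/
lemma keyA1 {k : ℕ} (hk : k < l.length - t) (hmk : mkL l (t + k) = true) :
    dAb t l (pL l (t + k) - 1) = k + 1 ∧ dAb t l (pL l (t + k)) ≤ k := by
  have hlen := hAlen hO hD ht
  have hv1 : 1 ≤ pL l (t + k) := pLq_pos hO hD ht _ (by omega)
  have hv2 : pL l (t + k) ≤ t := hAleg hO hD ht _ (by omega)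
  set v := pL l (t + k) with hv
  have h1 : dAb t l (v - 1) = (l.drop t).countP (fun x => decide (v ≤ x.1)) := by
    rw [dAb_eq hO hD ht (v - 1) (by omega), show v - 1 + 1 = v by omega]
  have hge : k + 1 ≤ (l.drop t).countP (fun x => decide (v ≤ x.1)) := by
    rw [hApre hO hD ht v k hk]
  have hle : (l.drop t).countP (fun x => decide (v ≤ x.1)) ≤ k + 1 := by
    by_contra hc
    push_neg at hc
    have hk1 : k + 1 < l.length - t := by
      have := List.countP_le_length (p := fun x => decide (v ≤ x.1)) (l := l.drop t)
      rw [List.length_drop] at this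
      omega
    have : v ≤ pL l (t + (k + 1)) := by
      rw [← hApre hO hD ht v (k + 1) hk1]
      omega
    have hstrict : pL l (t + k + 1) < pL l (t + k) :=
      hO.2.2 (t + k) (by omega) hmk
    have he : t + (k + 1) = t + k + 1 := by omega
    rw [he] at this
    omega
  constructor
  · omega
  · rcases Nat.lt_or_ge v t with hvt | hvt
    · rw [dAb_eq hO hD ht v hvt]
      by_contra hc
      push_neg at hc
      have : v + 1 ≤ pL l (t + k) := by
        rw [← hApre hO hD ht (v + 1) k hk]
        omega
      omega
    · have : dAb t l v = 0 := by unfold dAb; rw [if_neg (by omega)]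
      omega

lemma keyA2 {i : ℕ} (hi : i < t) (hstep : dAb t l (i + 1) < dAb t l i) :
    pL l (t + (dAb t l i - 1)) = i + 1 ∧ dAb t l i - 1 < l.length - t := by
  have hlen := hAlen hO hD ht
  have hb1 : 1 ≤ dAb t l i := by omega
  have hble := dAb_le_len (l := l) (t := t) i
  set k := dAb t l i - 1 with hk
  have hkl : k < l.length - t := by omega
  have hge : i + 1 ≤ pL l (t + k) := by
    rw [← hApre hO hD ht (i + 1) k hkl, ← dAb_eq hO hD ht i hi]
    omega
  have hlt : pL l (t + k) < i + 2 := by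
    by_contra hc
    push_neg at hc
    have h2 : k + 1 ≤ (l.drop t).countP (fun x => decide (i + 2 ≤ x.1)) := by
      rw [hApre hO hD ht (i + 2) k hkl]
      exact hc
    have h3 : (l.drop t).countP (fun x => decide (i + 2 ≤ x.1)) ≤ dAb t l (i + 1) := by
      rcases Nat.lt_or_ge (i + 1) t with h4 | h4
      · rw [dAb_eq hO hD ht (i + 1) h4]
      · -- i + 1 = t: all parts of the legs are ≤ t < i + 2, so the count is 0
        have h5 : (l.drop t).countP (fun x => decide (i + 2 ≤ x.1)) = 0 := by
          rw [List.countP_eq_zero]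
          intro x hx
          rw [List.mem_iff_getElem] at hx
          obtain ⟨j, hj, rfl⟩ := hx
          rw [List.length_drop] at hj
          have : (l.drop t)[j] = (l.drop t).getD j (0, false) := by
            rw [List.getD_eq_getElem _ _ (by rw [List.length_drop]; omega)]
          rw [this, getD_drop]
          have := hAleg hO hD ht (t + j) (by omega)
          simp only [decide_eq_true_eq]
          unfold pL at this
          omega
        omega
    omega
  exact ⟨by omega, hkl⟩

end DecA

section DecA2

variable {l : List (ℕ × Bool)} (hO : IsOverpartition l)
  (hD : HasDurfeeSide (l.map Prod.fst) t) (ht : 1 ≤ t)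

include hO hD ht

lemma dAa_anti : ∀ i, dAa t l (i + 1) ≤ dAa t l i := by
  intro i
  unfold dAa
  by_cases h : i + 1 < t
  · rw [if_pos h, if_pos (by omega)]
    have h1 : pL l (i + 1) ≤ pL l i := sorted_getD_le l hO.1 (by omega)
      (show i + 1 < l.length by have := hAlen hO hD ht; omega)
    have h2 := hAq hO hD ht i (by omega)
    omega
  · rw [if_neg h]
    omega

omit hO hD ht in
lemma dAb_anti : ∀ i, dAb t l (i + 1) ≤ dAb t l i := by
  intro i
  unfold dAb
  by_cases h : i + 1 < t
  · rw [if_pos h, if_pos (by omega)]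
    apply List.countP_mono_left
    intro x _ hx
    simp only [decide_eq_true_eq] at hx ⊢
    omega
  · rw [if_neg h]
    omega

lemma dAma_spec : ∀ i, dAma t l i = true →
    (i + 1 < t ∧ dAa t l (i + 1) < dAa t l i) ∨
    (i + 1 = t ∧ (1 ≤ dAa t l i ∨ dAb t l i = 0)) := by
  intro i h
  unfold dAma at h
  split at h
  case isFalse => simp at h
  case isTrue hit =>
  have hlen := hAlen hO hD ht
  rcases Nat.lt_or_ge (i + 1) t with h1 | h1
  · left
    refine ⟨h1, ?_⟩
    have hstrict : pL l (i + 1) < pL l i := hO.2.2 i (by omega) h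
    have := hAq hO hD ht (i + 1) h1
    unfold dAa
    rw [if_pos h1, if_pos (by omega)]
    omega
  · right
    have hteq : i + 1 = t := by omega
    refine ⟨hteq, ?_⟩
    by_cases ha : 1 ≤ dAa t l i
    · exact Or.inl ha
    · right
      have hpli : pL l i = t := by
        have h2 := hAq hO hD ht i hit
        unfold dAa at ha
        rw [if_pos hit] at ha
        omega
      rw [dAb_eq hO hD ht i hit, List.countP_eq_zero]
      intro x hx
      rw [List.mem_iff_getElem] at hx
      obtain ⟨j, hj, rfl⟩ := hx
      rw [List.length_drop] at hj
      have he : (l.drop t)[j] = (l.drop t).getD j (0, false) := by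
        rw [List.getD_eq_getElem _ _ (by rw [List.length_drop]; omega)]
      have hstrict : pL l (i + 1) < pL l i := hO.2.2 i (by omega) h
      have hle : pL l (t + j) ≤ pL l t :=
        sorted_getD_le l hO.1 (by omega) (by omega)
      rw [he, getD_drop]
      simp only [decide_eq_true_eq]
      show ¬ (i + 1 ≤ pL l (t + j))
      rw [hteq] at hstrict ⊢
      omega

omit hO hD ht in
lemma dAmb_spec : ∀ i, dAmb t l i = true → i + 1 ≤ t ∧ dAb t l (i + 1) < dAb t l i := by
  intro i h
  unfold dAmb at h
  split at h
  case isTrue hg => exact ⟨by omega, hg.2⟩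
  case isFalse => simp at h

lemma dA_sum : t ^ 2 + (∑ i ∈ Finset.range t, dAa t l i) + (∑ i ∈ Finset.range t, dAb t l i)
    = (l.map Prod.fst).sum := by
  have hlen := hAlen hO hD ht
  rw [sum_fst_eq_sum]
  rw [Finset.range_eq_Ico (a := l.length), ← Finset.sum_Ico_consecutive _ (Nat.zero_le t) hlen,
    ← Finset.range_eq_Ico, Finset.sum_Ico_eq_sum_range]
  have h1 : ∀ i ∈ Finset.range t, (l.getD i (0, false)).1 = t + dAa t l i := by
    intro i hi
    rw [Finset.mem_range] at hi
    have := hAq hO hD ht i hi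
    unfold dAa
    rw [if_pos hi]
    unfold pL at *
    omega
  rw [Finset.sum_congr rfl h1, Finset.sum_add_distrib]
  have h2 : ∀ k ∈ Finset.range (l.length - t),
      (l.getD (t + k) (0, false)).1 = ((l.drop t).getD k (0, false)).1 := by
    intro k _
    rw [getD_drop]
  rw [Finset.sum_congr rfl h2]
  have h3 : ∑ k ∈ Finset.range (l.length - t), ((l.drop t).getD k (0, false)).1
      = ((l.drop t).map Prod.fst).sum := by
    rw [sum_fst_eq_sum, List.length_drop]
  rw [h3, sum_eq_sum_countP t (l.drop t)]
  · have h4 : ∀ i ∈ Finset.range t,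
        (l.drop t).countP (fun x => decide (i + 1 ≤ x.1)) = dAb t l i := by
      intro i hi
      rw [Finset.mem_range] at hi
      rw [dAb_eq hO hD ht i hi]
    rw [Finset.sum_congr rfl h4]
    have h5 : ∑ _i ∈ Finset.range t, t = t * t := by
      rw [Finset.sum_const, smul_eq_mul, Finset.card_range]
    rw [h5]
    have : t ^ 2 = t * t := by ring
    have heta : (Finset.range t).sum (dAb t l) = ∑ i ∈ Finset.range t, dAb t l i := rfl
    omega
  · intro x hx
    rw [List.mem_iff_getElem] at hx
    obtain ⟨j, hj, rfl⟩ := hx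
    rw [List.length_drop] at hj
    have he : (l.drop t)[j] = (l.drop t).getD j (0, false) := by
      rw [List.getD_eq_getElem _ _ (by rw [List.length_drop]; omega)]
    rw [he, getD_drop]
    exact hAleg hO hD ht (t + j) (by omega)

omit hO hD ht in
lemma getD_take (l : List (ℕ × Bool)) (t k : ℕ) (hk : k < t) (hk2 : k < l.length) :
    (l.take t).getD k (0, false) = l.getD k (0, false) := by
  rw [List.getD_eq_getElem _ _ (by rw [List.length_take]; omega),
    List.getD_eq_getElem _ _ hk2]
  exact List.getElem_take

lemma dA_cnt : (∑ i ∈ Finset.range t, if dAma t l i = true then 1 else 0)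
    + (∑ i ∈ Finset.range t, if dAmb t l i = true then 1 else 0)
    = l.countP (fun x => x.2) := by
  have hlen := hAlen hO hD ht
  conv_rhs => rw [← List.take_append_drop t l, List.countP_append]
  have e1 : (l.take t).countP (fun x => x.2)
      = ∑ i ∈ Finset.range t, if dAma t l i = true then 1 else 0 := by
    rw [countP_eq_sum (0, false), List.length_take, show t ⊓ l.length = t by omega]
    apply Finset.sum_congr rfl
    intro i hi
    rw [Finset.mem_range] at hi
    rw [getD_take l t i hi (by omega)]
    unfold dAma mkL
    rw [if_pos hi]
  have e2 : (l.drop t).countP (fun x => x.2)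
      = ∑ k ∈ Finset.range (l.length - t), if mkL l (t + k) = true then 1 else 0 := by
    rw [countP_eq_sum (0, false), List.length_drop]
    apply Finset.sum_congr rfl
    intro k _
    rw [getD_drop]
    rfl
  rw [e1, e2]
  have e3 : ∑ k ∈ Finset.range (l.length - t), (if mkL l (t + k) = true then (1:ℕ) else 0)
      = ∑ i ∈ Finset.range t, if dAmb t l i = true then 1 else 0 := by
    rw [← Finset.card_filter, ← Finset.card_filter]
    apply Finset.card_bij' (fun k _ => pL l (t + k) - 1) (fun i _ => dAb t l i - 1)
    · intro k hk
      rw [Finset.mem_filter, Finset.mem_range] at hk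
      obtain ⟨hk1, hk2⟩ := hk
      rw [Finset.mem_filter, Finset.mem_range]
      obtain ⟨hc1, hc2⟩ := keyA1 hO hD ht hk1 hk2
      have hv1 : 1 ≤ pL l (t + k) := pLq_pos hO hD ht _ (by omega)
      have hv2 : pL l (t + k) ≤ t := hAleg hO hD ht _ (by omega)
      constructor
      · omega
      · unfold dAmb
        rw [if_pos ⟨by omega, by rw [show pL l (t + k) - 1 + 1 = pL l (t + k) by omega]; omega⟩]
        rw [hc1, show t + (k + 1) - 1 = t + k by omega]
        exact hk2
    · intro i hi
      rw [Finset.mem_filter, Finset.mem_range] at hi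
      obtain ⟨hi1, hi2⟩ := hi
      obtain ⟨hg, hstep⟩ := by
        have := dAmb_spec (l := l) (t := t) i hi2
        exact this
      rw [Finset.mem_filter, Finset.mem_range]
      obtain ⟨hk1, hk2⟩ := keyA2 hO hD ht hi1 hstep
      constructor
      · exact hk2
      · have hmk : mkL l (t + dAb t l i - 1) = true := by
          unfold dAmb at hi2
          split at hi2
          · exact hi2
          · simp at hi2
        rw [show t + (dAb t l i - 1) = t + dAb t l i - 1 by omega]
        exact hmk
    · intro k hk
      rw [Finset.mem_filter, Finset.mem_range] at hk
      obtain ⟨hc1, hc2⟩ := keyA1 hO hD ht hk.1 hk.2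
      rw [hc1]
      omega
    · intro i hi
      rw [Finset.mem_filter, Finset.mem_range] at hi
      obtain ⟨hg, hstep⟩ := dAmb_spec (l := l) (t := t) i hi.2
      obtain ⟨hk1, hk2⟩ := keyA2 hO hD ht hi.1 hstep
      rw [hk1]
      omega
  rw [e3]

/-- the decoded middle object from an overpartition -/
def midOfA (hn : (l.map Prod.fst).sum = n) (hs : l.countP (fun x => x.2) = s) :
    Mid n t s where
  a := dAa t l
  b := dAb t l
  ma := dAma t l
  mb := dAmb t l
  ha := dAa_anti hO hD ht
  hb := dAb_anti
  hat := by unfold dAa; rw [if_neg (by omega)]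
  hbt := by unfold dAb; rw [if_neg (by omega)]
  hma := dAma_spec hO hD ht
  hmb := dAmb_spec
  hsum := by rw [dA_sum hO hD ht, hn]
  hcnt := by rw [dA_cnt hO hD ht, hs]

end DecA2

/-! ## A side roundtrips -/

section RoundA

variable {l : List (ℕ × Bool)} (hO : IsOverpartition l)
  (hD : HasDurfeeSide (l.map Prod.fst) t) (ht : 1 ≤ t)

include hO hD ht

lemma legval_dAb (j : ℕ) (hj : j < l.length - t) :
    legval t (dAb t l) j = pL l (t + j) := by
  unfold legval
  have h1 : ∀ i ∈ Finset.range t,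
      (if j + 1 ≤ dAb t l i then (1:ℕ) else 0)
        = (if i + 1 ≤ pL l (t + j) then 1 else 0) := by
    intro i hi
    rw [Finset.mem_range] at hi
    rw [dAb_eq hO hD ht i hi]
    exact if_congr (hApre hO hD ht (i + 1) j hj) rfl rfl
  rw [Finset.sum_congr rfl h1, sum_ind_min]
  have := hAleg hO hD ht (t + j) (by omega)
  omega

lemma legmark_dAb (j : ℕ) (hj : j < l.length - t) :
    legmark t (dAb t l) (dAmb t l) j = mkL l (t + j) := by
  unfold legmark
  rw [legval_dAb hO hD ht j hj]
  have hv1 : 1 ≤ pL l (t + j) := pLq_pos hO hD ht _ (by have := hAlen hO hD ht; omega)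
  have hv2 : pL l (t + j) ≤ t := hAleg hO hD ht _ (by omega)
  by_cases hm : mkL l (t + j) = true
  · obtain ⟨hc1, hc2⟩ := keyA1 hO hD ht hj hm
    rw [if_pos hc1]
    unfold dAmb
    rw [if_pos ⟨by omega, by rw [show pL l (t + j) - 1 + 1 = pL l (t + j) by omega]; omega⟩]
    rw [hc1, show t + (j + 1) - 1 = t + j by omega, hm]
  · have hm' : mkL l (t + j) = false := by
      cases h : mkL l (t + j)
      · rfl
      · exact absurd h hm
    rw [hm']
    split
    · next hcond =>
        unfold dAmb
        split
        · next hg =>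
            rw [hcond, show t + (j + 1) - 1 = t + j by omega]
            exact hm'
        · rfl
    · rfl

lemma encA_midOfA (hn : (l.map Prod.fst).sum = n) (hs : l.countP (fun x => x.2) = s) :
    encA (midOfA hO hD ht hn hs) = l := by
  set m := midOfA hO hD ht hn hs with hm
  have hlen := hAlen hO hD ht
  have hb0 : m.b 0 = l.length - t := by
    show dAb t l 0 = l.length - t
    rw [dAb_eq hO hD ht 0 (by omega)]
    have : (l.drop t).countP (fun x => decide (0 + 1 ≤ x.1)) = (l.drop t).length := by
      rw [List.countP_eq_length]
      intro x hx
      rw [List.mem_iff_getElem] at hx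
      obtain ⟨j, hj, rfl⟩ := hx
      rw [List.length_drop] at hj
      have he : (l.drop t)[j] = (l.drop t).getD j (0, false) := by
        rw [List.getD_eq_getElem _ _ (by rw [List.length_drop]; omega)]
      rw [he, getD_drop]
      have := pLq_pos hO hD ht (t + j) (by omega)
      simp only [decide_eq_true_eq]
      unfold pL at this
      omega
    rw [this, List.length_drop]
  apply List.ext_getElem
  · rw [length_encA, hb0]
    omega
  · intro k h1 h2
    rw [length_encA, hb0] at h1
    rw [← List.getD_eq_getElem _ (0, false) h2,
      ← List.getD_eq_getElem _ (0, false) (by rw [length_encA, hb0]; omega),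
      getD_encA]
    by_cases hk : k < t
    · rw [if_pos hk]
      have hq := hAq hO hD ht k hk
      have e1 : t + m.a k = pL l k := by
        show t + dAa t l k = pL l k
        unfold dAa
        rw [if_pos hk]
        omega
      have e2 : m.ma k = mkL l k := by
        show dAma t l k = mkL l k
        unfold dAma
        rw [if_pos hk]
      rw [e1, e2]
      unfold pL mkL
      ext <;> simp
    · rw [if_neg hk, if_pos (by omega)]
      have hj : k - t < l.length - t := by omega
      have e1 : legval t m.b (k - t) = pL l (t + (k - t)) := legval_dAb hO hD ht (k - t) hj
      have e2 : legmark t m.b m.mb (k - t) = mkL l (t + (k - t)) :=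
        legmark_dAb hO hD ht (k - t) hj
      rw [e1, e2, show t + (k - t) = k by omega]
      unfold pL mkL
      ext <;> simp

end RoundA

/-! ## decode ∘ encode = id on the A side -/

lemma dAa_encA (ht : 1 ≤ t) (m : Mid n t s) : dAa t (encA m) = m.a := by
  funext i
  unfold dAa
  by_cases h : i < t
  · rw [if_pos h]
    have : pL (encA m) i = t + m.a i := by
      unfold pL
      rw [getD_encA, if_pos h]
    rw [this]
    omega
  · rw [if_neg h, m.a_eq_zero (by omega)]

lemma drop_encA (m : Mid n t s) :
    (encA m).drop t = (List.range (m.b 0)).map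
      (fun k => (legval t m.b k, legmark t m.b m.mb k)) := by
  unfold encA
  exact List.drop_left' (by simp)

lemma dAb_encA (ht : 1 ≤ t) (m : Mid n t s) : dAb t (encA m) = m.b := by
  funext i
  unfold dAb
  by_cases h : i < t
  · rw [if_pos h, drop_encA, List.countP_map, countP_range]
    have h1 : ∀ k ∈ Finset.range (m.b 0),
        (if ((fun x : ℕ × Bool => decide (i + 1 ≤ x.1)) ∘
            (fun k => (legval t m.b k, legmark t m.b m.mb k))) k = true then (1:ℕ) else 0)
          = (if k + 1 ≤ m.b i then 1 else 0) := by
      intro k _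
      simp only [Function.comp_apply, decide_eq_true_eq]
      exact if_congr (legval_iff m.b m.hb h k).symm rfl rfl
    rw [Finset.sum_congr rfl h1, sum_ind_min]
    have := m.b_le (Nat.zero_le i)
    omega
  · rw [if_neg h, m.b_eq_zero (by omega)]

lemma dAma_encA (ht : 1 ≤ t) (m : Mid n t s) : dAma t (encA m) = m.ma := by
  funext i
  unfold dAma
  by_cases h : i < t
  · rw [if_pos h]
    unfold mkL
    rw [getD_encA, if_pos h]
  · rw [if_neg h, m.ma_eq_false (by omega)]

lemma dAmb_encA (ht : 1 ≤ t) (m : Mid n t s) : dAmb t (encA m) = m.mb := by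
  funext i
  unfold dAmb
  rw [dAb_encA ht m]
  by_cases h : i < t
  · by_cases hstep : m.b (i + 1) < m.b i
    · rw [if_pos ⟨h, hstep⟩]
      have hb1 : 1 ≤ m.b i := by omega
      have hble : m.b i ≤ m.b 0 := m.b_le (Nat.zero_le i)
      unfold mkL
      rw [getD_encA, if_neg (by omega), if_pos (by omega)]
      simp only []
      have he : t + m.b i - 1 - t = m.b i - 1 := by omega
      rw [he]
      unfold legmark
      rw [legval_step m.b m.hb m.hbt h hstep]
      simp only [Nat.add_sub_cancel]
      rw [show m.b i - 1 + 1 = m.b i by omega, if_pos rfl]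
    · rw [if_neg (by tauto)]
      by_contra hc
      have hmb : m.mb i = true := by
        cases hmb : m.mb i
        · rw [hmb] at hc; simp at hc
        · rfl
      obtain ⟨h1, h2⟩ := m.hmb i hmb
      exact hstep h2
  · rw [if_neg (by tauto), ← m.mb_eq_false (show t ≤ i by omega)]

lemma roundtripA1 (ht : 1 ≤ t) (m : Mid n t s)
    (hO : IsOverpartition (encA m)) (hD : HasDurfeeSide ((encA m).map Prod.fst) t)
    (hn : ((encA m).map Prod.fst).sum = n) (hs : (encA m).countP (fun x => x.2) = s) :
    midOfA hO hD ht hn hs = m := by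
  ext1
  · exact dAa_encA ht m
  · exact dAb_encA ht m
  · exact dAma_encA ht m
  · exact dAmb_encA ht m

/-- The overpartition-side equivalence. -/
def equivA (n t s : ℕ) (ht : 1 ≤ t) :
    Mid n t s ≃ {l : List (ℕ × Bool) // IsOverpartition l ∧
        (l.map Prod.fst).sum = n ∧ l.countP (fun x => x.2) = s ∧
        HasDurfeeSide (l.map Prod.fst) t} where
  toFun m := ⟨encA m,
    ⟨⟨encA_sorted ht m, encA_pos ht m, encA_overline ht m⟩,
      encA_sum ht m, encA_countP ht m, encA_durfee ht m⟩⟩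
  invFun x := midOfA x.2.1 x.2.2.2.2 ht x.2.2.1 x.2.2.2.1
  left_inv m := by apply roundtripA1
  right_inv x := by
    apply Subtype.ext
    exact encA_midOfA x.2.1 x.2.2.2.2 ht x.2.2.1 x.2.2.2.1

end ODS

/-- Overpartitions of `n` with `s` overlined parts and Durfee square of side `t` are
equinumerous with Schmidt 2-overpartitions of `n` with `s` overlined parts and length
`2t` or `2t - 1`. -/
theorem overpartition_durfee_schmidt_two (n t s : ℕ) (ht : 1 ≤ t) :
    Nat.card {l : List (ℕ × Bool) // IsOverpartition l ∧
        (l.map Prod.fst).sum = n ∧ l.countP (fun x => x.2) = s ∧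
        HasDurfeeSide (l.map Prod.fst) t} =
      Nat.card {l : List (ℕ × Bool) // IsStrictOverpartition l ∧
        schmidtSum 2 (l.map Prod.fst) = n ∧ l.countP (fun x => x.2) = s ∧
        (l.length = 2 * t ∨ l.length = 2 * t - 1)} :=
  Nat.card_congr ((ODS.equivA n t s ht).symm.trans (ODS.equivB n t s ht))
end

section
/- The number of overpartitions of n with exactly s overlined parts equals the number of Schmidt 2-overpartitions of n with exactly s overlined parts. -/
def OPrec : List (ℕ × Bool) → Prop
  | [] => True
  | [(a, _)] => 1 ≤ a
  | (a, b) :: (c, d) :: l => c ≤ a ∧ (b = true → c < a) ∧ OPrec ((c, d) :: l)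

def SPrec : List (ℕ × Bool) → Prop
  | [] => True
  | [(a, _)] => 1 ≤ a
  | (a, b) :: (c, d) :: l => c < a ∧ (b = true → c + 2 ≤ a) ∧ SPrec ((c, d) :: l)

lemma isOver_nil : IsOverpartition [] := by
  refine ⟨by simp, by simp, by simp⟩

lemma isOver_single {a : ℕ} {b : Bool} : IsOverpartition [(a,b)] ↔ 0 < a := by
  constructor
  · rintro ⟨-, h, -⟩; exact h (a,b) (by simp)
  · intro h
    refine ⟨by simp, ?_, ?_⟩
    · rintro x hx; simp only [List.mem_singleton] at hx; subst hx; exact h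
    · intro i hi; simp only [List.length_singleton] at hi; omega

lemma isOver_cons_cons {a c : ℕ} {b d : Bool} {l : List (ℕ × Bool)} :
    IsOverpartition ((a,b)::(c,d)::l) ↔
      c ≤ a ∧ (b = true → c < a) ∧ IsOverpartition ((c,d)::l) := by
  constructor
  · rintro ⟨hs, hp, hb⟩
    rw [List.map_cons, List.pairwise_cons] at hs
    refine ⟨hs.1 _ (by simp), ?_, hs.2, fun x hx => hp x (List.mem_cons_of_mem _ hx), ?_⟩
    · intro hbt
      have := hb 0 (by simp) (by simpa)
      simpa using this
    · intro i hi hbt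
      have := hb (i+1) (by simpa using hi) (by simpa using hbt)
      simpa using this
  · rintro ⟨hca, hbc, hs, hp, hb⟩
    rw [List.map_cons, List.pairwise_cons] at hs
    refine ⟨?_, ?_, ?_⟩
    · rw [List.map_cons, List.pairwise_cons]
      refine ⟨?_, ?_⟩
      · intro x hx
        simp only [List.map_cons, List.mem_cons] at hx
        rcases hx with rfl | hx
        · exact hca
        · exact le_trans (hs.1 x hx) hca
      · rw [List.map_cons, List.pairwise_cons]; exact hs
    · intro x hx
      simp only [List.mem_cons] at hx
      rcases hx with rfl | hx
      · exact lt_of_lt_of_le (hp (c,d) (by simp)) hca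
      · exact hp x (by simp [hx])
    · intro i hi hbt
      match i with
      | 0 => simpa using hbc (by simpa using hbt)
      | (j+1) =>
        have := hb j (by simpa using hi) (by simpa using hbt)
        simpa using this

lemma opiff : ∀ l : List (ℕ × Bool), IsOverpartition l ↔ OPrec l
  | [] => by simpa [OPrec] using isOver_nil
  | [(a,b)] => by exact isOver_single
  | (a,b)::(c,d)::l => by
    rw [isOver_cons_cons, opiff ((c,d)::l)]; rfl

lemma isStrict_nil : IsStrictOverpartition [] := ⟨by simp, by simp, by simp⟩

lemma isStrict_single {a : ℕ} {b : Bool} : IsStrictOverpartition [(a,b)] ↔ 0 < a := by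
  constructor
  · rintro ⟨-, h, -⟩; exact h (a,b) (by simp)
  · intro h
    refine ⟨by simp, ?_, ?_⟩
    · rintro x hx; simp only [List.mem_singleton] at hx; subst hx; exact h
    · intro i hi hb; left; simp only [List.length_singleton] at hi ⊢; omega

lemma isStrict_cons_cons {a c : ℕ} {b d : Bool} {l : List (ℕ × Bool)} :
    IsStrictOverpartition ((a,b)::(c,d)::l) ↔
      c < a ∧ (b = true → c + 2 ≤ a) ∧ IsStrictOverpartition ((c,d)::l) := by
  constructor
  · rintro ⟨hs, hp, hb⟩
    rw [List.map_cons, List.pairwise_cons] at hs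
    refine ⟨hs.1 _ (by simp), ?_, hs.2, fun x hx => hp x (List.mem_cons_of_mem _ hx), ?_⟩
    · intro hbt
      have := hb 0 (by simp) (by simpa)
      simp only [List.getD_cons_succ, List.getD_cons_zero, List.length_cons] at this
      rcases this with h | h
      · omega
      · exact h
    · intro i hi hbt
      have := hb (i+1) (by simp only [List.length_cons] at hi ⊢; omega)
        (by simpa using hbt)
      simp only [List.getD_cons_succ, List.length_cons] at this ⊢
      rcases this with h | h
      · left; omega
      · right; exact h
  · rintro ⟨hca, hbc, hs, hp, hb⟩
    rw [List.map_cons, List.pairwise_cons] at hs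
    refine ⟨?_, ?_, ?_⟩
    · rw [List.map_cons, List.pairwise_cons]
      refine ⟨?_, ?_⟩
      · intro x hx
        simp only [List.map_cons, List.mem_cons] at hx
        rcases hx with rfl | hx
        · exact hca
        · exact lt_trans (hs.1 x hx) hca
      · rw [List.map_cons, List.pairwise_cons]; exact hs
    · intro x hx
      simp only [List.mem_cons] at hx
      rcases hx with rfl | hx
      · exact lt_trans (hp (c,d) (by simp)) hca
      · exact hp x (by simp [hx])
    · intro i hi hbt
      match i with
      | 0 =>
        right
        simpa using hbc (by simpa using hbt)
      | (j+1) =>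
        have := hb j (by simp only [List.length_cons] at hi ⊢; omega) (by simpa using hbt)
        simp only [List.getD_cons_succ, List.length_cons] at this ⊢
        rcases this with h | h
        · left; omega
        · right; exact h

lemma spiff : ∀ l : List (ℕ × Bool), IsStrictOverpartition l ↔ SPrec l
  | [] => by simpa [SPrec] using isStrict_nil
  | [(a,b)] => by exact isStrict_single
  | (a,b)::(c,d)::l => by
    rw [isStrict_cons_cons, spiff ((c,d)::l)]; rfl

lemma OPrec_pos : ∀ l : List (ℕ × Bool), OPrec l → ∀ x ∈ l, 1 ≤ x.1
  | [], _, x, hx => by simp at hx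
  | [(a,b)], h, x, hx => by
    simp only [List.mem_singleton] at hx; subst hx; exact h
  | (a,b)::(c,d)::l, h, x, hx => by
    obtain ⟨h1, h2, h3⟩ := h
    rcases List.mem_cons.1 hx with rfl | hx
    · have := OPrec_pos ((c,d)::l) h3 (c,d) (by simp)
      simp only at this ⊢; omega
    · exact OPrec_pos ((c,d)::l) h3 x hx

lemma SPrec_pos : ∀ l : List (ℕ × Bool), SPrec l → ∀ x ∈ l, 1 ≤ x.1
  | [], _, x, hx => by simp at hx
  | [(a,b)], h, x, hx => by
    simp only [List.mem_singleton] at hx; subst hx; exact h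
  | (a,b)::(c,d)::l, h, x, hx => by
    obtain ⟨h1, h2, h3⟩ := h
    rcases List.mem_cons.1 hx with rfl | hx
    · have := SPrec_pos ((c,d)::l) h3 (c,d) (by simp)
      simp only at this ⊢; omega
    · exact SPrec_pos ((c,d)::l) h3 x hx

lemma OPrec_tail {p : ℕ × Bool} {l : List (ℕ × Bool)} (h : OPrec (p :: l)) : OPrec l := by
  match p, l with
  | _, [] => trivial
  | (a,b), (c,d)::l => exact h.2.2

lemma SPrec_tail {p : ℕ × Bool} {l : List (ℕ × Bool)} (h : SPrec (p :: l)) : SPrec l := by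
  match p, l with
  | _, [] => trivial
  | (a,b), (c,d)::l => exact h.2.2

lemma OPrec_cons {a : ℕ} {b : Bool} {l : List (ℕ × Bool)} (h : OPrec l) (h1 : 1 ≤ a)
    (h2 : l ≠ [] → (l.headD (0,false)).1 ≤ a)
    (h3 : b = true → l ≠ [] → (l.headD (0,false)).1 < a) : OPrec ((a,b)::l) := by
  match l with
  | [] => exact h1
  | (c,d)::l =>
    exact ⟨by simpa using h2 (by simp), fun hb => by simpa using h3 hb (by simp), h⟩

lemma SPrec_cons {a : ℕ} {b : Bool} {l : List (ℕ × Bool)} (h : SPrec l) (h1 : 1 ≤ a)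
    (h2 : l ≠ [] → (l.headD (0,false)).1 < a)
    (h3 : b = true → l ≠ [] → (l.headD (0,false)).1 + 2 ≤ a) : SPrec ((a,b)::l) := by
  match l with
  | [] => exact h1
  | (c,d)::l =>
    exact ⟨by simpa using h2 (by simp), fun hb => by simpa using h3 hb (by simp), h⟩

lemma OPrec_map_succ : ∀ l : List (ℕ × Bool), OPrec l →
    OPrec (l.map (fun q => (q.1 + 1, q.2)))
  | [], _ => trivial
  | [(a,b)], h => by simpa [OPrec] using by omega
  | (a,b)::(c,d)::l, h => by
    obtain ⟨h1, h2, h3⟩ := h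
    exact ⟨by omega, fun hb => by have := h2 hb; omega, OPrec_map_succ ((c,d)::l) h3⟩

lemma OPrec_map_pred : ∀ l : List (ℕ × Bool), OPrec l → (∀ x ∈ l, 2 ≤ x.1) →
    OPrec (l.map (fun q => (q.1 - 1, q.2)))
  | [], _, _ => trivial
  | [(a,b)], h, h2 => by
    have := h2 (a,b) (by simp); simp only at this
    simpa [OPrec] using by omega
  | (a,b)::(c,d)::l, h, hge => by
    obtain ⟨h1, h2, h3⟩ := h
    have ha := hge (a,b) (by simp)
    have hc := hge (c,d) (by simp)
    simp only at ha hc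
    refine ⟨by omega, fun hb => by have := h2 hb; omega, ?_⟩
    exact OPrec_map_pred ((c,d)::l) h3 (fun x hx => hge x (by simp [hx]))

lemma OPrec_replicate (k : ℕ) : OPrec (List.replicate k (1, false)) := by
  induction k with
  | zero => trivial
  | succ n ih =>
    rw [List.replicate_succ]
    refine OPrec_cons ih le_rfl ?_ (by simp)
    intro hne
    match n, ih with
    | n+1, _ => simp [List.replicate_succ]

lemma OPrec_rep_true (k : ℕ) : OPrec (List.replicate k (1, false) ++ [(1,true)]) := by
  induction k with
  | zero => simpa [OPrec] using le_rfl
  | succ n ih =>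
    rw [List.replicate_succ, List.cons_append]
    refine OPrec_cons ih le_rfl ?_ (by simp)
    intro _
    match n with
    | 0 => simp
    | n+1 => simp [List.replicate_succ]

lemma OPrec_append_ones : ∀ M : List (ℕ × Bool), OPrec M → ∀ B, OPrec B →
    (∀ x ∈ M, 2 ≤ x.1) → (∀ x ∈ B, x.1 = 1) → OPrec (M ++ B)
  | [], _, B, hB, _, _ => by simpa
  | [(a,b)], h, B, hB, hM, hBv => by
    rw [List.singleton_append]
    have ha := hM (a,b) (by simp)
    simp only at ha
    match B with
    | [] => exact OPrec_cons hB (by omega) (by simp) (by simp)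
    | q :: B' =>
      have hq := hBv q (by simp)
      exact OPrec_cons hB (by omega) (fun _ => by simp only [List.headD_cons]; omega)
        (fun _ _ => by simp only [List.headD_cons]; omega)
  | (a,b)::(c,d)::l, h, B, hB, hM, hBv => by
    obtain ⟨h1, h2, h3⟩ := h
    rw [List.cons_append]
    exact ⟨by simpa using h1, by simpa using h2,
      OPrec_append_ones ((c,d)::l) h3 B hB (fun x hx => hM x (by simp [hx])) hBv⟩

lemma OPrec_prefix : ∀ l₁ l₂ : List (ℕ × Bool), OPrec (l₁ ++ l₂) → OPrec l₁
  | [], _, _ => trivial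
  | [(a,b)], l₂, h => OPrec_pos _ h (a,b) (by simp)
  | (a,b)::(c,d)::l, l₂, h => by
    obtain ⟨h1, h2, h3⟩ := h
    exact ⟨h1, h2, OPrec_prefix ((c,d)::l) l₂ h3⟩

lemma ones_shape : ∀ w : List (ℕ × Bool), OPrec w → (∀ x ∈ w, x.1 = 1) → w ≠ [] →
    w = List.replicate (w.length - 1) (1,false) ++ [(1, ((w.getLast?).getD (1,false)).2)]
  | [], _, _, hne => absurd rfl hne
  | [(a,b)], _, h1, _ => by
    have := h1 (a,b) (by simp); simp only at this; subst this; simp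
  | (a,b)::(c,d)::l, h, h1, _ => by
    obtain ⟨g1, g2, g3⟩ := h
    have ha := h1 (a,b) (by simp)
    have hc := h1 (c,d) (by simp)
    simp only at ha hc
    subst ha
    have hb : b = false := by
      cases b
      · rfl
      · exact absurd (g2 rfl) (by omega)
    subst hb
    have := ones_shape ((c,d)::l) g3 (fun x hx => h1 x (by simp [hx])) (by simp)
    calc (1,false)::(c,d)::l = (1,false) :: ((c,d)::l) := rfl
      _ = (1,false) :: (List.replicate (((c,d)::l).length - 1) (1,false) ++
            [(1, ((((c,d)::l).getLast?).getD (1,false)).2)]) := by rw [← this]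
      _ = _ := by
        rw [List.getLast?_cons_cons]
        simp only [List.length_cons]
        rw [show (l.length + 1 + 1 - 1) = (l.length + 1 - 1) + 1 by omega,
          List.replicate_succ, List.cons_append]

lemma head_val_one {B : List (ℕ×Bool)} (h : ∀ x ∈ B, x.1 = 1) (hne : B ≠ []) :
    (B.headD (0,false)).1 = 1 := by
  match B with
  | [] => exact absurd rfl hne
  | q :: _ => exact h q (by simp)

lemma takeWhile_append_eq {α : Type} (p : α → Bool) : ∀ M B : List α,
    (∀ x ∈ M, p x = true) → (∀ q ∈ B.head?, p q = false) →
    (M ++ B).takeWhile p = M ∧ (M ++ B).dropWhile p = B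
  | [], B, _, hB => by
    match B with
    | [] => simp
    | q :: B' =>
      have := hB q (by simp)
      simp [List.takeWhile_cons, List.dropWhile_cons, this]
  | m :: M, B, hM, hB => by
    have hm := hM m (by simp)
    have := takeWhile_append_eq p M B (fun x hx => hM x (by simp [hx])) hB
    simp only [List.cons_append, List.takeWhile_cons, List.dropWhile_cons, hm]
    simp [this.1, this.2]

lemma schmidt_nil : schmidtSum 2 [] = 0 := by simp [schmidtSum]

lemma schmidt_single (a : ℕ) : schmidtSum 2 [a] = a := by simp [schmidtSum]

lemma schmidt_cons2 (a b : ℕ) (l : List ℕ) :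
    schmidtSum 2 (a :: b :: l) = a + schmidtSum 2 l := by
  unfold schmidtSum
  rw [show (a :: b :: l).length = l.length + 1 + 1 by simp]
  rw [Finset.sum_range_succ', Finset.sum_range_succ']
  simp only [List.getD_cons_succ, List.getD_cons_zero]
  have h1 : ∀ i : ℕ, (i + 1 + 1) % 2 = i % 2 := fun i => by omega
  simp only [h1]
  simp [Nat.add_comm]

def G : List (ℕ × Bool) → List (ℕ × Bool)
  | [] => []
  | [(x, o)] => [(x, o)]
  | (x, o) :: (y, u) :: rest =>
      let v := G rest
      let t := (v.headD (0, false)).1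
      let ones := y - t - v.length
      (x - y + t, o) :: (v.map (fun q => (q.1 + 1, q.2)) ++
        (if u then List.replicate (ones - 1) (1, false) ++ [(1, true)]
         else List.replicate ones (1, false)))

def H : List (ℕ × Bool) → List (ℕ × Bool)
  | [] => []
  | [(x, o)] => [(x, o)]
  | (x, o) :: p :: tail' =>
      let tl := p :: tail'
      let big := tl.takeWhile (fun q => 2 ≤ q.1)
      let onesb := tl.dropWhile (fun q => 2 ≤ q.1)
      let nt := big.map (fun q => (q.1 - 1, q.2))
      let u := ((onesb.getLast?).getD (1, false)).2
      let t := (nt.headD (0, false)).1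
      (x + onesb.length + nt.length, o) :: (onesb.length + t + nt.length, u) :: H nt
termination_by l => l.length
decreasing_by
  have := (List.takeWhile_prefix (l := p :: tail') (fun q : ℕ × Bool => decide (2 ≤ q.1))).length_le
  simp only [nt, big, List.length_map]
  simp at this ⊢; omega

lemma G_nil : G [] = [] := rfl
lemma G_single (x : ℕ) (o : Bool) : G [(x,o)] = [(x,o)] := rfl
lemma G_cons2 (x y : ℕ) (o u : Bool) (rest : List (ℕ × Bool)) :
    G ((x, o) :: (y, u) :: rest) =
      (x - y + ((G rest).headD (0, false)).1, o) ::
        ((G rest).map (fun q => (q.1 + 1, q.2)) ++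
        (if u then
          List.replicate (y - ((G rest).headD (0, false)).1 - (G rest).length - 1) (1, false)
            ++ [(1, true)]
         else List.replicate (y - ((G rest).headD (0, false)).1 - (G rest).length)
            (1, false))) := rfl

lemma mem_B_one {k1 k2 : ℕ} {u : Bool} : ∀ z ∈ (if u = true then
    List.replicate k1 (1,false) ++ [(1,true)] else List.replicate k2 (1,false)), z.1 = 1 := by
  cases u
  · intro z hz
    simp only [Bool.false_eq_true, if_false] at hz
    rw [List.eq_of_mem_replicate hz]
  · intro z hz
    simp only [if_true] at hz
    rw [List.mem_append] at hz
    rcases hz with hz | hz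
    · rw [List.eq_of_mem_replicate hz]
    · rw [List.mem_singleton] at hz; rw [hz]

lemma OPrec_B {k1 k2 : ℕ} {u : Bool} : OPrec (if u = true then
    List.replicate k1 (1,false) ++ [(1,true)] else List.replicate k2 (1,false)) := by
  cases u
  · simpa using OPrec_replicate k2
  · simpa using OPrec_rep_true k1

lemma len_B {k : ℕ} {u : Bool} (h : u = true → 1 ≤ k) : (if u = true then
    List.replicate (k-1) (1,false) ++ [(1,true)] else List.replicate k (1,false)).length
      = k := by
  cases u
  · simp
  · have := h rfl
    simp only [if_true, List.length_append, List.length_replicate, List.length_singleton]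
    omega

lemma headD_append_ne {α : Type} {M B : List α} {d : α} (h : M ≠ []) :
    (M ++ B).headD d = M.headD d := by
  match M with
  | [] => exact absurd rfl h
  | q :: M' => simp

lemma SPrec_head {y : ℕ} {u : Bool} {rest : List (ℕ × Bool)} (h : SPrec ((y,u)::rest)) :
    (rest ≠ [] → (rest.headD (0,false)).1 < y ∧
      (u = true → (rest.headD (0,false)).1 + 2 ≤ y)) := by
  intro hne
  match rest with
  | [] => exact absurd rfl hne
  | (c,d) :: rest' => exact ⟨h.1, h.2.1⟩

lemma G_good : ∀ l : List (ℕ × Bool), SPrec l →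
    OPrec (G l) ∧ (G l = [] ↔ l = []) ∧
      (l ≠ [] → ((G l).headD (0,false)).1 + (G l).length = (l.headD (0,false)).1 + 1)
  | [], _ => ⟨trivial, by simp [G_nil], by simp⟩
  | [(x,o)], h => by
    refine ⟨h, by simp [G_single], by simp [G_single]⟩
  | (x,o)::(y,u)::rest, h => by
    obtain ⟨h1, h2, h3⟩ := h
    have hrest : SPrec rest := SPrec_tail h3
    obtain ⟨ih1, ih2, ih3⟩ := G_good rest hrest
    have hy1 : 1 ≤ y := SPrec_pos _ h3 (y,u) (by simp)
    rw [G_cons2]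
    generalize hw : G rest = w at ih1 ih2 ih3 ⊢
    have htm : (w.headD (0,false)).1 + w.length ≤ y ∧
        (u = true → (w.headD (0,false)).1 + w.length + 1 ≤ y) := by
      match rest with
      | [] =>
        have hw0 : w = [] := ih2.2 rfl
        subst hw0
        simp only [List.headD_nil, List.length_nil]
        omega
      | r :: rest' =>
        have hh := SPrec_head h3 (by simp)
        have := ih3 (by simp)
        constructor
        · omega
        · intro hu; have := hh.2 hu; omega
    refine ⟨?_, by simp, ?_⟩
    · refine OPrec_cons (OPrec_append_ones _ (OPrec_map_succ _ ih1) _ OPrec_B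
        (?_) mem_B_one) (by omega) ?_ ?_
      · intro z hz
        obtain ⟨q, hq, rfl⟩ := List.mem_map.1 hz
        have := OPrec_pos _ ih1 q hq
        simp only
        omega
      · intro hne
        match w with
        | [] =>
          rw [List.map_nil, List.nil_append] at hne ⊢
          rw [head_val_one mem_B_one hne]
          simp only [List.headD_nil, List.length_nil] at htm
          omega
        | q :: w' =>
          rw [List.map_cons, List.cons_append, List.headD_cons]
          simp only [List.headD_cons, List.length_cons] at htm ⊢
          omega
      · intro ho hne
        have h2' := h2 ho
        match w with
        | [] =>
          rw [List.map_nil, List.nil_append] at hne ⊢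
          rw [head_val_one mem_B_one hne]
          simp only [List.headD_nil, List.length_nil] at htm
          omega
        | q :: w' =>
          rw [List.map_cons, List.cons_append, List.headD_cons]
          simp only [List.headD_cons, List.length_cons] at htm ⊢
          omega
    · intro _
      simp only [List.headD_cons, List.length_cons, List.length_append, List.length_map]
      rw [len_B (fun hu => by have := htm.2 hu; omega)]
      omega

lemma sum_fst_succ : ∀ w : List (ℕ×Bool),
    ((w.map (fun q => (q.1+1, q.2))).map Prod.fst).sum = (w.map Prod.fst).sum + w.length
  | [] => by simp
  | q :: w => by
    simp only [List.map_cons, List.sum_cons, sum_fst_succ w, List.length_cons]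
    omega

lemma sum_ones : ∀ B : List (ℕ×Bool), (∀ z ∈ B, z.1 = 1) →
    (B.map Prod.fst).sum = B.length
  | [], _ => by simp
  | q :: B, h => by
    have := h q (by simp)
    simp only [List.map_cons, List.sum_cons, List.length_cons,
      sum_ones B (fun z hz => h z (by simp [hz])), this]
    omega

lemma sumG : ∀ l : List (ℕ × Bool), SPrec l →
    ((G l).map Prod.fst).sum = schmidtSum 2 (l.map Prod.fst)
  | [], _ => by simp [G_nil, schmidt_nil]
  | [(x,o)], _ => by simp [G_single, schmidt_single]
  | (x,o)::(y,u)::rest, h => by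
    obtain ⟨h1, h2, h3⟩ := h
    have hrest : SPrec rest := SPrec_tail h3
    have hy1 : 1 ≤ y := SPrec_pos _ h3 (y,u) (by simp)
    obtain ⟨ih1, ih2, ih3⟩ := G_good rest hrest
    have IH := sumG rest hrest
    rw [G_cons2]
    rw [show ((x,o)::(y,u)::rest).map Prod.fst = x :: y :: rest.map Prod.fst from rfl,
      schmidt_cons2]
    generalize hw : G rest = w at ih1 ih2 ih3 IH ⊢
    have htm : (w.headD (0,false)).1 + w.length ≤ y ∧
        (u = true → (w.headD (0,false)).1 + w.length + 1 ≤ y) := by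
      match rest with
      | [] =>
        have hw0 : w = [] := ih2.2 rfl
        subst hw0
        simp only [List.headD_nil, List.length_nil]
        omega
      | r :: rest' =>
        have hh := SPrec_head h3 (by simp)
        have := ih3 (by simp)
        constructor
        · omega
        · intro hu; have := hh.2 hu; omega
    simp only [List.map_cons, List.sum_cons, List.map_append, List.sum_append]
    rw [sum_fst_succ, IH,
      sum_ones _ mem_B_one,
      len_B (fun hu => by have := htm.2 hu; omega)]
    omega

lemma countP_false_replicate (k : ℕ) :
    (List.replicate k ((1 : ℕ), false)).countP (fun q => q.2) = 0 := by
  induction k with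
  | zero => simp
  | succ n ih => rw [List.replicate_succ, List.countP_cons]; simp [ih]

lemma countP_B {k1 k2 : ℕ} {u : Bool} :
    ((if u = true then List.replicate k1 ((1:ℕ),false) ++ [(1,true)]
      else List.replicate k2 (1,false)).countP (fun q => q.2))
      = if u = true then 1 else 0 := by
  cases u
  · simpa using countP_false_replicate k2
  · simp only [if_true, List.countP_append, countP_false_replicate]
    simp [List.countP_cons]

lemma countP_map_snd (w : List (ℕ×Bool)) :
    (w.map (fun q => (q.1+1, q.2))).countP (fun q => q.2) = w.countP (fun q => q.2) := by
  induction w with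
  | nil => simp
  | cons q w ih => simp [List.countP_cons, ih]

lemma countG : ∀ l : List (ℕ × Bool),
    (G l).countP (fun q => q.2) = l.countP (fun q => q.2)
  | [] => rfl
  | [(x,o)] => rfl
  | (x,o)::(y,u)::rest => by
    rw [G_cons2]
    rw [List.countP_cons, List.countP_append, countP_map_snd, countG rest, countP_B,
      List.countP_cons, List.countP_cons]

lemma H_cons2 (x : ℕ) (o : Bool) (p : ℕ×Bool) (tail' : List (ℕ×Bool)) :
    H ((x,o) :: p :: tail') =
      (x + ((p::tail').dropWhile (fun q => 2 ≤ q.1)).length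
          + (((p::tail').takeWhile (fun q => 2 ≤ q.1)).map (fun q => (q.1-1,q.2))).length,
        o) ::
      (((p::tail').dropWhile (fun q => 2 ≤ q.1)).length
          + ((((p::tail').takeWhile (fun q => 2 ≤ q.1)).map
              (fun q => (q.1-1,q.2))).headD (0,false)).1
          + (((p::tail').takeWhile (fun q => 2 ≤ q.1)).map (fun q => (q.1-1,q.2))).length,
        ((((p::tail').dropWhile (fun q => 2 ≤ q.1)).getLast?).getD (1,false)).2) ::
      H (((p::tail').takeWhile (fun q => 2 ≤ q.1)).map (fun q => (q.1-1,q.2))) := by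
  rw [H]

lemma all_one : ∀ w : List (ℕ × Bool), OPrec w → (w.headD (0,false)).1 ≤ 1 →
    ∀ z ∈ w, z.1 = 1
  | [], _, _ => by simp
  | [(a,b)], h, hle => by
    intro z hz
    rw [List.mem_singleton] at hz
    subst hz
    have ha : 1 ≤ a := h
    simp only [List.headD_cons] at hle
    simp only
    omega
  | (a,b)::(c,d)::l, h, hle => by
    have ha : 1 ≤ a := OPrec_pos _ h (a,b) (by simp)
    obtain ⟨h1, h2, h3⟩ := h
    simp only [List.headD_cons] at hle
    have hc : c ≤ 1 := le_trans h1 hle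
    intro z hz
    rcases List.mem_cons.1 hz with rfl | hz
    · simp only; omega
    · exact all_one ((c,d)::l) h3 (by simpa using hc) z hz

lemma OPrec_suffix : ∀ l₁ l₂ : List (ℕ × Bool), OPrec (l₁ ++ l₂) → OPrec l₂
  | [], _, h => h
  | q :: l₁, l₂, h => OPrec_suffix l₁ l₂ (OPrec_tail (by simpa using h))

lemma ones_all {w : List (ℕ × Bool)} (h : OPrec w) :
    ∀ z ∈ w.dropWhile (fun q => 2 ≤ q.1), z.1 = 1 := by
  have hsuf : OPrec (w.dropWhile (fun q => 2 ≤ q.1)) :=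
    OPrec_suffix _ _ (by rw [List.takeWhile_append_dropWhile]; exact h)
  intro z hz
  match hd : w.dropWhile (fun q => 2 ≤ q.1) with
  | [] => rw [hd] at hz; simp at hz
  | q :: rest =>
    have hq : ¬ (2 ≤ q.1) := by
      have := List.head?_dropWhile_not (fun q : ℕ×Bool => decide (2 ≤ q.1)) w
      rw [hd] at this
      simpa using this
    have hpos : 1 ≤ q.1 := OPrec_pos _ (hd ▸ hsuf) q (by simp)
    refine all_one _ (hd ▸ hsuf) ?_ z (hd ▸ hz)
    simp only [List.headD_cons]
    omega

lemma H_nil : H [] = [] := by rw [H]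
lemma H_single (x : ℕ) (o : Bool) : H [(x,o)] = [(x,o)] := by rw [H]

lemma len_nt_lt {α β : Type} (p : α → Bool) (f : α → β) (l : List α) :
    ((l.takeWhile p).map f).length < l.length + 1 := by
  rw [List.length_map]; exact Nat.lt_succ_of_le (List.takeWhile_prefix p).length_le

theorem H_good : ∀ l : List (ℕ × Bool), OPrec l →
    SPrec (H l) ∧ (H l = [] ↔ l = []) ∧
      (l ≠ [] → ((H l).headD (0,false)).1 + 1 = (l.headD (0,false)).1 + l.length)
  | [], _ => ⟨by rw [H_nil]; trivial, by simp [H_nil], by simp⟩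
  | [(x,o)], h => ⟨by rw [H_single]; exact h, by simp [H_single], by simp [H_single]⟩
  | (x,o)::(c,d)::tail', h => by
    have hx1 : 1 ≤ x := OPrec_pos _ h (x,o) (by simp)
    have hc1 : 1 ≤ c := OPrec_pos _ h (c,d) (by simp)
    obtain ⟨h1, h2, h3⟩ := h
    have htl : OPrec ((c,d)::tail') := h3
    have hOPbig : OPrec (((c,d)::tail').takeWhile (fun q => 2 ≤ q.1)) :=
      OPrec_prefix _ _ (by rw [List.takeWhile_append_dropWhile]; exact htl)
    have hbig_mem : ∀ z ∈ ((c,d)::tail').takeWhile (fun q => 2 ≤ q.1), 2 ≤ z.1 := by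
      intro z hz
      have := List.mem_takeWhile_imp hz
      simpa using this
    have hOPnt : OPrec ((((c,d)::tail').takeWhile (fun q => 2 ≤ q.1)).map
        (fun q => (q.1-1,q.2))) := OPrec_map_pred _ hOPbig hbig_mem
    obtain ⟨ih1, ih2, ih3⟩ := H_good _ hOPnt
    rw [H_cons2]
    set big := ((c,d)::tail').takeWhile (fun q => 2 ≤ q.1) with hbig
    set onesb := ((c,d)::tail').dropWhile (fun q => 2 ≤ q.1) with honesb
    set nt := big.map (fun q => (q.1-1,q.2)) with hnt
    set m := nt.length with hm
    set ones := onesb.length with hones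
    set t := (nt.headD (0,false)).1 with ht
    set u := ((onesb.getLast?).getD (1,false)).2 with hu
    have hsplit : big.length + ones = tail'.length + 1 := by
      have := congrArg List.length (List.takeWhile_append_dropWhile
        (p := fun q : ℕ×Bool => decide (2 ≤ q.1)) (l := (c,d)::tail'))
      simp only [List.length_append, List.length_cons] at this
      rw [← hbig, ← honesb] at this
      omega
    have hmbig : m = big.length := by rw [hm, hnt, List.length_map]
    have hune : u = true → onesb ≠ [] := by
      intro hut hcon
      rw [honesb] at hcon
      rw [hu, honesb, hcon] at hut
      simp at hut
    have htx : t + 1 ≤ x ∧ (o = true → t + 2 ≤ x) := by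
      by_cases hc : 2 ≤ c
      · have hbigeq : big = (c,d) :: (tail'.takeWhile (fun q => 2 ≤ q.1)) := by
          rw [hbig, List.takeWhile_cons]
          simp [hc]
        have htval : t = c - 1 := by
          rw [ht, hnt, hbigeq, List.map_cons, List.headD_cons]
        constructor
        · omega
        · intro ho; have := h2 ho; omega
      · have hbigeq : big = [] := by
          rw [hbig, List.takeWhile_cons]
          simp [hc]
        have htval : t = 0 := by rw [ht, hnt, hbigeq]; simp
        constructor
        · omega
        · intro ho; have := h2 ho; omega
    have hinner : SPrec ((ones + t + m, u) :: H nt) := by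
      refine SPrec_cons ih1 ?_ ?_ ?_
      · omega
      · intro hne
        have hntne : nt ≠ [] := fun hcon => hne (by rw [ih2]; exact hcon)
        have := ih3 hntne
        have hm1 : 1 ≤ m := by
          rw [hm]
          match nt, hntne with
          | q :: nt', _ => simp
        omega
      · intro hut hne
        have hntne : nt ≠ [] := fun hcon => hne (by rw [ih2]; exact hcon)
        have := ih3 hntne
        have hones1 : 1 ≤ ones := by
          have := hune hut
          rw [hones]
          match onesb, this with
          | q :: onesb', _ => simp
        omega
    refine ⟨?_, by simp, ?_⟩
    · refine SPrec_cons hinner (by omega) ?_ ?_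
      · intro _
        simp only [List.headD_cons]
        omega
      · intro ho _
        simp only [List.headD_cons]
        have := htx.2 ho
        omega
    · intro _
      simp only [List.headD_cons, List.length_cons, ← hm]
      omega
termination_by l => l.length
decreasing_by
  simp only [List.length_cons]
  exact len_nt_lt _ _ _

lemma map_pred_succ : ∀ w : List (ℕ×Bool),
    (w.map (fun q => (q.1+1,q.2))).map (fun q => (q.1-1,q.2)) = w
  | [] => rfl
  | q :: w => by simp [map_pred_succ w]

lemma uB {k1 k2 : ℕ} {u : Bool} :
    (((if u = true then List.replicate k1 ((1:ℕ),false) ++ [(1,true)]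
      else List.replicate k2 (1,false))).getLast?.getD (1,false)).2 = u := by
  cases u
  · simp only [Bool.false_eq_true, if_false]
    match k2 with
    | 0 => simp
    | k+1 => rw [List.replicate_succ', List.getLast?_concat]; simp
  · simp [List.getLast?_concat]

theorem RT1 : ∀ l : List (ℕ × Bool), SPrec l → H (G l) = l
  | [], _ => by rw [G_nil, H_nil]
  | [(x,o)], _ => by rw [G_single, H_single]
  | (x,o)::(y,u)::rest, h => by
    obtain ⟨h1, h2, h3⟩ := h
    have hrest : SPrec rest := SPrec_tail h3
    have hy1 : 1 ≤ y := SPrec_pos _ h3 (y,u) (by simp)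
    obtain ⟨ih1, ih2, ih3⟩ := G_good rest hrest
    have IH := RT1 rest hrest
    rw [G_cons2]
    generalize hw : G rest = w at ih1 ih2 ih3 IH ⊢
    have htm : (w.headD (0,false)).1 + w.length ≤ y ∧
        (u = true → (w.headD (0,false)).1 + w.length + 1 ≤ y) := by
      match rest with
      | [] =>
        have hw0 : w = [] := ih2.2 rfl
        subst hw0
        simp only [List.headD_nil, List.length_nil]
        omega
      | r :: rest' =>
        have hh := SPrec_head h3 (by simp)
        have := ih3 (by simp)
        constructor
        · omega
        · intro hu; have := hh.2 hu; omega
    set t := (w.headD (0,false)).1 with ht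
    set m := w.length with hmm
    set M := w.map (fun q => (q.1+1, q.2)) with hM
    set B := (if u = true then List.replicate (y - t - m - 1) ((1:ℕ), false) ++ [(1, true)]
      else List.replicate (y - t - m) (1, false)) with hB
    have hBlen : B.length = y - t - m := by
      rw [hB]
      exact len_B (fun hu => by have := htm.2 hu; omega)
    have hMBne : M ++ B ≠ [] := by
      intro hcon
      rw [List.append_eq_nil_iff] at hcon
      match rest with
      | [] =>
        have hw0 : w = [] := ih2.2 rfl
        have h0 : B.length = 0 := by rw [hcon.2]; simp
        rw [hBlen] at h0
        have ht0 : t = 0 := by rw [ht, hw0]; simp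
        have hm0 : m = 0 := by rw [hmm, hw0]; simp
        omega
      | r :: rest' =>
        have hwne : w ≠ [] := by
          intro h0
          have := ih2.1 h0
          simp at this
        rw [hM] at hcon
        exact hwne (List.map_eq_nil_iff.1 hcon.1)
    obtain ⟨p, tl, hMB⟩ : ∃ p tl, M ++ B = p :: tl := by
      match hq : M ++ B with
      | [] => exact absurd hq hMBne
      | p :: tl => exact ⟨p, tl, rfl⟩
    rw [hMB, H_cons2, ← hMB]
    have hTW := takeWhile_append_eq (fun q : ℕ×Bool => decide (2 ≤ q.1)) M B
      (by
        intro z hz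
        rw [hM] at hz
        obtain ⟨q, hq, rfl⟩ := List.mem_map.1 hz
        have := OPrec_pos _ ih1 q hq
        simp only [decide_eq_true_eq]
        omega)
      (by
        intro q hq
        have hmem : q ∈ B := List.mem_of_mem_head? hq
        have := mem_B_one q (hB ▸ hmem)
        simp only [decide_eq_false_iff_not]
        omega)
    rw [hTW.1, hTW.2, hM, map_pred_succ]
    have hu' : ((B.getLast?).getD (1,false)).2 = u := by rw [hB]; exact uB
    have e1 : x - y + t + B.length + w.length = x := by
      rw [hBlen]; omega
    have e2 : B.length + (w.headD (0,false)).1 + w.length = y := by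
      rw [hBlen, ← ht]; omega
    rw [IH, e1, e2, hu']

lemma map_succ_pred : ∀ b : List (ℕ×Bool), (∀ z ∈ b, 1 ≤ z.1) →
    ((b.map (fun q => (q.1-1,q.2))).map (fun q => (q.1+1,q.2))) = b
  | [], _ => rfl
  | q :: b, h => by
    have h1 := h q (by simp)
    simp only [List.map_cons, map_succ_pred b (fun z hz => h z (by simp [hz]))]
    have : q.1 - 1 + 1 = q.1 := by omega
    rw [this]

lemma e4_gen : ∀ w : List (ℕ×Bool), OPrec w → (∀ z ∈ w, z.1 = 1) →
    (if (((w.getLast?).getD (1,false)).2) = true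
       then List.replicate (w.length - 1) ((1:ℕ),false) ++ [(1,true)]
       else List.replicate w.length (1,false)) = w
  | [], _, _ => by simp
  | q :: w', hOP, h1 => by
    have hshape := ones_shape (q::w') hOP h1 (by simp)
    cases hu2 : ((((q::w').getLast?).getD (1,false)).2)
    · rw [if_neg (by simp)]
      conv_rhs => rw [hshape, hu2]
      rw [show (q::w').length = ((q::w').length - 1) + 1 by simp, List.replicate_succ']
      simp
    · rw [if_pos rfl]
      conv_rhs => rw [hshape, hu2]

theorem RT2 : ∀ l : List (ℕ × Bool), OPrec l → G (H l) = l
  | [], _ => by rw [H_nil, G_nil]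
  | [(x,o)], _ => by rw [H_single, G_single]
  | (x,o)::(c,d)::tail', h => by
    have hx1 : 1 ≤ x := OPrec_pos _ h (x,o) (by simp)
    have hc1 : 1 ≤ c := OPrec_pos _ h (c,d) (by simp)
    obtain ⟨h1, h2, h3⟩ := h
    have htl : OPrec ((c,d)::tail') := h3
    have hOPbig : OPrec (((c,d)::tail').takeWhile (fun q => 2 ≤ q.1)) :=
      OPrec_prefix _ _ (by rw [List.takeWhile_append_dropWhile]; exact htl)
    have hbig_mem : ∀ z ∈ ((c,d)::tail').takeWhile (fun q => 2 ≤ q.1), 2 ≤ z.1 := by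
      intro z hz
      have := List.mem_takeWhile_imp hz
      simpa using this
    have hOPnt : OPrec ((((c,d)::tail').takeWhile (fun q => 2 ≤ q.1)).map
        (fun q => (q.1-1,q.2))) := OPrec_map_pred _ hOPbig hbig_mem
    have IH := RT2 _ hOPnt
    rw [H_cons2, G_cons2, IH]
    set big := ((c,d)::tail').takeWhile (fun q => 2 ≤ q.1) with hbig
    set onesb := ((c,d)::tail').dropWhile (fun q => 2 ≤ q.1) with honesb
    set nt := big.map (fun q => (q.1-1,q.2)) with hnt
    set m := nt.length with hm
    set ones := onesb.length with hones
    set t := (nt.headD (0,false)).1 with ht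
    set u := ((onesb.getLast?).getD (1,false)).2 with hu
    have hones1 : ∀ z ∈ onesb, z.1 = 1 := by
      rw [honesb]; exact ones_all htl
    have hOPones : OPrec onesb := by
      rw [honesb]
      exact OPrec_suffix _ _ (by rw [List.takeWhile_append_dropWhile]; exact htl)
    have htx : t + 1 ≤ x := by
      by_cases hc : 2 ≤ c
      · have hbigeq : big = (c,d) :: (tail'.takeWhile (fun q => 2 ≤ q.1)) := by
          rw [hbig, List.takeWhile_cons]
          simp [hc]
        have htval : t = c - 1 := by
          rw [ht, hnt, hbigeq, List.map_cons, List.headD_cons]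
        omega
      · have hbigeq : big = [] := by
          rw [hbig, List.takeWhile_cons]
          simp [hc]
        have htval : t = 0 := by rw [ht, hnt, hbigeq]; simp
        omega
    have e1 : x + ones + m - (ones + t + m) + t = x := by omega
    have e2 : ones + t + m - t - m = ones := by omega
    have e3 : (nt.map (fun q => (q.1+1,q.2))) = big := by
      rw [hnt]
      exact map_succ_pred big (fun z hz => by have := hbig_mem z hz; omega)
    have e4 : (if u = true then List.replicate (ones - 1) ((1:ℕ),false) ++ [(1,true)]
        else List.replicate ones (1,false)) = onesb := by
      rw [hu, hones]
      exact e4_gen onesb hOPones hones1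
    rw [e1, e2, e3, e4]
    rw [hbig, honesb, List.takeWhile_append_dropWhile]
termination_by l => l.length
decreasing_by
  simp only [List.length_cons]
  exact len_nt_lt _ _ _

/-- Overpartitions of `n` with `s` overlined parts are equinumerous with Schmidt
2-overpartitions of `n` with `s` overlined parts. -/
theorem overpartition_schmidt_two (n s : ℕ) :
    Nat.card {l : List (ℕ × Bool) // IsOverpartition l ∧
        (l.map Prod.fst).sum = n ∧ l.countP (fun x => x.2) = s} =
      Nat.card {l : List (ℕ × Bool) // IsStrictOverpartition l ∧
        schmidtSum 2 (l.map Prod.fst) = n ∧ l.countP (fun x => x.2) = s} := by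
  refine Nat.card_congr ⟨?_, ?_, ?_, ?_⟩
  · rintro ⟨l, hl, hsum, hcnt⟩
    refine ⟨H l, ?_, ?_, ?_⟩
    · exact (spiff _).2 (H_good l ((opiff _).1 hl)).1
    · have hsp : SPrec (H l) := (H_good l ((opiff _).1 hl)).1
      have := sumG (H l) hsp
      rw [RT2 l ((opiff _).1 hl)] at this
      rw [← this, hsum]
    · have := countG (H l)
      rw [RT2 l ((opiff _).1 hl)] at this
      rw [← this, hcnt]
  · rintro ⟨l, hl, hsum, hcnt⟩
    refine ⟨G l, ?_, ?_, ?_⟩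
    · exact (opiff _).2 (G_good l ((spiff _).1 hl)).1
    · rw [sumG l ((spiff _).1 hl), hsum]
    · rw [countG l, hcnt]
  · rintro ⟨l, hl, hsum, hcnt⟩
    exact Subtype.ext (RT2 l ((opiff _).1 hl))
  · rintro ⟨l, hl, hsum, hcnt⟩
    exact Subtype.ext (RT1 l ((spiff _).1 hl))
end

section
/- For positive integers n, k, t, r, s with 1 ≤ r ≤ k, the number of k-tuples (α¹, …, αᵏ) of overpartitions of total weight n with exactly s overlined parts, such that max_i ℓ(αⁱ) = t and r is the largest index i with ℓ(αⁱ) = t, equals the number of unrestricted Schmidt k-overpartitions of n with exactly s overlined parts and length (t−1)k+r. -/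
namespace USKO

/-- part value at row `j` of column `i` -/
def pa (A : ℕ → List (ℕ × Bool)) (i j : ℕ) : ℕ := ((A i).map Prod.fst).getD j 0

/-- mark at row `j` of column `i` -/
def pb (A : ℕ → List (ℕ × Bool)) (i j : ℕ) : Bool := ((A i).getD j (0, false)).2

/-- value of entry `m` of the Schmidt list built from the columns -/
def vF (k : ℕ) (A : ℕ → List (ℕ × Bool)) (m : ℕ) : ℕ :=
  ∑ i ∈ Finset.range k, pa A i ((m + (k - 1 - i)) / k)

/-- the forward map: columns to Schmidt list -/
def Fmap (k L : ℕ) (A : ℕ → List (ℕ × Bool)) : List (ℕ × Bool) :=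
  (List.range L).map fun m => (vF k A m, pb A (m % k) (m / k))

def vof (l : List (ℕ × Bool)) (m : ℕ) : ℕ := (l.map Prod.fst).getD m 0

def dof (l : List (ℕ × Bool)) (m : ℕ) : ℕ := vof l m - vof l (m + 1)

def aG (k t : ℕ) (l : List (ℕ × Bool)) (i j : ℕ) : ℕ :=
  ∑ j' ∈ Finset.Ico j t, dof l (j' * k + i)

def lG (k t : ℕ) (l : List (ℕ × Bool)) (i : ℕ) : ℕ :=
  ((Finset.range t).filter fun j => 0 < aG k t l i j).card

/-- the inverse map: Schmidt list to columns -/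
def Gmap (k t : ℕ) (l : List (ℕ × Bool)) (i : ℕ) : List (ℕ × Bool) :=
  (List.range (lG k t l i)).map fun j => (aG k t l i j, (l.getD (j * k + i) (0, false)).2)

/- ### basic helper lemmas -/

theorem getD_map_fst (l : List (ℕ × Bool)) (j : ℕ) :
    (l.map Prod.fst).getD j 0 = (l.getD j (0, false)).1 := by
  rcases lt_or_ge j l.length with h | h
  · rw [List.getD_eq_getElem _ _ (by simpa using h), List.getD_eq_getElem _ _ h]
    simp
  · rw [List.getD_eq_default _ _ (by simpa using h), List.getD_eq_default _ _ h]

theorem getD_map_snd (l : List (ℕ × Bool)) (j : ℕ) :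
    (l.map Prod.snd).getD j false = (l.getD j (0, false)).2 := by
  rcases lt_or_ge j l.length with h | h
  · rw [List.getD_eq_getElem _ _ (by simpa using h), List.getD_eq_getElem _ _ h]
    simp
  · rw [List.getD_eq_default _ _ (by simpa using h), List.getD_eq_default _ _ h]

theorem sorted_getD_anti {L : List ℕ} (hL : L.Pairwise (· ≥ ·)) {j j' : ℕ} (h : j ≤ j') :
    L.getD j' 0 ≤ L.getD j 0 := by
  rcases lt_or_ge j' L.length with h' | h'
  · have hj : j < L.length := lt_of_le_of_lt h h'
    rw [List.getD_eq_getElem _ _ h', List.getD_eq_getElem _ _ hj]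
    rcases eq_or_lt_of_le h with rfl | hlt
    · exact le_refl _
    · exact List.Pairwise.rel_get_of_lt hL (by simpa using hlt)
  · rw [List.getD_eq_default _ _ h']
    exact Nat.zero_le _

/-- sum over a range block decomposition -/
theorem sum_range_block (k a c : ℕ) (f : ℕ → ℕ) :
    ∑ m ∈ Finset.range (a * k + c), f m
      = (∑ j ∈ Finset.range a, ∑ i ∈ Finset.range k, f (j * k + i))
        + ∑ i ∈ Finset.range c, f (a * k + i) := by
  have base : ∀ b d : ℕ, ∑ m ∈ Finset.range (b + d), f m
      = ∑ m ∈ Finset.range b, f m + ∑ i ∈ Finset.range d, f (b + i) := by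
    intro b d
    induction d with
    | zero => simp
    | succ d ih => rw [← Nat.add_assoc, Finset.sum_range_succ, ih, Finset.sum_range_succ,
        Nat.add_assoc]
  rw [base (a * k) c]
  congr 1
  induction a with
  | zero => simp
  | succ a ih =>
      rw [Finset.sum_range_succ, ← ih, Nat.succ_mul, base (a * k) k]

/-- telescoping sum of differences of an antitone sequence -/
theorem sum_Ico_telescope {v : ℕ → ℕ} (hv : ∀ m, v (m + 1) ≤ v m) {a b : ℕ} (hab : a ≤ b) :
    ∑ m ∈ Finset.Ico a b, (v m - v (m + 1)) = v a - v b := by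
  induction b with
  | zero => interval_cases a; simp
  | succ b ih =>
      rcases eq_or_lt_of_le hab with rfl | h
      · simp
      · have hab' : a ≤ b := Nat.lt_succ_iff.mp h
        rw [Finset.sum_Ico_succ_top hab']
        have hI := ih hab'
        have h1 : v b ≤ v a := by
          clear ih h hab hI
          induction b with
          | zero => interval_cases a; simp
          | succ b ih2 =>
              rcases eq_or_lt_of_le hab' with rfl | h2
              · exact le_refl _
              · exact le_trans (hv b) (ih2 (Nat.lt_succ_iff.mp h2))
        have h2 := hv b
        omega

/-- sum of `f ∘ getD` over a range covering the list equals sum over the list -/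
theorem sum_range_getD {β : Type*} (l : List β) (d : β) (f : β → ℕ) (hf : f d = 0)
    {t : ℕ} (hlen : l.length ≤ t) :
    ∑ j ∈ Finset.range t, f (l.getD j d) = (l.map f).sum := by
  induction l generalizing t with
  | nil => simp [List.getD, hf]
  | cons x xs ih =>
      rcases t with _ | t
      · simp at hlen
      · rw [Finset.sum_range_succ']
        simp only [List.getD_cons_succ, List.getD_cons_zero]
        rw [ih (by simpa using hlen)]
        simp [Nat.add_comm]

theorem countP_eq_map_sum (l : List (ℕ × Bool)) :
    l.countP (fun x => x.2) = (l.map fun x : ℕ × Bool => if x.2 then 1 else 0).sum := by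
  induction l with
  | nil => simp
  | cons x xs ih => by_cases h : x.2 <;> simp [List.countP_cons, h, ih, Nat.add_comm]

theorem countP_eq_sum_range (l : List (ℕ × Bool)) {t : ℕ} (hlen : l.length ≤ t) :
    l.countP (fun x => x.2) = ∑ j ∈ Finset.range t, (if (l.getD j (0, false)).2 then 1 else 0) := by
  have h1 : ∑ j ∈ Finset.range t, (if (l.getD j (0, false)).2 then 1 else 0)
      = (l.map fun x : ℕ × Bool => if x.2 then 1 else 0).sum :=
    sum_range_getD l (0, false) (fun x => if x.2 then 1 else 0) (by simp) hlen
  rw [h1, countP_eq_map_sum]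

theorem countP_range {p : ℕ → Bool} (L : ℕ) :
    (List.range L).countP p = ∑ m ∈ Finset.range L, (if p m then 1 else 0) := by
  induction L with
  | zero => simp
  | succ L ih => rw [List.range_succ, List.countP_append, Finset.sum_range_succ, ih]
                 by_cases h : p L <;> simp [List.countP_cons, h]

theorem sum_range_getD_id (l : List ℕ) {t : ℕ} (hlen : l.length ≤ t) :
    ∑ j ∈ Finset.range t, l.getD j 0 = l.sum := by
  have := sum_range_getD l 0 id rfl hlen
  simpa using this


/- ### arithmetic helpers -/

theorem div_small {k c : ℕ} (hk : 0 < k) (hc : c < k) (j : ℕ) : (j * k + c) / k = j := by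
  rw [Nat.add_comm, Nat.add_mul_div_right _ _ hk, Nat.div_eq_of_lt hc, Nat.zero_add]

theorem div_mid {k c : ℕ} (hk : 0 < k) (hc1 : k ≤ c) (hc2 : c < 2 * k) (j : ℕ) :
    (j * k + c) / k = j + 1 := by
  have h : j * k + c = (j + 1) * k + (c - k) := by
    have : (j + 1) * k = j * k + k := by ring
    omega
  rw [h, div_small hk (by omega)]

theorem mod_div_eq {k i : ℕ} (hik : i < k) (j : ℕ) :
    (j * k + i) % k = i ∧ (j * k + i) / k = j := by
  constructor
  · rw [Nat.add_comm, Nat.add_mul_mod_self_right, Nat.mod_eq_of_lt hik]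
  · exact div_small (by omega) hik j

theorem range_map_getD {β : Type*} (f : ℕ → β) (d : β) {m L : ℕ} (h : m < L) :
    (((List.range L).map f).getD m d) = f m := by
  rw [List.getD_eq_getElem _ _ (by simpa using h)]
  simp

/- ### F-side lemmas -/

section Fside

variable {k t r : ℕ} {A : ℕ → List (ℕ × Bool)}

theorem pa_zero {i j : ℕ} (h : (A i).length ≤ j) : pa A i j = 0 :=
  List.getD_eq_default _ _ (by simpa using h)

theorem pb_false {i j : ℕ} (h : (A i).length ≤ j) : pb A i j = false := by
  unfold pb
  rw [List.getD_eq_default _ _ h]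

theorem pa_anti (hA : IsOverpartition (A i)) {j j' : ℕ} (h : j ≤ j') :
    pa A i j' ≤ pa A i j :=
  sorted_getD_anti hA.1 h

theorem pa_pos (hA : IsOverpartition (A i)) {j : ℕ} (h : j < (A i).length) :
    0 < pa A i j := by
  unfold pa
  rw [getD_map_fst, List.getD_eq_getElem _ _ h]
  exact hA.2.1 _ (List.getElem_mem h)

theorem pa_succ_lt (hA : IsOverpartition (A i)) {j : ℕ} (h : j < (A i).length)
    (hb : pb A i j = true) : pa A i (j + 1) < pa A i j := by
  rcases lt_or_ge (j + 1) (A i).length with h' | h'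
  · have := hA.2.2 j h' hb
    unfold pa
    rw [getD_map_fst, getD_map_fst]
    exact this
  · rw [pa_zero h']
    exact pa_pos hA h

theorem vF_anti {m m' : ℕ} (hA : ∀ i < k, IsOverpartition (A i)) (h : m ≤ m') :
    vF k A m' ≤ vF k A m := by
  apply Finset.sum_le_sum
  intro i hi
  exact pa_anti (hA i (Finset.mem_range.mp hi))
    (Nat.div_le_div_right (by omega))

/-- decomposition of `vF` at `m = j*k+i` and `m+1`: all other columns contribute
identically -/
theorem vF_other_eq {i i' j : ℕ} (hik : i < k) (hi'k : i' < k) (hne : i' ≠ i) :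
    (j * k + i + 1 + (k - 1 - i')) / k = (j * k + i + (k - 1 - i')) / k := by
  rcases lt_or_gt_of_ne hne with h | h
  · -- i' < i : both j+1
    rw [show j * k + i + (k - 1 - i') = j * k + (i + (k - 1 - i')) by omega,
      show j * k + i + 1 + (k - 1 - i') = j * k + (i + 1 + (k - 1 - i')) by omega,
      div_mid (by omega) (by omega) (by omega), div_mid (by omega) (by omega) (by omega)]
  · -- i < i' : both j
    rw [show j * k + i + (k - 1 - i') = j * k + (i + (k - 1 - i')) by omega,
      show j * k + i + 1 + (k - 1 - i') = j * k + (i + 1 + (k - 1 - i')) by omega,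
      div_small (by omega) (by omega), div_small (by omega) (by omega)]

theorem vF_self_idx {i j : ℕ} (hik : i < k) :
    (j * k + i + (k - 1 - i)) / k = j ∧ (j * k + i + 1 + (k - 1 - i)) / k = j + 1 := by
  constructor
  · rw [show j * k + i + (k - 1 - i) = j * k + (k - 1) by omega,
      div_small (by omega) (by omega)]
  · rw [show j * k + i + 1 + (k - 1 - i) = j * k + k by omega,
      show j * k + k = (j + 1) * k + 0 by ring, div_small (by omega) (by omega)]

theorem vF_decomp {i j : ℕ} (hik : i < k) :
    vF k A (j * k + i) = pa A i j + ∑ i' ∈ (Finset.range k).erase i,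
        pa A i' ((j * k + i + (k - 1 - i')) / k) ∧
    vF k A (j * k + i + 1) = pa A i (j + 1) + ∑ i' ∈ (Finset.range k).erase i,
        pa A i' ((j * k + i + (k - 1 - i')) / k) := by
  have hmem : i ∈ Finset.range k := Finset.mem_range.mpr hik
  constructor
  · rw [vF, ← Finset.add_sum_erase _ _ hmem, (vF_self_idx hik (j := j)).1]
  · rw [vF, ← Finset.add_sum_erase _ _ hmem, (vF_self_idx hik (j := j)).2]
    congr 1
    apply Finset.sum_congr rfl
    intro i' hi'
    rw [vF_other_eq hik (Finset.mem_range.mp (Finset.mem_of_mem_erase hi'))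
      (Finset.ne_of_mem_erase hi')]

theorem vF_succ_sub {i j : ℕ} (hik : i < k) :
    vF k A (j * k + i) - vF k A (j * k + i + 1) = pa A i j - pa A i (j + 1) := by
  rw [(vF_decomp hik).1, (vF_decomp hik).2, Nat.add_comm (pa A i j),
    Nat.add_comm (pa A i (j+1)), Nat.add_sub_add_left]

theorem vF_succ_lt {i j : ℕ} (hik : i < k) (h : pa A i (j + 1) < pa A i j) :
    vF k A (j * k + i + 1) < vF k A (j * k + i) := by
  rw [(vF_decomp hik).1, (vF_decomp hik).2]
  exact Nat.add_lt_add_right h _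


theorem Fmap_length (L : ℕ) : (Fmap k L A).length = L := by simp [Fmap]

theorem Fmap_getD {m L : ℕ} (h : m < L) :
    (Fmap k L A).getD m (0, false) = (vF k A m, pb A (m % k) (m / k)) := by
  unfold Fmap
  rw [range_map_getD _ _ h]

section Fmain

variable (hk : 1 ≤ k) (ht : 1 ≤ t) (hr1 : 1 ≤ r) (hrk : r ≤ k)
variable (HA : ∀ i < k, IsOverpartition (A i))
variable (Hlen : ∀ i < k, (A i).length ≤ t)
variable (Hr : (A (r - 1)).length = t)
variable (Hlt : ∀ i, r ≤ i → i < k → (A i).length < t)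

include hk ht hr1 hrk HA Hlen Hr Hlt

theorem vF_pos {m : ℕ} (hm : m < (t - 1) * k + r) : 0 < vF k A m := by
  have hL : m ≤ (t - 1) * k + (r - 1) := by omega
  refine lt_of_lt_of_le ?_ (vF_anti HA hL)
  have hidx : ((t - 1) * k + (r - 1) + (k - 1 - (r - 1))) / k = t - 1 := by
    rw [show (t - 1) * k + (r - 1) + (k - 1 - (r - 1)) = (t - 1) * k + (k - 1) by omega,
      div_small (by omega) (by omega)]
  have hpos : 0 < pa A (r - 1) (((t - 1) * k + (r - 1) + (k - 1 - (r - 1))) / k) := by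
    rw [hidx]
    exact pa_pos (HA (r - 1) (by omega)) (by omega)
  refine lt_of_lt_of_le hpos ?_
  exact Finset.single_le_sum
    (f := fun i' => pa A i' (((t - 1) * k + (r - 1) + (k - 1 - i')) / k))
    (fun i _ => Nat.zero_le _) (Finset.mem_range.mpr (by omega))

theorem vF_L_zero : vF k A ((t - 1) * k + r) = 0 := by
  apply Finset.sum_eq_zero
  intro i' hi'
  have hi'k : i' < k := Finset.mem_range.mp hi'
  rcases lt_or_ge i' r with h | h
  · -- i' < r : index t, pa = 0 since length ≤ t
    have : ((t - 1) * k + r + (k - 1 - i')) / k = t := by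
      rw [show (t - 1) * k + r + (k - 1 - i') = (t - 1) * k + (r + (k - 1 - i')) by omega,
        div_mid (by omega) (by omega) (by omega)]
      omega
    rw [this]
    exact pa_zero (Hlen i' hi'k)
  · -- r ≤ i' : index t-1, pa = 0 since length < t
    have : ((t - 1) * k + r + (k - 1 - i')) / k = t - 1 := by
      rw [show (t - 1) * k + r + (k - 1 - i') = (t - 1) * k + (r + (k - 1 - i')) by omega,
        div_small (by omega) (by omega)]
    rw [this]
    exact pa_zero (by have := Hlt i' h hi'k; omega)

theorem vF_zero_of_ge {m : ℕ} (hm : (t - 1) * k + r ≤ m) : vF k A m = 0 :=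
  Nat.le_zero.mp (vF_L_zero hk ht hr1 hrk HA Hlen Hr Hlt ▸ vF_anti HA hm)

theorem Fmap_isOverpartition : IsOverpartition (Fmap k ((t - 1) * k + r) A) := by
  set L := (t - 1) * k + r with hLdef
  refine ⟨?_, ?_, ?_⟩
  · -- sorted
    have : (Fmap k L A).map Prod.fst = (List.range L).map (vF k A) := by
      simp [Fmap]
    rw [this]
    rw [List.pairwise_map]
    exact (List.pairwise_lt_range (n := L)).imp fun h => vF_anti HA (Nat.le_of_lt h)
  · -- positive
    intro x hx
    simp only [Fmap, List.mem_map, List.mem_range] at hx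
    obtain ⟨m, hm, rfl⟩ := hx
    exact vF_pos hk ht hr1 hrk HA Hlen Hr Hlt hm
  · -- marks
    intro m hm1 hm2
    rw [Fmap_length] at hm1
    have hmL : m < L := by omega
    rw [Fmap_getD hm1, Fmap_getD hmL] at *
    simp only at hm2 ⊢
    -- hm2 : pb A (m % k) (m / k) = true
    have hik : m % k < k := Nat.mod_lt _ (by omega)
    have hjlen : m / k < (A (m % k)).length := by
      by_contra hcon
      rw [pb_false (by omega)] at hm2
      exact Bool.false_ne_true hm2
    have hstr := pa_succ_lt (HA _ hik) hjlen hm2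
    have hm_eq : m = (m / k) * k + (m % k) := by
      have hdm := Nat.div_add_mod' m k
      omega
    rw [hm_eq]
    exact vF_succ_lt hik hstr

theorem Fmap_schmidtSum :
    schmidtSum k ((Fmap k ((t - 1) * k + r) A).map Prod.fst)
      = ∑ i ∈ Finset.range k, ((A i).map Prod.fst).sum := by
  set L := (t - 1) * k + r with hLdef
  have hmap : (Fmap k L A).map Prod.fst = (List.range L).map (vF k A) := by simp [Fmap]
  rw [hmap]
  unfold schmidtSum
  rw [List.length_map, List.length_range]
  have hcong : ∀ m ∈ Finset.range L,
      (if m % k = 0 then ((List.range L).map (vF k A)).getD m 0 else 0)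
        = (if m % k = 0 then vF k A m else 0) := by
    intro m hm
    rw [range_map_getD _ _ (Finset.mem_range.mp hm)]
  rw [Finset.sum_congr rfl hcong, hLdef, sum_range_block]
  have hblock : ∀ j : ℕ, ∑ i ∈ Finset.range k, (if (j * k + i) % k = 0 then vF k A (j * k + i) else 0)
      = vF k A (j * k) := by
    intro j
    rw [Finset.sum_eq_single 0]
    · simp
    · intro i hi hne
      rw [if_neg]
      rw [(mod_div_eq (Finset.mem_range.mp hi) j).1]
      exact hne
    · intro h
      exact absurd (Finset.mem_range.mpr (by omega)) h
  have htail : ∑ i ∈ Finset.range r, (if ((t-1) * k + i) % k = 0 then vF k A ((t-1) * k + i) else 0)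
      = vF k A ((t-1) * k) := by
    rw [Finset.sum_eq_single 0]
    · simp
    · intro i hi hne
      rw [if_neg]
      rw [(mod_div_eq (by have := Finset.mem_range.mp hi; omega) (t-1)).1]
      exact hne
    · intro h
      exact absurd (Finset.mem_range.mpr (by omega)) h
  rw [Finset.sum_congr rfl (fun j _ => hblock j), htail,
    ← Finset.sum_range_succ (fun j => vF k A (j * k)) (t - 1)]
  have ht' : t - 1 + 1 = t := by omega
  rw [ht']
  have hvjk : ∀ j : ℕ, vF k A (j * k) = ∑ i ∈ Finset.range k, pa A i j := by
    intro j
    apply Finset.sum_congr rfl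
    intro i hi
    rw [div_small (by omega) (by have := Finset.mem_range.mp hi; omega)]
  rw [Finset.sum_congr rfl (fun j _ => hvjk j), Finset.sum_comm]
  apply Finset.sum_congr rfl
  intro i hi
  exact sum_range_getD_id _ (by simpa using Hlen i (Finset.mem_range.mp hi))

theorem Fmap_countP :
    (Fmap k ((t - 1) * k + r) A).countP (fun x => x.2)
      = ∑ i ∈ Finset.range k, (A i).countP (fun x => x.2) := by
  set L := (t - 1) * k + r with hLdef
  unfold Fmap
  rw [List.countP_map, countP_range]
  have : ∀ m, ((fun (x : ℕ × Bool) => x.2) ∘ (fun m => (vF k A m, pb A (m % k) (m / k)))) m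
      = pb A (m % k) (m / k) := fun m => rfl
  rw [Finset.sum_congr rfl (fun m _ => by rw [this m]), hLdef, sum_range_block]
  have hmd : ∀ j i, i < k → pb A ((j * k + i) % k) ((j * k + i) / k) = pb A i j := by
    intro j i hik
    rw [(mod_div_eq hik j).1, (mod_div_eq hik j).2]
  have h1 : ∀ j, ∑ i ∈ Finset.range k,
        (if pb A ((j * k + i) % k) ((j * k + i) / k) then 1 else 0)
      = ∑ i ∈ Finset.range k, (if pb A i j then (1:ℕ) else 0) := by
    intro j
    exact Finset.sum_congr rfl fun i hi => by rw [hmd j i (Finset.mem_range.mp hi)]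
  have h2 : ∑ i ∈ Finset.range r,
        (if pb A (((t-1) * k + i) % k) (((t-1) * k + i) / k) then 1 else 0)
      = ∑ i ∈ Finset.range k, (if pb A i (t-1) then (1:ℕ) else 0) := by
    rw [Finset.sum_congr rfl (fun i hi => by
      rw [hmd (t-1) i (by have := Finset.mem_range.mp hi; omega)])]
    apply Finset.sum_subset (Finset.range_subset_range.mpr hrk)
    intro i hi hni
    have hir : r ≤ i := by
      by_contra hcon
      exact hni (Finset.mem_range.mpr (by omega))
    rw [pb_false (by have := Hlt i hir (Finset.mem_range.mp hi); omega)]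
    simp
  rw [Finset.sum_congr rfl (fun j _ => h1 j), h2,
    ← Finset.sum_range_succ (fun j => ∑ i ∈ Finset.range k, (if pb A i j then (1:ℕ) else 0)) (t-1)]
  have ht' : t - 1 + 1 = t := by omega
  rw [ht', Finset.sum_comm]
  apply Finset.sum_congr rfl
  intro i hi
  exact (countP_eq_sum_range _ (Hlen i (Finset.mem_range.mp hi))).symm

end Fmain

end Fside

/- ### G-side lemmas -/

section Gside

variable {k t r : ℕ} {l : List (ℕ × Bool)}

theorem vof_zero {m : ℕ} (h : l.length ≤ m) : vof l m = 0 :=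
  List.getD_eq_default _ _ (by simpa using h)

theorem vof_pos (Hl : IsOverpartition l) {m : ℕ} (h : m < l.length) : 0 < vof l m := by
  unfold vof
  rw [getD_map_fst, List.getD_eq_getElem _ _ h]
  exact Hl.2.1 _ (List.getElem_mem h)

theorem vof_anti (Hl : IsOverpartition l) {m m' : ℕ} (h : m ≤ m') : vof l m' ≤ vof l m :=
  sorted_getD_anti Hl.1 h

theorem dof_zero_of_ge {m : ℕ} (h : l.length ≤ m) : dof l m = 0 := by
  unfold dof
  rw [vof_zero h, vof_zero (by omega)]

theorem aG_anti (i : ℕ) {j j' : ℕ} (h : j ≤ j') : aG k t l i j' ≤ aG k t l i j :=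
  Finset.sum_le_sum_of_subset (Finset.Ico_subset_Ico h le_rfl)

theorem aG_zero_of_ge_t {i j : ℕ} (h : t ≤ j) : aG k t l i j = 0 := by
  unfold aG
  rw [Finset.Ico_eq_empty (by omega), Finset.sum_empty]

theorem aG_split {i j : ℕ} (h : j < t) :
    aG k t l i j = dof l (j * k + i) + aG k t l i (j + 1) :=
  Finset.sum_eq_sum_Ico_succ_bot h _

theorem lG_le_t (i : ℕ) : lG k t l i ≤ t :=
  le_trans (Finset.card_filter_le _ _) (by simp)

theorem lt_lG_of_aG_pos {i j : ℕ} (hj : j < t) (h : 0 < aG k t l i j) : j < lG k t l i := by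
  have hsub : Finset.range (j + 1) ⊆ (Finset.range t).filter fun j' => 0 < aG k t l i j' := by
    intro j'' hj''
    have hj'' := Finset.mem_range.mp hj''
    exact Finset.mem_filter.mpr ⟨Finset.mem_range.mpr (by omega),
      lt_of_lt_of_le h (aG_anti i (by omega))⟩
  have := Finset.card_le_card hsub
  rw [Finset.card_range] at this
  exact lt_of_lt_of_le (Nat.lt_succ_self j) (le_trans this le_rfl)

theorem aG_pos_of_lt_lG {i j : ℕ} (h : j < lG k t l i) : 0 < aG k t l i j := by
  by_contra hcon
  have hz : aG k t l i j = 0 := by omega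
  have hsub : ((Finset.range t).filter fun j' => 0 < aG k t l i j') ⊆ Finset.range j := by
    intro j'' hj''
    obtain ⟨_, hpos⟩ := Finset.mem_filter.mp hj''
    rw [Finset.mem_range]
    by_contra hcon2
    have : aG k t l i j'' ≤ aG k t l i j := aG_anti i (by omega)
    omega
  have := Finset.card_le_card hsub
  rw [Finset.card_range] at this
  unfold lG at h
  omega

theorem aG_zero_of_ge_lG {i j : ℕ} (h : lG k t l i ≤ j) : aG k t l i j = 0 := by
  rcases lt_or_ge j t with hj | hj
  · by_contra hcon
    have := lt_lG_of_aG_pos hj (Nat.pos_of_ne_zero hcon)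
    omega
  · exact aG_zero_of_ge_t hj

theorem Gmap_length (i : ℕ) : (Gmap k t l i).length = lG k t l i := by simp [Gmap]

theorem Gmap_getD {i j : ℕ} (h : j < lG k t l i) :
    (Gmap k t l i).getD j (0, false) = (aG k t l i j, (l.getD (j * k + i) (0, false)).2) := by
  unfold Gmap
  rw [range_map_getD _ _ h]

/-- `pa` of the reconstructed columns is `aG` everywhere -/
theorem pa_Gmap (i j : ℕ) : pa (Gmap k t l) i j = aG k t l i j := by
  rcases lt_or_ge j (lG k t l i) with h | h
  · unfold pa
    rw [getD_map_fst, Gmap_getD h]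
  · unfold pa
    rw [getD_map_fst, List.getD_eq_default _ _ (by rw [Gmap_length]; omega),
      aG_zero_of_ge_lG h]

theorem pb_Gmap {i j : ℕ} (h : j < lG k t l i) :
    pb (Gmap k t l) i j = (l.getD (j * k + i) (0, false)).2 := by
  unfold pb
  rw [Gmap_getD h]

section Gmain

variable (hk : 1 ≤ k) (ht : 1 ≤ t) (hr1 : 1 ≤ r) (hrk : r ≤ k)
variable (Hl : IsOverpartition l)
variable (HL : l.length = (t - 1) * k + r)

include hk ht hr1 hrk Hl HL

omit ht hr1 hrk in
theorem dof_pos_of_exists {i j : ℕ} (hex : 0 < aG k t l i (j + 1))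
    (hmark : (l.getD (j * k + i) (0, false)).2 = true) : 0 < dof l (j * k + i) := by
  -- some later difference in column i is positive, so position j*k+i+1 is within l
  have hex2 : ∃ j' ∈ Finset.Ico (j + 1) t, 0 < dof l (j' * k + i) := by
    by_contra hcon
    push_neg at hcon
    have : aG k t l i (j + 1) = 0 := Finset.sum_eq_zero fun j' hj' => by
      have := hcon j' hj'
      omega
    omega
  obtain ⟨j', hj'mem, hj'pos⟩ := hex2
  have hj' := Finset.mem_Ico.mp hj'mem
  have hlen : j' * k + i < l.length := by
    by_contra hcon
    rw [dof_zero_of_ge (by omega)] at hj'pos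
    omega
  have hle : j * k + i + 1 < l.length := by
    have : (j + 1) * k + i ≤ j' * k + i := by
      have : (j + 1) * k ≤ j' * k := Nat.mul_le_mul_right k hj'.1
      omega
    have hk1 : j * k + k = (j + 1) * k := by ring
    omega
  have := Hl.2.2 (j * k + i) hle hmark
  unfold dof vof
  rw [getD_map_fst, getD_map_fst]
  omega

theorem Gmap_isOverpartition (i : ℕ) : IsOverpartition (Gmap k t l i) := by
  refine ⟨?_, ?_, ?_⟩
  · have : (Gmap k t l i).map Prod.fst = (List.range (lG k t l i)).map (aG k t l i) := by
      simp [Gmap]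
    rw [this, List.pairwise_map]
    exact (List.pairwise_lt_range (n := _)).imp fun h => aG_anti i (Nat.le_of_lt h)
  · intro x hx
    simp only [Gmap, List.mem_map, List.mem_range] at hx
    obtain ⟨j, hj, rfl⟩ := hx
    exact aG_pos_of_lt_lG hj
  · intro j hj1 hb
    rw [Gmap_length] at hj1
    have hjl : j < lG k t l i := by omega
    rw [Gmap_getD hjl] at hb
    rw [Gmap_getD hj1, Gmap_getD hjl]
    simp only at hb ⊢
    have hpos : 0 < aG k t l i (j + 1) := aG_pos_of_lt_lG hj1
    have hd := dof_pos_of_exists hk Hl HL hpos hb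
    have hjt : j < t := by have := lG_le_t (l := l) (k := k) (t := t) i; omega
    rw [aG_split hjt]
    omega

theorem lG_eq_t : lG k t l (r - 1) = t := by
  have hd : 0 < aG k t l (r - 1) (t - 1) := by
    have h1 : aG k t l (r - 1) (t - 1) = ∑ j' ∈ Finset.Ico (t - 1) t, dof l (j' * k + (r - 1)) := rfl
    have h2 : Finset.Ico (t - 1) t = {t - 1} := by
      ext x
      simp only [Finset.mem_Ico, Finset.mem_singleton]
      omega
    rw [h1, h2, Finset.sum_singleton]
    have hpos : (t - 1) * k + (r - 1) < l.length := by rw [HL]; omega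
    have hv := vof_pos Hl hpos
    have hz : vof l ((t - 1) * k + (r - 1) + 1) = vof l ((t - 1) * k + r) := by
      congr 1
      omega
    have hz2 : vof l ((t - 1) * k + r) = 0 := vof_zero (by omega)
    unfold dof
    omega
  unfold lG
  rw [Finset.filter_true_of_mem, Finset.card_range]
  intro j hj
  exact lt_of_lt_of_le hd (aG_anti _ (by have := Finset.mem_range.mp hj; omega))

theorem lG_lt_t {i : ℕ} (hir : r ≤ i) : lG k t l i < t := by
  have hz : aG k t l i (t - 1) = 0 := by
    apply Finset.sum_eq_zero
    intro j' hj'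
    have h1 : t - 1 ≤ j' := (Finset.mem_Ico.mp hj').1
    have h2 : j' < t := (Finset.mem_Ico.mp hj').2
    have : j' = t - 1 := by omega
    subst this
    apply dof_zero_of_ge
    rw [HL]
    have : (t - 1) * k + r ≤ (t - 1) * k + i := by omega
    omega
  have hsub : ((Finset.range t).filter fun j' => 0 < aG k t l i j') ⊆ Finset.range (t - 1) := by
    intro j'' hj''
    obtain ⟨hm, hpos⟩ := Finset.mem_filter.mp hj''
    have hm := Finset.mem_range.mp hm
    rw [Finset.mem_range]
    by_contra hcon
    have hj'' : j'' = t - 1 := by omega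
    subst hj''
    omega
  have := Finset.card_le_card hsub
  rw [Finset.card_range] at this
  unfold lG
  omega

end Gmain

end Gside

/- ### G ∘ F = id -/

section GF

variable {k t r : ℕ} {A : ℕ → List (ℕ × Bool)}
variable (hk : 1 ≤ k) (ht : 1 ≤ t) (hr1 : 1 ≤ r) (hrk : r ≤ k)
variable (HA : ∀ i < k, IsOverpartition (A i))
variable (Hlen : ∀ i < k, (A i).length ≤ t)
variable (Hr : (A (r - 1)).length = t)
variable (Hlt : ∀ i, r ≤ i → i < k → (A i).length < t)

include hk ht hr1 hrk HA Hlen Hr Hlt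

theorem GF_vof (m : ℕ) : vof (Fmap k ((t - 1) * k + r) A) m = vF k A m := by
  rcases lt_or_ge m ((t - 1) * k + r) with h | h
  · unfold vof
    rw [getD_map_fst, Fmap_getD h]
  · rw [vof_zero (by rw [Fmap_length]; omega), vF_zero_of_ge hk ht hr1 hrk HA Hlen Hr Hlt h]

theorem GF_dof {i : ℕ} (hik : i < k) (j : ℕ) :
    dof (Fmap k ((t - 1) * k + r) A) (j * k + i) = pa A i j - pa A i (j + 1) := by
  unfold dof
  rw [GF_vof hk ht hr1 hrk HA Hlen Hr Hlt, GF_vof hk ht hr1 hrk HA Hlen Hr Hlt]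
  exact vF_succ_sub hik

theorem GF_aG {i : ℕ} (hik : i < k) (j : ℕ) :
    aG k t (Fmap k ((t - 1) * k + r) A) i j = pa A i j := by
  rcases le_or_gt j t with h | h
  · unfold aG
    rw [Finset.sum_congr rfl fun j' _ => GF_dof hk ht hr1 hrk HA Hlen Hr Hlt hik j',
      sum_Ico_telescope (fun j'' => pa_anti (HA i hik) (Nat.le_succ j'')) h,
      pa_zero (Hlen i hik), Nat.sub_zero]
  · rw [aG_zero_of_ge_t (le_of_lt h), pa_zero (show (A i).length ≤ j by have := Hlen i hik; omega)]

theorem GF_lG {i : ℕ} (hik : i < k) :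
    lG k t (Fmap k ((t - 1) * k + r) A) i = (A i).length := by
  unfold lG
  have : (Finset.range t).filter (fun j => 0 < aG k t (Fmap k ((t - 1) * k + r) A) i j)
      = Finset.range (A i).length := by
    ext j
    simp only [Finset.mem_filter, Finset.mem_range]
    rw [GF_aG hk ht hr1 hrk HA Hlen Hr Hlt hik]
    constructor
    · rintro ⟨-, hpos⟩
      by_contra hcon
      rw [pa_zero (by omega)] at hpos
      omega
    · intro hj
      exact ⟨by have := Hlen i hik; omega, pa_pos (HA i hik) hj⟩
  rw [this, Finset.card_range]

theorem pos_lt_L {i j : ℕ} (hik : i < k) (hj : j < (A i).length) :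
    j * k + i < (t - 1) * k + r := by
  rcases lt_or_ge i r with hir | hir
  · -- i < r : j ≤ t - 1 suffices
    obtain ⟨u, rfl⟩ : ∃ u, t = u + 1 := ⟨t - 1, by omega⟩
    rw [show u + 1 - 1 = u from rfl]
    have hjle : j ≤ u := by have := Hlen i hik; omega
    have := Nat.mul_le_mul_right k hjle
    omega
  · -- r ≤ i : length < t so j ≤ t - 2
    have hlt := Hlt i hir hik
    obtain ⟨u, rfl⟩ : ∃ u, t = u + 2 := ⟨t - 2, by omega⟩
    rw [show u + 2 - 1 = u + 1 from rfl]
    have hjle : j ≤ u := by omega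
    have h1 := Nat.mul_le_mul_right k hjle
    have h2 : (u + 1) * k = u * k + k := by ring
    omega

theorem GF_eq {i : ℕ} (hik : i < k) :
    Gmap k t (Fmap k ((t - 1) * k + r) A) i = A i := by
  have hlen : (Gmap k t (Fmap k ((t - 1) * k + r) A) i).length = (A i).length := by
    rw [Gmap_length, GF_lG hk ht hr1 hrk HA Hlen Hr Hlt hik]
  apply List.ext_getElem hlen
  intro j h1 h2
  have hjlG : j < lG k t (Fmap k ((t - 1) * k + r) A) i := by
    rwa [Gmap_length] at h1
  have hgd : (Gmap k t (Fmap k ((t - 1) * k + r) A) i)[j]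
      = (Gmap k t (Fmap k ((t - 1) * k + r) A) i).getD j (0, false) :=
    (List.getD_eq_getElem _ _ h1).symm
  rw [hgd, Gmap_getD hjlG]
  have hmark : ((Fmap k ((t - 1) * k + r) A).getD (j * k + i) (0, false)).2 = pb A i j := by
    rw [Fmap_getD (pos_lt_L hk ht hr1 hrk HA Hlen Hr Hlt hik h2)]
    simp only
    rw [(mod_div_eq hik j).1, (mod_div_eq hik j).2]
  rw [hmark, GF_aG hk ht hr1 hrk HA Hlen Hr Hlt hik]
  have hA : (A i)[j] = (A i).getD j (0, false) := (List.getD_eq_getElem _ _ h2).symm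
  rw [hA]
  refine Prod.ext ?_ ?_
  · simp only [pa, pb]
    rw [getD_map_fst]
  · rfl

end GF

/- ### F ∘ G = id -/

section FG

variable {k t r : ℕ} {l : List (ℕ × Bool)}

theorem ji_le_iff {i m j' : ℕ} (hk : 1 ≤ k) (hik : i < k) :
    (m + (k - 1 - i)) / k ≤ j' ↔ m ≤ j' * k + i := by
  have h1 := Nat.div_le_iff_le_mul_add_pred (a := m + (k - 1 - i)) (c := j') (show 0 < k by omega)
  have h2 : k * j' = j' * k := Nat.mul_comm _ _
  omega

section FGmain

variable (hk : 1 ≤ k) (ht : 1 ≤ t) (hr1 : 1 ≤ r) (hrk : r ≤ k)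
variable (Hl : IsOverpartition l)
variable (HL : l.length = (t - 1) * k + r)

include hk ht hr1 hrk Hl HL

theorem FG_vF {m : ℕ} (hm : m < (t - 1) * k + r) : vF k (Gmap k t l) m = vof l m := by
  have hLtk : (t - 1) * k + r ≤ t * k := by
    have : t * k = (t - 1) * k + k := by
      rw [show t * k = (t - 1 + 1) * k by rw [Nat.sub_add_cancel ht]]
      ring
    omega
  have step1 : vF k (Gmap k t l) m = ∑ i ∈ Finset.range k, aG k t l i ((m + (k - 1 - i)) / k) :=
    Finset.sum_congr rfl fun i _ => pa_Gmap i _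
  have step2 : ∀ i < k, aG k t l i ((m + (k - 1 - i)) / k)
      = ∑ m' ∈ (Finset.Ico m (t * k)).filter (fun m' => m' % k = i), dof l m' := by
    intro i hik
    have himg : (Finset.Ico ((m + (k - 1 - i)) / k) t).image (fun j' => j' * k + i)
        = (Finset.Ico m (t * k)).filter (fun m' => m' % k = i) := by
      ext m'
      simp only [Finset.mem_image, Finset.mem_filter, Finset.mem_Ico]
      constructor
      · rintro ⟨j', ⟨hj1, hj2⟩, rfl⟩
        refine ⟨⟨(ji_le_iff hk hik).mp hj1, ?_⟩, (mod_div_eq hik j').1⟩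
        have h1 : j' * k + k ≤ t * k := by
          have h3 : (j' + 1) * k ≤ t * k := Nat.mul_le_mul_right k (by omega : j' + 1 ≤ t)
          have h2 : (j' + 1) * k = j' * k + k := by ring
          omega
        omega
      · rintro ⟨⟨hm1, hm2⟩, hmod⟩
        refine ⟨m' / k, ⟨?_, ?_⟩, ?_⟩
        · rw [ji_le_iff hk hik]
          have := Nat.div_add_mod' m' k
          omega
        · rw [Nat.div_lt_iff_lt_mul (show 0 < k by omega)]
          omega
        · have := Nat.div_add_mod' m' k
          omega
      -- end ext
    rw [← himg, Finset.sum_image]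
    · rfl
    · intro x _ y _ hxy
      have : x * k = y * k := by simp only at hxy; omega
      exact Nat.eq_of_mul_eq_mul_right (by omega) this
  rw [step1, Finset.sum_congr rfl fun i hi => step2 i (Finset.mem_range.mp hi),
    Finset.sum_fiberwise_of_maps_to (fun m' _ => Finset.mem_range.mpr (Nat.mod_lt _ (by omega)))]
  rw [← Finset.sum_Ico_consecutive (fun m' => dof l m') (show m ≤ (t - 1) * k + r by omega) hLtk]
  have hzero : ∑ m' ∈ Finset.Ico ((t - 1) * k + r) (t * k), dof l m' = 0 :=
    Finset.sum_eq_zero fun m' hm' =>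
      dof_zero_of_ge (by rw [HL]; exact (Finset.mem_Ico.mp hm').1)
  rw [hzero, Nat.add_zero]
  have htel := sum_Ico_telescope (v := vof l) (fun m'' => vof_anti Hl (Nat.le_succ m''))
    (show m ≤ (t - 1) * k + r by omega)
  unfold dof
  rw [htel, vof_zero (m := (t - 1) * k + r) (by omega), Nat.sub_zero]

theorem FG_mark_false {m : ℕ} (hm : m < (t - 1) * k + r)
    (h : lG k t l (m % k) ≤ m / k) : (l.getD m (0, false)).2 = false := by
  by_contra hb
  have hb : (l.getD m (0, false)).2 = true := by
    cases hx : (l.getD m (0, false)).2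
    · exact absurd hx hb
    · rfl
  have hmlen : m < l.length := by omega
  have hdof : 0 < dof l m := by
    rcases lt_or_ge (m + 1) l.length with hc | hc
    · have := Hl.2.2 m hc hb
      unfold dof vof
      rw [getD_map_fst, getD_map_fst]
      omega
    · have h1 : vof l (m + 1) = 0 := vof_zero hc
      have h2 : 0 < vof l m := vof_pos Hl hmlen
      unfold dof
      omega
  have hjt : m / k < t := by
    rw [Nat.div_lt_iff_lt_mul (show 0 < k by omega)]
    have : t * k = (t - 1) * k + k := by
      rw [show t * k = (t - 1 + 1) * k by rw [Nat.sub_add_cancel ht]]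
      ring
    omega
  have haG : 0 < aG k t l (m % k) (m / k) := by
    rw [aG_split hjt]
    have hdm : m / k * k + m % k = m := Nat.div_add_mod' m k
    rw [hdm]
    omega
  have := lt_lG_of_aG_pos hjt haG
  omega

theorem FG_eq : Fmap k ((t - 1) * k + r) (Gmap k t l) = l := by
  have hlen : (Fmap k ((t - 1) * k + r) (Gmap k t l)).length = l.length := by
    rw [Fmap_length, HL]
  apply List.ext_getElem hlen
  intro m h1 h2
  have hmL : m < (t - 1) * k + r := by rwa [Fmap_length] at h1
  have hFm : (Fmap k ((t - 1) * k + r) (Gmap k t l))[m]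
      = (vF k (Gmap k t l) m, pb (Gmap k t l) (m % k) (m / k)) := by
    rw [show (Fmap k ((t - 1) * k + r) (Gmap k t l))[m]
        = (Fmap k ((t - 1) * k + r) (Gmap k t l)).getD m (0, false) from
      (List.getD_eq_getElem _ _ h1).symm, Fmap_getD hmL]
  have hlm : l[m] = l.getD m (0, false) := (List.getD_eq_getElem _ _ h2).symm
  rw [hFm, hlm]
  refine Prod.ext ?_ ?_
  · simp only
    rw [FG_vF hk ht hr1 hrk Hl HL hmL]
    unfold vof
    rw [getD_map_fst]
  · simp only
    rcases lt_or_ge (m / k) (lG k t l (m % k)) with hc | hc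
    · rw [pb_Gmap hc, Nat.div_add_mod' m k]
    · rw [pb_false (by rw [Gmap_length]; omega),
        FG_mark_false hk ht hr1 hrk Hl HL hmL hc]

end FGmain

end FG

/- ### transfer to `Fin k`-indexed tuples -/

theorem Fmap_congr {k L : ℕ} (hk : 1 ≤ k) {A A' : ℕ → List (ℕ × Bool)}
    (h : ∀ i < k, A i = A' i) : Fmap k L A = Fmap k L A' := by
  unfold Fmap
  apply List.map_congr_left
  intro m hm
  have h1 : vF k A m = vF k A' m := by
    unfold vF
    exact Finset.sum_congr rfl fun i hi => by
      unfold pa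
      rw [h i (Finset.mem_range.mp hi)]
  have h2 : pb A (m % k) (m / k) = pb A' (m % k) (m / k) := by
    unfold pb
    rw [h (m % k) (Nat.mod_lt _ (by omega))]
  rw [h1, h2]

def extC {k : ℕ} (α : Fin k → List (ℕ × Bool)) : ℕ → List (ℕ × Bool) :=
  fun i => if h : i < k then α ⟨i, h⟩ else []

theorem extC_lt {k : ℕ} (α : Fin k → List (ℕ × Bool)) {i : ℕ} (h : i < k) :
    extC α i = α ⟨i, h⟩ := dif_pos h

end USKO

/-- Unrestricted Schmidt `k`-overpartition theorem: `k`-tuples of overpartitions of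
total weight `n` with `s` overlined parts, maximal length `t` attained last at
(1-based) index `r`, are equinumerous with unrestricted Schmidt `k`-overpartitions of
`n` with `s` overlined parts and length `(t-1)k + r`. -/
theorem unrestricted_schmidt_k_overpartition (n k t r s : ℕ) (hn : 1 ≤ n) (hk : 1 ≤ k)
    (ht : 1 ≤ t) (hs : 1 ≤ s) (hr1 : 1 ≤ r) (hrk : r ≤ k) :
    Nat.card {α : Fin k → List (ℕ × Bool) //
        (∀ i, IsOverpartition (α i)) ∧
        (∀ i : Fin k, (α i).length ≤ t) ∧
        (∀ i : Fin k, i.val = r - 1 → (α i).length = t) ∧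
        (∀ i : Fin k, r ≤ i.val → (α i).length < t) ∧
        (∑ i, (α i).countP (fun x => x.2)) = s ∧
        ∑ i, ((α i).map Prod.fst).sum = n} =
      Nat.card {l : List (ℕ × Bool) //
        IsOverpartition l ∧ schmidtSum k (l.map Prod.fst) = n ∧
        l.length = (t - 1) * k + r ∧ l.countP (fun x => x.2) = s} := by
  apply Nat.card_congr
  refine
    { toFun := fun x => ⟨USKO.Fmap k ((t - 1) * k + r) (USKO.extC x.val), ?_⟩
      invFun := fun y => ⟨fun i : Fin k => USKO.Gmap k t y.val i.val, ?_⟩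
      left_inv := ?_
      right_inv := ?_ }
  · -- toFun membership
    obtain ⟨α, h1, h2, h3, h4, h5, h6⟩ := x
    have HA : ∀ i < k, IsOverpartition (USKO.extC α i) := fun i hik => by
      rw [USKO.extC_lt α hik]; exact h1 _
    have Hlen : ∀ i < k, (USKO.extC α i).length ≤ t := fun i hik => by
      rw [USKO.extC_lt α hik]; exact h2 _
    have Hr : (USKO.extC α (r - 1)).length = t := by
      rw [USKO.extC_lt α (show r - 1 < k by omega)]
      exact h3 _ rfl
    have Hlt : ∀ i, r ≤ i → i < k → (USKO.extC α i).length < t := fun i hir hik => by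
      rw [USKO.extC_lt α hik]; exact h4 _ hir
    refine ⟨USKO.Fmap_isOverpartition hk ht hr1 hrk HA Hlen Hr Hlt, ?_, USKO.Fmap_length _, ?_⟩
    · rw [USKO.Fmap_schmidtSum hk ht hr1 hrk HA Hlen Hr Hlt,
        ← Fin.sum_univ_eq_sum_range (fun i => ((USKO.extC α i).map Prod.fst).sum) k, ← h6]
      exact Finset.sum_congr rfl fun i _ => by rw [USKO.extC_lt α i.isLt, Fin.eta]
    · rw [USKO.Fmap_countP hk ht hr1 hrk HA Hlen Hr Hlt,
        ← Fin.sum_univ_eq_sum_range (fun i => (USKO.extC α i).countP (fun x => x.2)) k, ← h5]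
      exact Finset.sum_congr rfl fun i _ => by rw [USKO.extC_lt α i.isLt, Fin.eta]
  · -- invFun membership
    obtain ⟨l, Hl, hn', hL, hs'⟩ := y
    have HA : ∀ i < k, IsOverpartition (USKO.Gmap k t l i) := fun i _ =>
      USKO.Gmap_isOverpartition hk ht hr1 hrk Hl hL i
    have Hlen : ∀ i < k, (USKO.Gmap k t l i).length ≤ t := fun i _ => by
      rw [USKO.Gmap_length]; exact USKO.lG_le_t i
    have Hr : (USKO.Gmap k t l (r - 1)).length = t := by
      rw [USKO.Gmap_length]; exact USKO.lG_eq_t hk ht hr1 hrk Hl hL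
    have Hlt : ∀ i, r ≤ i → i < k → (USKO.Gmap k t l i).length < t := fun i hir hik => by
      rw [USKO.Gmap_length]; exact USKO.lG_lt_t hk ht hr1 hrk Hl hL hir
    have hFG := USKO.FG_eq hk ht hr1 hrk Hl hL
    refine ⟨fun i => HA i.val i.isLt, fun i => Hlen i.val i.isLt,
      fun i hi => by
        show (USKO.Gmap k t l i.val).length = t
        rw [hi]; exact Hr,
      fun i hi => Hlt i.val hi i.isLt, ?_, ?_⟩
    · rw [Fin.sum_univ_eq_sum_range (fun i => (USKO.Gmap k t l i).countP (fun x => x.2)) k,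
        ← USKO.Fmap_countP hk ht hr1 hrk HA Hlen Hr Hlt, hFG, hs']
    · rw [Fin.sum_univ_eq_sum_range (fun i => ((USKO.Gmap k t l i).map Prod.fst).sum) k,
        ← USKO.Fmap_schmidtSum hk ht hr1 hrk HA Hlen Hr Hlt, hFG, hn']
  · -- left inverse
    rintro ⟨α, h1, h2, h3, h4, h5, h6⟩
    apply Subtype.ext
    funext i
    simp only
    have HA : ∀ i < k, IsOverpartition (USKO.extC α i) := fun i hik => by
      rw [USKO.extC_lt α hik]; exact h1 _
    have Hlen : ∀ i < k, (USKO.extC α i).length ≤ t := fun i hik => by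
      rw [USKO.extC_lt α hik]; exact h2 _
    have Hr : (USKO.extC α (r - 1)).length = t := by
      rw [USKO.extC_lt α (show r - 1 < k by omega)]
      exact h3 _ rfl
    have Hlt : ∀ i, r ≤ i → i < k → (USKO.extC α i).length < t := fun i hir hik => by
      rw [USKO.extC_lt α hik]; exact h4 _ hir
    rw [USKO.GF_eq hk ht hr1 hrk HA Hlen Hr Hlt i.isLt, USKO.extC_lt α i.isLt, Fin.eta]
  · -- right inverse
    rintro ⟨l, Hl, hn', hL, hs'⟩
    apply Subtype.ext
    simp only
    rw [USKO.Fmap_congr hk (fun i hik => USKO.extC_lt _ hik), USKO.FG_eq hk ht hr1 hrk Hl hL]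
end
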